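/- arXiv:1411.1290 — 15 statements merged into one kernel-verified Lean document; each statement's English description precedes it below -/
import Mathlib

section
/- Let a₁,a₂,a₃,b₁,b₂,b₃ > 0 satisfy a₁+a₂+a₃ ≤ b₁+b₂+b₃, a₁a₂+a₁a₃+a₂a₃ ≤ b₁b₂+b₁b₃+b₂b₃, and a₁a₂a₃ = b₁b₂b₃. Then (log a₁)² + (log a₂)² + (log a₃)² ≤ (log b₁)² + (log b₂)² + (log b₃)². -/
open Real MeasureTheory Set Filter

noncomputable def gg (x t : ℝ) : ℝ := (log (t+x) + log (t+x⁻¹) - 2 * log (t+1)) / t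

lemma invbound : IntegrableOn (fun t : ℝ => ((1+t)^2)⁻¹) (Ioi 0) := by
  have h : ∀ t ∈ Ioi (0:ℝ), HasDerivAt (fun t : ℝ => -(1+t)⁻¹) (((1+t)^2)⁻¹) t := by
    intro t ht
    have h1 : (1:ℝ) + t ≠ 0 := by simp at ht; positivity
    have := (((hasDerivAt_id t).const_add 1).inv h1).neg
    refine this.congr_deriv ?_
    simp only [id_eq]; ring
  apply integrableOn_Ioi_deriv_of_nonneg _ h (fun t ht => by positivity) (l := 0)
  · have : Tendsto (fun t : ℝ => (1+t)⁻¹) atTop (nhds 0) := by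
      apply Tendsto.inv_tendsto_atTop
      exact tendsto_atTop_add_const_left _ 1 tendsto_id
    simpa using this.neg
  · apply ContinuousWithinAt.neg
    apply ContinuousWithinAt.inv₀
    · exact (continuous_const.add continuous_id).continuousWithinAt
    · norm_num

lemma invbound' (K : ℝ) : IntegrableOn (fun t : ℝ => K * ((1+t)^2)⁻¹) (Ioi 0) :=
  invbound.const_mul K

lemma gg_bounds {x t : ℝ} (hx : 0 < x) (ht : 0 < t) :
    0 ≤ gg x t ∧ gg x t ≤ (x + x⁻¹ - 2) * ((1+t)^2)⁻¹ := by
  have hx' : x ≠ 0 := hx.ne'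
  have hc : 0 ≤ x + x⁻¹ - 2 := by
    have h : x + x⁻¹ - 2 = (x-1)^2 / x := by field_simp; ring
    rw [h]; positivity
  set c := x + x⁻¹ - 2 with hcdef
  have hprod : (t+x) * (t+x⁻¹) = (t+1)^2 + c*t := by rw [hcdef]; linear_combination mul_inv_cancel₀ hx'
  have h1 : 0 < t + x := by linarith
  have h2 : 0 < t + x⁻¹ := by positivity
  have h3 : 0 < t + 1 := by linarith
  have hlogsum : log (t+x) + log (t+x⁻¹) = log ((t+1)^2 + c*t) := by
    rw [← log_mul h1.ne' h2.ne', hprod]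
  have hsq : log ((t+1)^2) = 2 * log (t+1) := by
    rw [log_pow]; push_cast; ring
  constructor
  · apply div_nonneg _ ht.le
    rw [hlogsum, ← hsq]
    have : (t+1)^2 ≤ (t+1)^2 + c*t := by nlinarith
    have := log_le_log (by positivity) this
    linarith
  · rw [gg, div_le_iff₀ ht]
    rw [hlogsum]
    have key : log ((t+1)^2 + c*t) - 2*log (t+1) ≤ c*t/(t+1)^2 := by
      rw [← hsq]
      have e1 : log ((t+1)^2 + c*t) - log ((t+1)^2) = log (((t+1)^2 + c*t) / (t+1)^2) := by
        rw [log_div (by positivity) (by positivity)]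
      rw [e1]
      have hpos : 0 < ((t+1)^2 + c*t) / (t+1)^2 := by positivity
      have := log_le_sub_one_of_pos hpos
      have e2 : ((t+1)^2 + c*t) / (t+1)^2 - 1 = c*t/(t+1)^2 := by field_simp; ring
      linarith
    calc log ((t+1)^2 + c*t) - 2*log (t+1) ≤ c*t/(t+1)^2 := key
      _ = c * ((1+t)^2)⁻¹ * t := by rw [show (1+t) = (t+1) by ring]; field_simp

lemma gg_contOn {x : ℝ} (hx : 0 < x) : ContinuousOn (gg x) (Ioi 0) := by
  intro t ht
  simp only [mem_Ioi] at ht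
  have hix : 0 < x⁻¹ := by positivity
  have c1 : ContinuousAt (fun t : ℝ => log (t+x)) t :=
    (Real.continuousAt_log (by linarith)).comp ((continuous_add_right x).continuousAt)
  have c2 : ContinuousAt (fun t : ℝ => log (t+x⁻¹)) t :=
    (Real.continuousAt_log (by linarith)).comp ((continuous_add_right x⁻¹).continuousAt)
  have c3 : ContinuousAt (fun t : ℝ => 2 * log (t+1)) t :=
    continuousAt_const.mul ((Real.continuousAt_log (by linarith)).comp
      ((continuous_add_right 1).continuousAt))
  exact (((c1.add c2).sub c3).div continuousAt_id ht.ne').continuousWithinAt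
lemma gg_integrable {x : ℝ} (hx : 0 < x) : IntegrableOn (gg x) (Ioi 0) := by
  apply Integrable.mono' (invbound' (x + x⁻¹ - 2))
  · exact (gg_contOn hx).aestronglyMeasurable measurableSet_Ioi
  · rw [ae_restrict_iff' measurableSet_Ioi]
    filter_upwards with t ht
    obtain ⟨h0, h1⟩ := gg_bounds hx ht
    rw [Real.norm_eq_abs, abs_of_nonneg h0]; exact h1

noncomputable def ggx (x t : ℝ) : ℝ := (x^2-1)/(x*(x*t+1)*(t+x))

lemma gg_hasDeriv {x t : ℝ} (hx : 0 < x) (ht : 0 < t) :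
    HasDerivAt (fun x => gg x t) (ggx x t) x := by
  have h1 : 0 < t + x := by linarith
  have h2 : 0 < t + x⁻¹ := by positivity
  have h3 : (0:ℝ) < x*t+1 := by positivity
  have d1 : HasDerivAt (fun x : ℝ => log (t+x)) (t+x)⁻¹ x := by
    simpa [Function.comp_def] using (Real.hasDerivAt_log h1.ne').comp x ((hasDerivAt_id x).const_add t)
  have d2 : HasDerivAt (fun x : ℝ => log (t+x⁻¹)) ((t+x⁻¹)⁻¹ * (-(x^2)⁻¹)) x := by
    have := (Real.hasDerivAt_log h2.ne').comp x ((hasDerivAt_inv hx.ne').const_add t)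
    simpa [div_eq_mul_inv, Function.comp_def] using this
  have H := ((d1.add d2).sub_const (2 * log (t+1))).div_const t
  have e : ((t+x)⁻¹ + (t+x⁻¹)⁻¹ * (-(x^2)⁻¹)) / t = ggx x t := by
    rw [ggx]; field_simp; ring
  rw [e] at H
  exact H

lemma ggx_ball_bound {x0 x t : ℝ} (hx0 : 0 < x0) (hx : x ∈ Metric.ball x0 (x0/2))
    (ht : 0 < t) :
    ‖ggx x t‖ ≤ ((3*x0/2)^2+1)/((x0/2) * (min (x0/2) 1)^2) * ((1+t)^2)⁻¹ := by
  rw [Metric.mem_ball, Real.dist_eq, abs_lt] at hx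
  have hxl : x0/2 < x := by linarith
  have hxu : x < 3*x0/2 := by linarith
  have hxp : 0 < x := by linarith
  set m : ℝ := min (x0/2) 1 with hm
  have hm0 : 0 < m := by positivity
  have hmx : m ≤ x := le_trans (min_le_left _ _) hxl.le
  have hm1 : m ≤ 1 := min_le_right _ _
  have h1 : m*(1+t) ≤ x*t+1 := by nlinarith [mul_le_mul_of_nonneg_right hmx ht.le]
  have h2 : m*(1+t) ≤ t+x := by nlinarith
  have hden : (x0/2) * m^2 * (1+t)^2 ≤ x*(x*t+1)*(t+x) := by
    have e : (x0/2) * m^2 * (1+t)^2 ≤ x * ((m*(1+t)) * (m*(1+t))) := by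
      have h := mul_le_mul_of_nonneg_right hxl.le
        (by positivity : (0:ℝ) ≤ m^2*(1+t)^2)
      calc (x0/2) * m^2 * (1+t)^2 = (x0/2)*(m^2*(1+t)^2) := by ring
        _ ≤ x*(m^2*(1+t)^2) := h
        _ = x * ((m*(1+t)) * (m*(1+t))) := by ring
    refine e.trans ?_
    rw [mul_assoc x (x*t+1) (t+x)]
    refine mul_le_mul_of_nonneg_left ?_ hxp.le
    exact mul_le_mul h1 h2 (by positivity) (by positivity)
  have hdenpos : 0 < (x0/2) * m^2 * (1+t)^2 := by positivity
  rw [ggx, norm_div, Real.norm_eq_abs, Real.norm_eq_abs,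
    abs_of_pos (lt_of_lt_of_le hdenpos hden)]
  rw [div_le_iff₀ (lt_of_lt_of_le hdenpos hden)]
  have hnum : |x^2-1| ≤ (3*x0/2)^2+1 := by
    rw [abs_le]; constructor <;> nlinarith
  calc |x^2-1| ≤ (3*x0/2)^2+1 := hnum
    _ = ((3*x0/2)^2+1)/((x0/2) * m^2) * ((1+t)^2)⁻¹ * ((x0/2) * m^2 * (1+t)^2) := by
        field_simp
    _ ≤ ((3*x0/2)^2+1)/((x0/2) * m^2) * ((1+t)^2)⁻¹ * (x*(x*t+1)*(t+x)) := by
        refine mul_le_mul_of_nonneg_left hden (by positivity)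
    _ = ((3*x0/2)^2+1)/((x0/2) * (min (x0/2) 1)^2) * ((1+t)^2)⁻¹ * (x*(x*t+1)*(t+x)) := by
        rw [← hm]

lemma ggx_integral {x : ℝ} (hx : 0 < x) :
    ∫ t in Ioi (0:ℝ), ggx x t = 2 * log x / x := by
  have hint : IntegrableOn (ggx x) (Ioi 0) := by
    apply Integrable.mono' (invbound' (((3*x/2)^2+1)/((x/2) * (min (x/2) 1)^2)))
    · apply ContinuousOn.aestronglyMeasurable _ measurableSet_Ioi
      intro t ht
      simp only [mem_Ioi] at ht
      apply ContinuousAt.continuousWithinAt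
      apply ContinuousAt.div continuousAt_const (by fun_prop)
      have : (0:ℝ) < x*(x*t+1)*(t+x) := by positivity
      exact this.ne'
    · rw [ae_restrict_iff' measurableSet_Ioi]
      filter_upwards with t ht
      exact ggx_ball_bound hx (Metric.mem_ball_self (by positivity)) ht
  have hderiv : ∀ t ∈ Ici (0:ℝ),
      HasDerivAt (fun t => (log (x*t+1) - log (t+x))/x) (ggx x t) t := by
    intro t ht
    simp only [mem_Ici] at ht
    have h1 : (0:ℝ) < x*t+1 := by positivity
    have h2 : 0 < t + x := by linarith
    have d1 : HasDerivAt (fun t : ℝ => log (x*t+1)) ((x*t+1)⁻¹ * x) t := by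
      have := (Real.hasDerivAt_log h1.ne').comp t
        (((hasDerivAt_id t).const_mul x).add_const 1)
      simpa [div_eq_mul_inv, mul_comm, Function.comp_def] using this
    have d2 : HasDerivAt (fun t : ℝ => log (t+x)) (t+x)⁻¹ t := by
      simpa [Function.comp_def] using (Real.hasDerivAt_log h2.ne').comp t ((hasDerivAt_id t).add_const x)
    have H := (d1.sub d2).div_const x
    have e : ((x*t+1)⁻¹ * x - (t+x)⁻¹)/x = ggx x t := by
      rw [ggx]; field_simp; ring
    rw [e] at H
    exact H
  have htend : Tendsto (fun t => (log (x*t+1) - log (t+x))/x) atTop (nhds (log x / x)) := by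
    have h1 : Tendsto (fun t : ℝ => (x*t+1)/(t+x)) atTop (nhds x) := by
      have hnum : Tendsto (fun t : ℝ => x + t⁻¹) atTop (nhds (x + 0)) :=
        tendsto_const_nhds.add tendsto_inv_atTop_zero
      have hden : Tendsto (fun t : ℝ => 1 + x * t⁻¹) atTop (nhds (1 + x * 0)) :=
        tendsto_const_nhds.add (tendsto_inv_atTop_zero.const_mul x)
      have hq := hnum.div hden (by norm_num)
      have hq' : Tendsto (fun t : ℝ => (x + t⁻¹)/(1 + x * t⁻¹)) atTop (nhds x) := by
        simp only [add_zero, mul_zero, div_one] at hq; exact hq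
      apply hq'.congr'
      filter_upwards [eventually_gt_atTop 0] with t ht
      have h2 : 0 < t + x := by linarith
      field_simp
    have h2 : Tendsto (fun t : ℝ => log ((x*t+1)/(t+x))) atTop (nhds (log x)) :=
      ((Real.continuousAt_log hx.ne').tendsto).comp h1
    apply Tendsto.div_const
    apply h2.congr'
    filter_upwards [eventually_gt_atTop 0] with t ht
    rw [log_div (by positivity) (by positivity : (0:ℝ) < t + x).ne']
  have := integral_Ioi_of_hasDerivAt_of_tendsto' hderiv hint htend
  rw [this]
  norm_num
  field_simp
  ring

lemma ggx_meas {x : ℝ} (hx : 0 < x) :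
    AEStronglyMeasurable (ggx x) (MeasureTheory.volume.restrict (Ioi 0)) := by
  apply ContinuousOn.aestronglyMeasurable _ measurableSet_Ioi
  intro t ht
  simp only [mem_Ioi] at ht
  apply ContinuousAt.continuousWithinAt
  apply ContinuousAt.div continuousAt_const (by fun_prop)
  have : (0:ℝ) < x*(x*t+1)*(t+x) := by positivity
  exact this.ne'

lemma Phi_hasDeriv {x0 : ℝ} (hx0 : 0 < x0) :
    HasDerivAt (fun x => ∫ t in Ioi (0:ℝ), gg x t) (2 * log x0 / x0) x0 := by
  have hball : ∀ x ∈ Metric.ball x0 (x0/2), 0 < x := by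
    intro x hx
    rw [Metric.mem_ball, Real.dist_eq, abs_lt] at hx
    linarith
  have key := hasDerivAt_integral_of_dominated_loc_of_deriv_le
    (μ := MeasureTheory.volume.restrict (Ioi 0)) (F := gg) (F' := ggx) (x₀ := x0)
    (bound := fun t => ((3*x0/2)^2+1)/((x0/2)*(min (x0/2) 1)^2) * ((1+t)^2)⁻¹)
    (s := Metric.ball x0 (x0/2)) (Metric.ball_mem_nhds x0 (half_pos hx0))
    ?hF_meas ?hF_int ?hF'_meas ?h_bound ?bound_int ?h_diff
  case hF_meas =>
    filter_upwards [eventually_gt_nhds hx0] with x hx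
    exact (gg_contOn hx).aestronglyMeasurable measurableSet_Ioi
  case hF_int => exact gg_integrable hx0
  case hF'_meas => exact ggx_meas hx0
  case h_bound =>
    rw [ae_restrict_iff' measurableSet_Ioi]
    filter_upwards with t ht
    intro x hx
    exact ggx_ball_bound hx0 hx ht
  case bound_int => exact invbound' _
  case h_diff =>
    rw [ae_restrict_iff' measurableSet_Ioi]
    filter_upwards with t ht
    intro x hx
    exact gg_hasDeriv (hball x hx) ht
  have := key.2
  rwa [ggx_integral hx0] at this

lemma Phi_eq {x : ℝ} (hx : 0 < x) :
    ∫ t in Ioi (0:ℝ), gg x t = (log x)^2 := by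
  suffices h : ∀ y : ℝ, 1 ≤ y → ∫ t in Ioi (0:ℝ), gg y t = (log y)^2 by
    rcases le_or_gt 1 x with hx1 | hx1
    · exact h x hx1
    · have hinv : 1 ≤ x⁻¹ := by
        nlinarith [mul_inv_cancel₀ hx.ne', inv_pos.mpr hx]
      have e : ∀ t, gg x t = gg x⁻¹ t := by
        intro t; simp only [gg, inv_inv]; ring_nf
      rw [show ((log x)^2 : ℝ) = (log x⁻¹)^2 by rw [log_inv]; ring]
      rw [← h x⁻¹ hinv]
      simp_rw [e]
  intro y hy
  have main := eq_of_has_deriv_right_eq (a := 1) (b := y)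
    (f := fun x => ∫ t in Ioi (0:ℝ), gg x t) (f' := fun x => 2 * log x / x)
    (g := fun x => (log x)^2) ?derivf ?derivg ?fcont ?gcont ?hi
  · exact main y (right_mem_Icc.mpr hy)
  case derivf =>
    intro z hz
    exact (Phi_hasDeriv (by linarith [hz.1] : (0:ℝ) < z)).hasDerivWithinAt
  case derivg =>
    intro z hz
    have hz0 : (0:ℝ) < z := by linarith [hz.1]
    have := (Real.hasDerivAt_log hz0.ne').pow 2
    have e : (2:ℕ) * log z ^ (2-1) * z⁻¹ = 2 * log z / z := by
      field_simp
      norm_num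
    rw [e] at this
    exact this.hasDerivWithinAt
  case fcont =>
    intro z hz
    exact (Phi_hasDeriv (by linarith [hz.1] : (0:ℝ) < z)).continuousAt.continuousWithinAt
  case gcont =>
    intro z hz
    have hz0 : (0:ℝ) < z := by linarith [hz.1]
    exact ((Real.continuousAt_log hz0.ne').pow 2).continuousWithinAt
  case hi =>
    have e : ∀ t : ℝ, gg 1 t = 0 := by
      intro t; rw [gg, inv_one]; ring
    simp only [e, MeasureTheory.integral_zero, log_one]
    norm_num

lemma pointwise_mono {a1 a2 a3 b1 b2 b3 t : ℝ}
    (ha1 : 0 < a1) (ha2 : 0 < a2) (ha3 : 0 < a3)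
    (hb1 : 0 < b1) (hb2 : 0 < b2) (hb3 : 0 < b3)
    (h1 : a1 + a2 + a3 ≤ b1 + b2 + b3)
    (h2 : a1 * a2 + a1 * a3 + a2 * a3 ≤ b1 * b2 + b1 * b3 + b2 * b3)
    (h3 : a1 * a2 * a3 = b1 * b2 * b3) (ht : 0 < t) :
    gg a1 t + gg a2 t + gg a3 t ≤ gg b1 t + gg b2 t + gg b3 t := by
  have P1 : (t+a1)*(t+a2)*(t+a3) ≤ (t+b1)*(t+b2)*(t+b3) := by
    nlinarith [mul_le_mul_of_nonneg_right h1 (sq_nonneg t),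
      mul_le_mul_of_nonneg_right h2 ht.le]
  have h3t : a1*a2*a3*t^3 = b1*b2*b3*t^3 := by rw [h3]
  have P2 : (a1*t+1)*(a2*t+1)*(a3*t+1) ≤ (b1*t+1)*(b2*t+1)*(b3*t+1) := by
    nlinarith [mul_le_mul_of_nonneg_right h2 (sq_nonneg t),
      mul_le_mul_of_nonneg_right h1 ht.le, h3t]
  have L1 : log ((t+a1)*(t+a2)*(t+a3)) ≤ log ((t+b1)*(t+b2)*(t+b3)) :=
    log_le_log (by positivity) P1
  have L2 : log ((a1*t+1)*(a2*t+1)*(a3*t+1)) ≤ log ((b1*t+1)*(b2*t+1)*(b3*t+1)) :=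
    log_le_log (by positivity) P2
  have Ssplit : ∀ u v w : ℝ, 0 < u → 0 < v → 0 < w →
      log (u*v*w) = log u + log v + log w := by
    intro u v w hu hv hw
    rw [log_mul (by positivity) hw.ne', log_mul hu.ne' hv.ne']
  have inv_eq : ∀ c : ℝ, 0 < c → log (t + c⁻¹) = log (c*t+1) - log c := by
    intro c hc
    rw [show t + c⁻¹ = (c*t+1)/c by field_simp, log_div (by positivity) hc.ne']
  have loga : log a1 + log a2 + log a3 = log b1 + log b2 + log b3 := by
    rw [← Ssplit _ _ _ ha1 ha2 ha3, ← Ssplit _ _ _ hb1 hb2 hb3, h3]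
  have expand : ∀ c1 c2 c3 : ℝ, 0 < c1 → 0 < c2 → 0 < c3 →
      gg c1 t + gg c2 t + gg c3 t =
      (log ((t+c1)*(t+c2)*(t+c3)) + log ((c1*t+1)*(c2*t+1)*(c3*t+1))
        - (log c1 + log c2 + log c3) - 6 * log (t+1)) / t := by
    intro c1 c2 c3 hc1 hc2 hc3
    rw [gg, gg, gg, ← add_div, ← add_div,
      Ssplit _ _ _ (by linarith) (by linarith) (by linarith),
      Ssplit _ _ _ (by positivity) (by positivity) (by positivity),
      inv_eq _ hc1, inv_eq _ hc2, inv_eq _ hc3]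
    ring
  rw [expand _ _ _ ha1 ha2 ha3, expand _ _ _ hb1 hb2 hb3]
  gcongr ?_ / t
  linarith [L1, L2, loga]

theorem ssli_three (a1 a2 a3 b1 b2 b3 : ℝ)
    (ha1 : 0 < a1) (ha2 : 0 < a2) (ha3 : 0 < a3)
    (hb1 : 0 < b1) (hb2 : 0 < b2) (hb3 : 0 < b3)
    (h1 : a1 + a2 + a3 ≤ b1 + b2 + b3)
    (h2 : a1 * a2 + a1 * a3 + a2 * a3 ≤ b1 * b2 + b1 * b3 + b2 * b3)
    (h3 : a1 * a2 * a3 = b1 * b2 * b3) :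
    (log a1) ^ 2 + (log a2) ^ 2 + (log a3) ^ 2 ≤
      (log b1) ^ 2 + (log b2) ^ 2 + (log b3) ^ 2 := by
  rw [← Phi_eq ha1, ← Phi_eq ha2, ← Phi_eq ha3, ← Phi_eq hb1, ← Phi_eq hb2, ← Phi_eq hb3]
  have Ia : MeasureTheory.Integrable (fun t => gg a1 t + gg a2 t)
      (MeasureTheory.volume.restrict (Ioi 0)) := (gg_integrable ha1).add (gg_integrable ha2)
  have Ib : MeasureTheory.Integrable (fun t => gg b1 t + gg b2 t)
      (MeasureTheory.volume.restrict (Ioi 0)) := (gg_integrable hb1).add (gg_integrable hb2)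
  have Ea : ∫ t in Ioi (0:ℝ), (gg a1 t + gg a2 t + gg a3 t) =
      (∫ t in Ioi (0:ℝ), gg a1 t) + (∫ t in Ioi (0:ℝ), gg a2 t) + ∫ t in Ioi (0:ℝ), gg a3 t := by
    rw [MeasureTheory.integral_add Ia (gg_integrable ha3),
      MeasureTheory.integral_add (gg_integrable ha1) (gg_integrable ha2)]
  have Eb : ∫ t in Ioi (0:ℝ), (gg b1 t + gg b2 t + gg b3 t) =
      (∫ t in Ioi (0:ℝ), gg b1 t) + (∫ t in Ioi (0:ℝ), gg b2 t) + ∫ t in Ioi (0:ℝ), gg b3 t := by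
    rw [MeasureTheory.integral_add Ib (gg_integrable hb3),
      MeasureTheory.integral_add (gg_integrable hb1) (gg_integrable hb2)]
  rw [← Ea, ← Eb]
  apply MeasureTheory.setIntegral_mono_on
  · exact Ia.add (gg_integrable ha3)
  · exact Ib.add (gg_integrable hb3)
  · exact measurableSet_Ioi
  · intro t ht
    exact pointwise_mono ha1 ha2 ha3 hb1 hb2 hb3 h1 h2 h3 ht
end

section
/- Let a₁,a₂,b₁,b₂ > 0 satisfy a₁+a₂ ≤ b₁+b₂ and a₁a₂ = b₁b₂. Then (log a₁)² + (log a₂)² ≤ (log b₁)² + (log b₂)². -/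
open Real

set_option maxHeartbeats 1000000

theorem ssli_two (a1 a2 b1 b2 : ℝ)
    (ha1 : 0 < a1) (ha2 : 0 < a2) (hb1 : 0 < b1) (hb2 : 0 < b2)
    (h1 : a1 + a2 ≤ b1 + b2) (h2 : a1 * a2 = b1 * b2) :
    (log a1) ^ 2 + (log a2) ^ 2 ≤ (log b1) ^ 2 + (log b2) ^ 2 := by
  set x1 := log a1 with hx1d
  set x2 := log a2 with hx2d
  set y1 := log b1 with hy1d
  set y2 := log b2 with hy2d
  have hx1 : a1 = exp x1 := (exp_log ha1).symm
  have hx2 : a2 = exp x2 := (exp_log ha2).symm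
  have hy1 : b1 = exp y1 := (exp_log hb1).symm
  have hy2 : b2 = exp y2 := (exp_log hb2).symm
  have hsum : x1 + x2 = y1 + y2 := by
    have := congrArg log h2
    rwa [log_mul ha1.ne' ha2.ne', log_mul hb1.ne' hb2.ne'] at this
  have hd2 : (a1 - a2) ^ 2 ≤ (b1 - b2) ^ 2 := by
    nlinarith [h1, h2, ha1.le, ha2.le, hb1.le, hb2.le, add_pos ha1 ha2, add_pos hb1 hb2]
  have e1 : a1 - a2 = 2 * exp ((x1 + x2) / 2) * Real.sinh ((x1 - x2) / 2) := by
    rw [Real.sinh_eq, hx1, hx2]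
    have h1' : exp x1 = exp ((x1 + x2) / 2) * exp ((x1 - x2) / 2) := by
      rw [← exp_add]; ring_nf
    have h2' : exp x2 = exp ((x1 + x2) / 2) * exp (-((x1 - x2) / 2)) := by
      rw [← exp_add]; ring_nf
    rw [h1', h2']; ring
  have e2 : b1 - b2 = 2 * exp ((y1 + y2) / 2) * Real.sinh ((y1 - y2) / 2) := by
    rw [Real.sinh_eq, hy1, hy2]
    have h1' : exp y1 = exp ((y1 + y2) / 2) * exp ((y1 - y2) / 2) := by
      rw [← exp_add]; ring_nf
    have h2' : exp y2 = exp ((y1 + y2) / 2) * exp (-((y1 - y2) / 2)) := by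
      rw [← exp_add]; ring_nf
    rw [h1', h2']; ring
  have hE : exp ((x1 + x2) / 2) = exp ((y1 + y2) / 2) := by rw [hsum]
  have hEpos : 0 < exp ((y1 + y2) / 2) := exp_pos _
  have hsinh : (Real.sinh ((x1 - x2) / 2)) ^ 2 ≤ (Real.sinh ((y1 - y2) / 2)) ^ 2 := by
    rw [e1, e2, hE] at hd2
    have h4 : 0 < 4 * (exp ((y1 + y2) / 2)) ^ 2 := by positivity
    have hd2' : 4 * (exp ((y1 + y2) / 2)) ^ 2 * (Real.sinh ((x1 - x2) / 2)) ^ 2 ≤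
        4 * (exp ((y1 + y2) / 2)) ^ 2 * (Real.sinh ((y1 - y2) / 2)) ^ 2 := by nlinarith [hd2]
    exact le_of_mul_le_mul_left hd2' h4
  have habs : |Real.sinh ((x1 - x2) / 2)| ≤ |Real.sinh ((y1 - y2) / 2)| := by
    nlinarith [hsinh, sq_abs (Real.sinh ((x1 - x2) / 2)), sq_abs (Real.sinh ((y1 - y2) / 2)),
      abs_nonneg (Real.sinh ((x1 - x2) / 2)), abs_nonneg (Real.sinh ((y1 - y2) / 2))]
  have hux : |(x1 - x2) / 2| ≤ |(y1 - y2) / 2| := by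
    rw [Real.abs_sinh, Real.abs_sinh] at habs
    exact Real.sinh_le_sinh.mp habs
  have key : (x1 - x2) ^ 2 ≤ (y1 - y2) ^ 2 := by
    have := mul_self_le_mul_self (abs_nonneg _) hux
    rw [abs_mul_abs_self, abs_mul_abs_self] at this
    nlinarith [this]
  have hs2 : (x1 + x2) ^ 2 = (y1 + y2) ^ 2 := by rw [hsum]
  have ex : x1 ^ 2 + x2 ^ 2 = ((x1 + x2) ^ 2 + (x1 - x2) ^ 2) / 2 := by ring
  have ey : y1 ^ 2 + y2 ^ 2 = ((y1 + y2) ^ 2 + (y1 - y2) ^ 2) / 2 := by ring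
  linarith [key, hs2]
end

section
/- Let a₁,a₂,a₃,a₄,b₁,b₂,b₃,b₄ > 0 satisfy e_k(a) ≤ e_k(b) for k = 1,2,3 and e₄(a) = e₄(b), where e_k denotes the k-th elementary symmetric polynomial in four variables. Then Σᵢ (log aᵢ)² ≤ Σᵢ (log bᵢ)². -/
open Real

open MeasureTheory Set intervalIntegral

noncomputable def psi (y u : ℝ) : ℝ := (y^2 - 1) / (y * ((1-u) + u*y) * ((1-u)*y + u))

lemma den1_pos {y u : ℝ} (hy : 0 < y) (h0 : 0 ≤ u) (h1 : u ≤ 1) : 0 < (1-u) + u*y := by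
  rcases eq_or_lt_of_le h1 with h | h
  · subst h; simpa using hy
  · have : 0 ≤ u * y := mul_nonneg h0 hy.le
    linarith

lemma den2_pos {y u : ℝ} (hy : 0 < y) (h0 : 0 ≤ u) (h1 : u ≤ 1) : 0 < (1-u)*y + u := by
  rcases eq_or_lt_of_le h0 with h | h
  · subst h; simpa using hy
  · have : 0 ≤ (1-u) * y := mul_nonneg (by linarith) hy.le
    linarith

lemma psi_contOn {x : ℝ} (hx : 1 ≤ x) :
    ContinuousOn (fun p : ℝ × ℝ => psi p.2 p.1) (Icc 0 1 ×ˢ Icc 1 x) := by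
  apply ContinuousOn.div
  · fun_prop
  · fun_prop
  · rintro ⟨u, y⟩ ⟨⟨hu0, hu1⟩, ⟨hy1, hyx⟩⟩
    have hy : (0:ℝ) < y := lt_of_lt_of_le one_pos hy1
    have d1 := den1_pos hy hu0 hu1
    have d2 := den2_pos hy hu0 hu1
    positivity

lemma integ_u {y : ℝ} (hy : 0 < y) :
    ∫ u in (0:ℝ)..1, psi y u = 2 * Real.log y / y := by
  have h : ∀ u ∈ Set.uIcc (0:ℝ) 1,
      HasDerivAt (fun u => (Real.log ((1-u) + u*y) - Real.log ((1-u)*y + u))/y) (psi y u) u := by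
    intro u hu
    rw [Set.uIcc_of_le (by norm_num : (0:ℝ) ≤ 1)] at hu
    obtain ⟨hu0, hu1⟩ := hu
    have d1 := den1_pos hy hu0 hu1
    have d2 := den2_pos hy hu0 hu1
    have hd1 : HasDerivAt (fun u : ℝ => (1-u) + u*y) (y - 1) u := by
      have := ((hasDerivAt_id u).const_sub 1).add ((hasDerivAt_id u).mul_const y)
      exact this.congr_deriv (by ring)
    have hd2 : HasDerivAt (fun u : ℝ => (1-u)*y + u) (1 - y) u := by
      have := (((hasDerivAt_id u).const_sub 1).mul_const y).add (hasDerivAt_id u)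
      exact this.congr_deriv (by ring)
    have := ((hd1.log d1.ne').sub (hd2.log d2.ne')).div_const y
    refine this.congr_deriv ?_
    unfold psi
    rw [div_sub_div _ _ d1.ne' d2.ne', div_div,
      div_eq_div_iff (mul_pos (mul_pos d1 d2) hy).ne' (mul_pos (mul_pos hy d1) d2).ne']
    ring
  have hint : IntervalIntegrable (fun u => psi y u) volume 0 1 := by
    apply ContinuousOn.intervalIntegrable
    rw [Set.uIcc_of_le (by norm_num : (0:ℝ) ≤ 1)]
    apply ContinuousOn.div
    · fun_prop
    · fun_prop
    · intro u hu
      have d1 := den1_pos hy hu.1 hu.2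
      have d2 := den2_pos hy hu.1 hu.2
      positivity
  rw [intervalIntegral.integral_eq_sub_of_hasDerivAt h hint]
  simp [Real.log_one]
  ring

lemma integ_y {x u : ℝ} (hx : 1 ≤ x) (hu0 : 0 < u) (hu1 : u < 1) :
    ∫ y in (1:ℝ)..x, psi y u
      = Real.log (1 + (x + 1/x - 2)*(u*(1-u))) / (u*(1-u)) := by
  have hw : 0 < u * (1-u) := mul_pos hu0 (by linarith)
  have h : ∀ y ∈ Set.uIcc (1:ℝ) x,
      HasDerivAt (fun y => (Real.log ((1-u) + u*y) + Real.log ((1-u)*y + u) - Real.log y)/(u*(1-u)))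
        (psi y u) y := by
    intro y hy
    rw [Set.uIcc_of_le hx] at hy
    have hypos : (0:ℝ) < y := lt_of_lt_of_le one_pos hy.1
    have d1 := den1_pos hypos hu0.le hu1.le
    have d2 := den2_pos hypos hu0.le hu1.le
    have hd1 : HasDerivAt (fun y : ℝ => (1-u) + u*y) u y := by
      have := (hasDerivAt_const y (1-u)).add ((hasDerivAt_id y).const_mul u)
      exact this.congr_deriv (by ring)
    have hd2 : HasDerivAt (fun y : ℝ => (1-u)*y + u) (1-u) y := by
      have := ((hasDerivAt_id y).const_mul (1-u)).add_const u
      simpa using this.congr_deriv (by ring)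
    have := (((hd1.log d1.ne').add (hd2.log d2.ne')).sub (Real.hasDerivAt_log hypos.ne')).div_const (u*(1-u))
    refine this.congr_deriv ?_
    unfold psi
    field_simp [d1.ne', d2.ne', hypos.ne', hu0.ne', (sub_pos.mpr hu1).ne']
    ring
  have hint : IntervalIntegrable (fun y => psi y u) volume 1 x := by
    apply ContinuousOn.intervalIntegrable
    rw [Set.uIcc_of_le hx]
    apply ContinuousOn.div
    · fun_prop
    · fun_prop
    · intro y hy
      have hypos : (0:ℝ) < y := lt_of_lt_of_le one_pos hy.1
      have d1 := den1_pos hypos hu0.le hu1.le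
      have d2 := den2_pos hypos hu0.le hu1.le
      positivity
  rw [intervalIntegral.integral_eq_sub_of_hasDerivAt h hint]
  have hx0 : (0:ℝ) < x := lt_of_lt_of_le one_pos hx
  have d1 := den1_pos hx0 hu0.le hu1.le
  have d2 := den2_pos hx0 hu0.le hu1.le
  have hid : 1 + (x + 1/x - 2)*(u*(1-u)) = ((1-u) + u*x)*((1-u)*x + u)/x := by
    field_simp
    ring
  rw [hid, Real.log_div (by positivity) hx0.ne', Real.log_mul d1.ne' d2.ne']
  simp [Real.log_one]

lemma key {x : ℝ} (hx : 1 ≤ x) :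
    IntervalIntegrable (fun u => Real.log (1 + (x + 1/x - 2)*(u*(1-u))) / (u*(1-u))) volume 0 1 ∧
    ∫ u in (0:ℝ)..1, Real.log (1 + (x + 1/x - 2)*(u*(1-u))) / (u*(1-u)) = (Real.log x)^2 := by
  set g : ℝ → ℝ := fun u => Real.log (1 + (x + 1/x - 2)*(u*(1-u))) / (u*(1-u)) with hg
  have hTint : IntegrableOn (fun p : ℝ × ℝ => psi p.2 p.1) (Ioc 0 1 ×ˢ Ioc 1 x) volume :=
    ((psi_contOn hx).integrableOn_compact (isCompact_Icc.prod isCompact_Icc)).mono_set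
      (Set.prod_mono Set.Ioc_subset_Icc_self Set.Ioc_subset_Icc_self)
  have hT2 : Integrable (Function.uncurry fun u y => psi y u)
      ((volume.restrict (Ioc (0:ℝ) 1)).prod (volume.restrict (Ioc (1:ℝ) x))) := by
    rw [Measure.prod_restrict, ← Measure.volume_eq_prod]
    exact hTint
  have hFI : Integrable (fun u => ∫ y, psi y u ∂(volume.restrict (Ioc (1:ℝ) x)))
      (volume.restrict (Ioc (0:ℝ) 1)) := hT2.integral_prod_left
  have h1ne : ∀ᵐ u : ℝ ∂volume, u ≠ 1 := by
    refine MeasureTheory.ae_iff.mpr ?_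
    simp only [ne_eq, not_not, Set.setOf_eq_eq_singleton]
    exact Real.volume_singleton
  have hae : ∀ᵐ u ∂(volume.restrict (Ioc (0:ℝ) 1)),
      (fun u => ∫ y, psi y u ∂(volume.restrict (Ioc (1:ℝ) x))) u = g u := by
    rw [MeasureTheory.ae_restrict_iff' measurableSet_Ioc]
    filter_upwards [h1ne] with u hu1 hu
    have hu0 : 0 < u := hu.1
    have hult : u < 1 := lt_of_le_of_ne hu.2 hu1
    have e1 : ∫ y, psi y u ∂(volume.restrict (Ioc (1:ℝ) x)) = ∫ y in (1:ℝ)..x, psi y u :=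
      (intervalIntegral.integral_of_le hx).symm
    rw [e1, integ_y hx hu0 hult]
  have hgI : IntervalIntegrable g volume 0 1 := by
    rw [intervalIntegrable_iff, Set.uIoc_of_le (by norm_num : (0:ℝ) ≤ 1)]
    exact hFI.congr hae
  refine ⟨hgI, ?_⟩
  have swap := MeasureTheory.integral_integral_swap (f := fun u y => psi y u) hT2
  calc ∫ u in (0:ℝ)..1, g u
      = ∫ u in Ioc (0:ℝ) 1, g u ∂volume := intervalIntegral.integral_of_le (by norm_num)
    _ = ∫ u in Ioc (0:ℝ) 1, (fun u => ∫ y, psi y u ∂(volume.restrict (Ioc (1:ℝ) x))) u ∂volume :=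
        (MeasureTheory.integral_congr_ae hae).symm
    _ = ∫ y, ∫ u, psi y u ∂(volume.restrict (Ioc (0:ℝ) 1)) ∂(volume.restrict (Ioc (1:ℝ) x)) := swap
    _ = ∫ y in Ioc (1:ℝ) x, (2 * Real.log y / y) ∂volume := by
        apply MeasureTheory.setIntegral_congr_fun measurableSet_Ioc
        intro y hy
        have hy0 : (0:ℝ) < y := lt_trans one_pos hy.1
        show (∫ u in Ioc (0:ℝ) 1, psi y u) = 2 * Real.log y / y
        have e2 : (∫ u in Ioc (0:ℝ) 1, psi y u) = ∫ u in (0:ℝ)..1, psi y u :=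
          (intervalIntegral.integral_of_le (by norm_num)).symm
        rw [e2, integ_u hy0]
    _ = ∫ y in (1:ℝ)..x, 2 * Real.log y / y := (intervalIntegral.integral_of_le hx).symm
    _ = (Real.log x)^2 := by
        have h : ∀ y ∈ Set.uIcc (1:ℝ) x,
            HasDerivAt (fun y => (Real.log y)^2) (2 * Real.log y / y) y := by
          intro y hy
          rw [Set.uIcc_of_le hx] at hy
          have hy0 : (0:ℝ) < y := lt_of_lt_of_le one_pos hy.1
          have := (Real.hasDerivAt_log hy0.ne').pow 2
          refine this.congr_deriv ?_
          norm_num [div_eq_mul_inv]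
        have hint : IntervalIntegrable (fun y => 2 * Real.log y / y) volume 1 x := by
          apply ContinuousOn.intervalIntegrable
          rw [Set.uIcc_of_le hx]
          apply ContinuousOn.div
          · exact (Real.continuousOn_log.mono (by intro y hy; exact ne_of_gt (lt_of_lt_of_le one_pos hy.1))).const_smul 2 |>.congr (fun y _ => by simp [smul_eq_mul])
          · fun_prop
          · intro y hy; exact ne_of_gt (lt_of_lt_of_le one_pos hy.1)
        rw [intervalIntegral.integral_eq_sub_of_hasDerivAt h hint]
        simp

lemma key' {x : ℝ} (hx : 0 < x) :
    IntervalIntegrable (fun u => Real.log (1 + (x + 1/x - 2)*(u*(1-u))) / (u*(1-u))) volume 0 1 ∧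
    ∫ u in (0:ℝ)..1, Real.log (1 + (x + 1/x - 2)*(u*(1-u))) / (u*(1-u)) = (Real.log x)^2 := by
  rcases le_total 1 x with h | h
  · exact key h
  · have hinv : 1 ≤ 1/x := by rw [le_div_iff₀ hx]; linarith
    have hk := key hinv
    have hc : 1/x + 1/(1/x) - 2 = x + 1/x - 2 := by
      rw [one_div_one_div]; ring
    rw [hc] at hk
    rw [show Real.log (1/x) = - Real.log x by rw [one_div, Real.log_inv]] at hk
    simpa [neg_sq] using hk

lemma coeff_nonneg {x : ℝ} (hx : 0 < x) : 0 ≤ x + 1/x - 2 := by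
  have h : x + 1/x - 2 = (x-1)^2/x := by field_simp; ring
  rw [h]; positivity

section main
variable {a1 a2 a3 a4 b1 b2 b3 b4 : ℝ}

lemma pointwise
    (ha1 : 0 < a1) (ha2 : 0 < a2) (ha3 : 0 < a3) (ha4 : 0 < a4)
    (hb1 : 0 < b1) (hb2 : 0 < b2) (hb3 : 0 < b3) (hb4 : 0 < b4)
    (h1 : a1 + a2 + a3 + a4 ≤ b1 + b2 + b3 + b4)
    (h2 : a1 * a2 + a1 * a3 + a2 * a3 + a1 * a4 + a2 * a4 + a3 * a4 ≤
          b1 * b2 + b1 * b3 + b2 * b3 + b1 * b4 + b2 * b4 + b3 * b4)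
    (h3 : a1 * a2 * a3 + a1 * a2 * a4 + a2 * a3 * a4 + a1 * a3 * a4 ≤
          b1 * b2 * b3 + b1 * b2 * b4 + b2 * b3 * b4 + b1 * b3 * b4)
    (h4 : a1 * a2 * a3 * a4 = b1 * b2 * b3 * b4)
    {u : ℝ} (hu0 : 0 < u) (hu1 : u < 1) :
    Real.log (1 + (a1 + 1/a1 - 2)*(u*(1-u))) / (u*(1-u)) +
    Real.log (1 + (a2 + 1/a2 - 2)*(u*(1-u))) / (u*(1-u)) +
    Real.log (1 + (a3 + 1/a3 - 2)*(u*(1-u))) / (u*(1-u)) +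
    Real.log (1 + (a4 + 1/a4 - 2)*(u*(1-u))) / (u*(1-u)) ≤
    Real.log (1 + (b1 + 1/b1 - 2)*(u*(1-u))) / (u*(1-u)) +
    Real.log (1 + (b2 + 1/b2 - 2)*(u*(1-u))) / (u*(1-u)) +
    Real.log (1 + (b3 + 1/b3 - 2)*(u*(1-u))) / (u*(1-u)) +
    Real.log (1 + (b4 + 1/b4 - 2)*(u*(1-u))) / (u*(1-u)) := by
  have hw : 0 < u * (1-u) := mul_pos hu0 (by linarith)
  set w := u * (1-u) with hwdef
  have hp : ∀ x : ℝ, 0 < x → (0:ℝ) < 1 + (x + 1/x - 2)*w := fun x hx => by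
    have := mul_nonneg (coeff_nonneg hx) hw.le
    linarith
  have pa1 := hp a1 ha1; have pa2 := hp a2 ha2; have pa3 := hp a3 ha3; have pa4 := hp a4 ha4
  have pb1 := hp b1 hb1; have pb2 := hp b2 hb2; have pb3 := hp b3 hb3; have pb4 := hp b4 hb4
  have sumlog : ∀ x1 x2 x3 x4 : ℝ, 0 < x1 → 0 < x2 → 0 < x3 → 0 < x4 →
      Real.log x1 / w + Real.log x2 / w + Real.log x3 / w + Real.log x4 / w
        = Real.log (x1 * x2 * x3 * x4) / w := by
    intro x1 x2 x3 x4 q1 q2 q3 q4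
    rw [Real.log_mul (by positivity) q4.ne', Real.log_mul (by positivity) q3.ne',
      Real.log_mul q1.ne' q2.ne']
    ring
  rw [sumlog _ _ _ _ pa1 pa2 pa3 pa4, sumlog _ _ _ _ pb1 pb2 pb3 pb4]
  have hv0 : 0 < 1 - u := by linarith
  -- product inequality
  have hA : (1 + (a1 + 1/a1 - 2)*w) * (1 + (a2 + 1/a2 - 2)*w) * (1 + (a3 + 1/a3 - 2)*w) *
      (1 + (a4 + 1/a4 - 2)*w)
      = (((1-u)+u*a1)*((1-u)+u*a2)*((1-u)+u*a3)*((1-u)+u*a4)) *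
        (((1-u)*a1+u)*((1-u)*a2+u)*((1-u)*a3+u)*((1-u)*a4+u)) / (a1*a2*a3*a4) := by
    rw [hwdef]; field_simp; ring
  have hB : (1 + (b1 + 1/b1 - 2)*w) * (1 + (b2 + 1/b2 - 2)*w) * (1 + (b3 + 1/b3 - 2)*w) *
      (1 + (b4 + 1/b4 - 2)*w)
      = (((1-u)+u*b1)*((1-u)+u*b2)*((1-u)+u*b3)*((1-u)+u*b4)) *
        (((1-u)*b1+u)*((1-u)*b2+u)*((1-u)*b3+u)*((1-u)*b4+u)) / (a1*a2*a3*a4) := by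
    rw [hwdef, h4]; field_simp; ring
  have d1 : 0 ≤ (b1+b2+b3+b4) - (a1+a2+a3+a4) := by linarith
  have d2 : 0 ≤ (b1*b2 + b1*b3 + b2*b3 + b1*b4 + b2*b4 + b3*b4)
      - (a1*a2 + a1*a3 + a2*a3 + a1*a4 + a2*a4 + a3*a4) := by linarith
  have d3 : 0 ≤ (b1*b2*b3 + b1*b2*b4 + b2*b3*b4 + b1*b3*b4)
      - (a1*a2*a3 + a1*a2*a4 + a2*a3*a4 + a1*a3*a4) := by linarith
  have hq1 : ((1-u)+u*a1)*((1-u)+u*a2)*((1-u)+u*a3)*((1-u)+u*a4)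
      ≤ ((1-u)+u*b1)*((1-u)+u*b2)*((1-u)+u*b3)*((1-u)+u*b4) := by
    have expand : ((1-u)+u*b1)*((1-u)+u*b2)*((1-u)+u*b3)*((1-u)+u*b4)
        - ((1-u)+u*a1)*((1-u)+u*a2)*((1-u)+u*a3)*((1-u)+u*a4)
        = u*(1-u)^3*((b1+b2+b3+b4) - (a1+a2+a3+a4))
          + u^2*(1-u)^2*((b1*b2 + b1*b3 + b2*b3 + b1*b4 + b2*b4 + b3*b4)
              - (a1*a2 + a1*a3 + a2*a3 + a1*a4 + a2*a4 + a3*a4))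
          + u^3*(1-u)*((b1*b2*b3 + b1*b2*b4 + b2*b3*b4 + b1*b3*b4)
              - (a1*a2*a3 + a1*a2*a4 + a2*a3*a4 + a1*a3*a4))
          + u^4*(b1*b2*b3*b4 - a1*a2*a3*a4) := by ring
    have t1 := mul_nonneg (by positivity : (0:ℝ) ≤ u*(1-u)^3) d1
    have t2 := mul_nonneg (by positivity : (0:ℝ) ≤ u^2*(1-u)^2) d2
    have t3 := mul_nonneg (by positivity : (0:ℝ) ≤ u^3*(1-u)) d3
    have t4 : u^4*(b1*b2*b3*b4 - a1*a2*a3*a4) = 0 := by rw [h4]; ring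
    linarith [expand]
  have hq2 : ((1-u)*a1+u)*((1-u)*a2+u)*((1-u)*a3+u)*((1-u)*a4+u)
      ≤ ((1-u)*b1+u)*((1-u)*b2+u)*((1-u)*b3+u)*((1-u)*b4+u) := by
    have expand : ((1-u)*b1+u)*((1-u)*b2+u)*((1-u)*b3+u)*((1-u)*b4+u)
        - ((1-u)*a1+u)*((1-u)*a2+u)*((1-u)*a3+u)*((1-u)*a4+u)
        = (1-u)^4*(b1*b2*b3*b4 - a1*a2*a3*a4)
          + (1-u)^3*u*((b1*b2*b3 + b1*b2*b4 + b2*b3*b4 + b1*b3*b4)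
              - (a1*a2*a3 + a1*a2*a4 + a2*a3*a4 + a1*a3*a4))
          + (1-u)^2*u^2*((b1*b2 + b1*b3 + b2*b3 + b1*b4 + b2*b4 + b3*b4)
              - (a1*a2 + a1*a3 + a2*a3 + a1*a4 + a2*a4 + a3*a4))
          + (1-u)*u^3*((b1+b2+b3+b4) - (a1+a2+a3+a4)) := by ring
    have t1 := mul_nonneg (by positivity : (0:ℝ) ≤ (1-u)^3*u) d3
    have t2 := mul_nonneg (by positivity : (0:ℝ) ≤ (1-u)^2*u^2) d2
    have t3 := mul_nonneg (by positivity : (0:ℝ) ≤ (1-u)*u^3) d1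
    have t4 : (1-u)^4*(b1*b2*b3*b4 - a1*a2*a3*a4) = 0 := by rw [h4]; ring
    linarith [expand]
  have q1a_pos : 0 < ((1-u)+u*a1)*((1-u)+u*a2)*((1-u)+u*a3)*((1-u)+u*a4) := by positivity
  have q2a_pos : 0 < ((1-u)*a1+u)*((1-u)*a2+u)*((1-u)*a3+u)*((1-u)*a4+u) := by positivity
  have q1b_pos : 0 < ((1-u)+u*b1)*((1-u)+u*b2)*((1-u)+u*b3)*((1-u)+u*b4) := by positivity
  have hAB : (1 + (a1 + 1/a1 - 2)*w) * (1 + (a2 + 1/a2 - 2)*w) * (1 + (a3 + 1/a3 - 2)*w) *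
      (1 + (a4 + 1/a4 - 2)*w)
      ≤ (1 + (b1 + 1/b1 - 2)*w) * (1 + (b2 + 1/b2 - 2)*w) * (1 + (b3 + 1/b3 - 2)*w) *
        (1 + (b4 + 1/b4 - 2)*w) := by
    rw [hA, hB]
    exact div_le_div_of_nonneg_right
      (mul_le_mul hq1 hq2 q2a_pos.le q1b_pos.le) (by positivity)
  have hlog := Real.log_le_log (by positivity) hAB
  exact div_le_div_of_nonneg_right hlog hw.le
end main

theorem ssli_four (a1 a2 a3 a4 b1 b2 b3 b4 : ℝ)
    (ha1 : 0 < a1) (ha2 : 0 < a2) (ha3 : 0 < a3) (ha4 : 0 < a4)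
    (hb1 : 0 < b1) (hb2 : 0 < b2) (hb3 : 0 < b3) (hb4 : 0 < b4)
    (h1 : a1 + a2 + a3 + a4 ≤ b1 + b2 + b3 + b4)
    (h2 : a1 * a2 + a1 * a3 + a2 * a3 + a1 * a4 + a2 * a4 + a3 * a4 ≤
          b1 * b2 + b1 * b3 + b2 * b3 + b1 * b4 + b2 * b4 + b3 * b4)
    (h3 : a1 * a2 * a3 + a1 * a2 * a4 + a2 * a3 * a4 + a1 * a3 * a4 ≤
          b1 * b2 * b3 + b1 * b2 * b4 + b2 * b3 * b4 + b1 * b3 * b4)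
    (h4 : a1 * a2 * a3 * a4 = b1 * b2 * b3 * b4) :
    (log a1) ^ 2 + (log a2) ^ 2 + (log a3) ^ 2 + (log a4) ^ 2 ≤
      (log b1) ^ 2 + (log b2) ^ 2 + (log b3) ^ 2 + (log b4) ^ 2 := by
  obtain ⟨Ia1, Va1⟩ := key' ha1
  obtain ⟨Ia2, Va2⟩ := key' ha2
  obtain ⟨Ia3, Va3⟩ := key' ha3
  obtain ⟨Ia4, Va4⟩ := key' ha4
  obtain ⟨Ib1, Vb1⟩ := key' hb1
  obtain ⟨Ib2, Vb2⟩ := key' hb2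
  obtain ⟨Ib3, Vb3⟩ := key' hb3
  obtain ⟨Ib4, Vb4⟩ := key' hb4
  have hsa : ∫ u in (0:ℝ)..1,
      (Real.log (1 + (a1 + 1/a1 - 2)*(u*(1-u))) / (u*(1-u)) +
       Real.log (1 + (a2 + 1/a2 - 2)*(u*(1-u))) / (u*(1-u)) +
       Real.log (1 + (a3 + 1/a3 - 2)*(u*(1-u))) / (u*(1-u)) +
       Real.log (1 + (a4 + 1/a4 - 2)*(u*(1-u))) / (u*(1-u)))
      = (log a1)^2 + (log a2)^2 + (log a3)^2 + (log a4)^2 := by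
    rw [intervalIntegral.integral_add ((Ia1.add Ia2).add Ia3) Ia4,
      intervalIntegral.integral_add (Ia1.add Ia2) Ia3,
      intervalIntegral.integral_add Ia1 Ia2, Va1, Va2, Va3, Va4]
  have hsb : ∫ u in (0:ℝ)..1,
      (Real.log (1 + (b1 + 1/b1 - 2)*(u*(1-u))) / (u*(1-u)) +
       Real.log (1 + (b2 + 1/b2 - 2)*(u*(1-u))) / (u*(1-u)) +
       Real.log (1 + (b3 + 1/b3 - 2)*(u*(1-u))) / (u*(1-u)) +
       Real.log (1 + (b4 + 1/b4 - 2)*(u*(1-u))) / (u*(1-u)))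
      = (log b1)^2 + (log b2)^2 + (log b3)^2 + (log b4)^2 := by
    rw [intervalIntegral.integral_add ((Ib1.add Ib2).add Ib3) Ib4,
      intervalIntegral.integral_add (Ib1.add Ib2) Ib3,
      intervalIntegral.integral_add Ib1 Ib2, Vb1, Vb2, Vb3, Vb4]
  rw [← hsa, ← hsb]
  apply intervalIntegral.integral_mono_on (by norm_num)
    (((Ia1.add Ia2).add Ia3).add Ia4) (((Ib1.add Ib2).add Ib3).add Ib4)
  intro u hu
  rcases eq_or_lt_of_le hu.1 with hc0 | hc0
  · rw [← hc0]; norm_num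
  rcases eq_or_lt_of_le hu.2 with hc1 | hc1
  · rw [hc1]; norm_num
  exact pointwise ha1 ha2 ha3 ha4 hb1 hb2 hb3 hb4 h1 h2 h3 h4 hc0 hc1
end

section
/- Let a, b ∈ ℝ₊ⁿ satisfy b₁/a₁ ≥ b₂/a₂ ≥ … ≥ bₙ/aₙ and a₁b₁ ≥ a₂b₂ ≥ … ≥ aₙbₙ. If additionally ∏ᵢ aᵢ ≤ ∏ᵢ bᵢ and (∏ᵢ aᵢ)·(∏ᵢ bᵢ) ≥ 1, then Σᵢ (log aᵢ)² ≤ Σᵢ (log bᵢ)². -/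
open Real

theorem ssli_quot_prod_condition_a (n : ℕ) (a b : Fin n → ℝ)
    (ha : ∀ i, 0 < a i) (hb : ∀ i, 0 < b i)
    (hquot : ∀ i j : Fin n, i ≤ j → b j / a j ≤ b i / a i)
    (hprod : ∀ i j : Fin n, i ≤ j → a j * b j ≤ a i * b i)
    (h1 : ∏ i, a i ≤ ∏ i, b i)
    (h2 : 1 ≤ (∏ i, a i) * (∏ i, b i)) :
    ∑ i, (log (a i)) ^ 2 ≤ ∑ i, (log (b i)) ^ 2 := by
  rcases Nat.eq_zero_or_pos n with hn | hn
  · subst hn; simp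
  set u : Fin n → ℝ := fun i => log (b i) - log (a i) with hu
  set v : Fin n → ℝ := fun i => log (b i) + log (a i) with hv
  have hau : Antitone u := by
    intro i j hij
    have := hquot i j hij
    have h1 := Real.log_le_log (div_pos (hb j) (ha j)) this
    rwa [Real.log_div (hb j).ne' (ha j).ne', Real.log_div (hb i).ne' (ha i).ne'] at h1
  have hav : Antitone v := by
    intro i j hij
    have := hprod i j hij
    have h1 := Real.log_le_log (mul_pos (ha j) (hb j)) this
    rwa [Real.log_mul (ha j).ne' (hb j).ne', Real.log_mul (ha i).ne' (hb i).ne',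
      add_comm (log (a j)), add_comm (log (a i))] at h1
  have hmono : Monovary u v := by
    intro i j hvij
    have hji : j < i := by
      by_contra h
      exact absurd (hav (le_of_not_gt h)) (not_le_of_gt hvij)
    exact hau hji.le
  have hsumu : 0 ≤ ∑ i, u i := by
    have : ∑ i, u i = log (∏ i, b i) - log (∏ i, a i) := by
      rw [Real.log_prod (fun i _ => (hb i).ne'), Real.log_prod (fun i _ => (ha i).ne'),
        Finset.sum_sub_distrib]
    rw [this, sub_nonneg]
    exact Real.log_le_log (Finset.prod_pos (fun i _ => ha i)) h1
  have hsumv : 0 ≤ ∑ i, v i := by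
    have : ∑ i, v i = log ((∏ i, a i) * (∏ i, b i)) := by
      rw [Real.log_mul (Finset.prod_pos (fun i _ => ha i)).ne'
        (Finset.prod_pos (fun i _ => hb i)).ne',
        Real.log_prod (fun i _ => (hb i).ne'), Real.log_prod (fun i _ => (ha i).ne'),
        ← Finset.sum_add_distrib]
      simp [hv, add_comm]
    rw [this]
    exact Real.log_nonneg h2
  have hcheb := hmono.sum_mul_sum_le_card_mul_sum
  have huv : 0 ≤ ∑ i, u i * v i := by
    have h0 : (0:ℝ) ≤ (∑ i, u i) * ∑ i, v i := mul_nonneg hsumu hsumv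
    have hc : (0:ℝ) < (Fintype.card (Fin n) : ℝ) := by simp [hn]
    nlinarith
  have key : ∑ i, (log (b i)) ^ 2 - ∑ i, (log (a i)) ^ 2 = ∑ i, u i * v i := by
    rw [← Finset.sum_sub_distrib]
    apply Finset.sum_congr rfl
    intro i _
    simp only [hu, hv]
    ring
  linarith
end

section
/- Let a, b ∈ ℝ₊ⁿ satisfy b₁/a₁ ≥ b₂/a₂ ≥ … ≥ bₙ/aₙ and a₁b₁ ≥ a₂b₂ ≥ … ≥ aₙbₙ. If additionally ∏ᵢ aᵢ ≥ ∏ᵢ bᵢ and (∏ᵢ aᵢ)·(∏ᵢ bᵢ) ≤ 1, then Σᵢ (log aᵢ)² ≤ Σᵢ (log bᵢ)². -/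
open Real

theorem ssli_quot_prod_condition_b (n : ℕ) (a b : Fin n → ℝ)
    (ha : ∀ i, 0 < a i) (hb : ∀ i, 0 < b i)
    (hquot : ∀ i j : Fin n, i ≤ j → b j / a j ≤ b i / a i)
    (hprod : ∀ i j : Fin n, i ≤ j → a j * b j ≤ a i * b i)
    (h1 : ∏ i, b i ≤ ∏ i, a i)
    (h2 : (∏ i, a i) * (∏ i, b i) ≤ 1) :
    ∑ i, (log (a i)) ^ 2 ≤ ∑ i, (log (b i)) ^ 2 := by
  set f : Fin n → ℝ := fun i => log (b i) - log (a i) with hf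
  set g : Fin n → ℝ := fun i => log (a i) + log (b i) with hg
  have hpa : 0 < ∏ i, a i := Finset.prod_pos fun i _ => ha i
  have hpb : 0 < ∏ i, b i := Finset.prod_pos fun i _ => hb i
  -- f is antitone
  have hfanti : ∀ i j : Fin n, i ≤ j → f j ≤ f i := by
    intro i j hij
    have := hquot i j hij
    have h1 : log (b j / a j) ≤ log (b i / a i) :=
      Real.log_le_log (div_pos (hb j) (ha j)) this
    rwa [Real.log_div (hb j).ne' (ha j).ne', Real.log_div (hb i).ne' (ha i).ne'] at h1
  have hganti : ∀ i j : Fin n, i ≤ j → g j ≤ g i := by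
    intro i j hij
    have := hprod i j hij
    have h1 : log (a j * b j) ≤ log (a i * b i) :=
      Real.log_le_log (mul_pos (ha j) (hb j)) this
    rwa [Real.log_mul (ha j).ne' (hb j).ne', Real.log_mul (ha i).ne' (hb i).ne'] at h1
  have hmono : Monovary f g := by
    intro i j hgij
    rcases le_total i j with h | h
    · exact absurd (hganti i j h) (not_le.mpr hgij)
    · exact hfanti j i h
  have hsf : ∑ i, f i ≤ 0 := by
    have : ∑ i, f i = log (∏ i, b i) - log (∏ i, a i) := by
      rw [Finset.sum_sub_distrib, Real.log_prod fun i _ => (ha i).ne',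
        Real.log_prod fun i _ => (hb i).ne']
    rw [this]
    have := Real.log_le_log hpb h1
    linarith
  have hsg : ∑ i, g i ≤ 0 := by
    have : ∑ i, g i = log ((∏ i, a i) * (∏ i, b i)) := by
      rw [Real.log_mul hpa.ne' hpb.ne', Real.log_prod fun i _ => (ha i).ne',
        Real.log_prod fun i _ => (hb i).ne', Finset.sum_add_distrib]
    rw [this]
    calc log ((∏ i, a i) * (∏ i, b i)) ≤ log 1 :=
          Real.log_le_log (mul_pos hpa hpb) h2
      _ = 0 := Real.log_one
  have hcheb := hmono.sum_mul_sum_le_card_mul_sum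
  have hprodpos : 0 ≤ (∑ i, f i) * ∑ i, g i := by nlinarith [hsf, hsg]
  have hsum : 0 ≤ ∑ i, f i * g i := by
    rcases Nat.eq_zero_or_pos n with hn | hn
    · subst hn; simp
    · have hc : (0:ℝ) < (Fintype.card (Fin n) : ℝ) := by simp [hn]
      nlinarith [hprodpos, hcheb]
  have key : ∑ i, f i * g i = (∑ i, (log (b i)) ^ 2) - ∑ i, (log (a i)) ^ 2 := by
    rw [← Finset.sum_sub_distrib]
    apply Finset.sum_congr rfl
    intro i _
    simp only [hf, hg]
    ring
  linarith [key ▸ hsum]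
end

section
/- Let a, b ∈ ℝⁿ with aᵢ > 1 and bᵢ > 1 for all i, and let p < 0 be a real number. Suppose a is weakly majorized from above by b, i.e., for every k ∈ {1,…,n}, the sum of the k smallest entries of a is at least the sum of the k smallest entries of b. Then Σᵢ (log aᵢ)ᵖ ≤ Σᵢ (log bᵢ)ᵖ. -/
open Real Finset

section aux

variable {p : ℝ}

/-- the derivative of `fun t => (log t)^p`. -/
noncomputable def glp (p t : ℝ) : ℝ := p * (log t) ^ (p - 1) * t⁻¹

lemma glp_nonpos (hp : p < 0) {t : ℝ} (ht : 1 < t) : glp p t ≤ 0 := by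
  have h1 : (0:ℝ) < log t := Real.log_pos ht
  have h2 : (0:ℝ) < (log t) ^ (p - 1) := Real.rpow_pos_of_pos h1 _
  have h3 : (0:ℝ) < t⁻¹ := by positivity
  have h4 := mul_pos h2 h3
  unfold glp
  rw [mul_assoc]
  exact mul_nonpos_of_nonpos_of_nonneg hp.le h4.le

lemma glp_mono (hp : p < 0) {s t : ℝ} (hs : 1 < s) (hst : s ≤ t) : glp p s ≤ glp p t := by
  have hls : (0:ℝ) < log s := Real.log_pos hs
  have hlt : log s ≤ log t := Real.log_le_log (by linarith) hst
  have h1 : (log t) ^ (p - 1) ≤ (log s) ^ (p - 1) :=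
    Real.rpow_le_rpow_of_nonpos hls hlt (by linarith)
  have ht0 : (0:ℝ) < t := by linarith
  have h2 : t⁻¹ ≤ s⁻¹ := inv_anti₀ (by linarith) hst
  have hps : (0:ℝ) < (log s) ^ (p-1) := Real.rpow_pos_of_pos hls _
  have key : (log t) ^ (p - 1) * t⁻¹ ≤ (log s) ^ (p - 1) * s⁻¹ :=
    mul_le_mul h1 h2 (inv_nonneg.mpr ht0.le) hps.le
  unfold glp
  rw [mul_assoc, mul_assoc]
  exact mul_le_mul_of_nonpos_left key hp.le

lemma hasDerivAt_logpow (hp : p < 0) {t : ℝ} (ht : 1 < t) :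
    HasDerivAt (fun x => (log x) ^ p) (glp p t) t := by
  have hlog : HasDerivAt log t⁻¹ t := Real.hasDerivAt_log (by linarith)
  have hlt : log t ≠ 0 := ne_of_gt (Real.log_pos ht)
  have hr : HasDerivAt (fun y : ℝ => y ^ p) (p * (log t) ^ (p - 1)) (log t) :=
    Real.hasDerivAt_rpow_const (Or.inl hlt)
  have := hr.comp t hlog
  simpa [glp, mul_assoc, Function.comp_def] using this

/-- gradient inequality from convexity of `(log ·)^p` on `(1, ∞)`. -/
lemma grad_ineq (hp : p < 0) {x y : ℝ} (hx : 1 < x) (hy : 1 < y) :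
    (log x) ^ p - (log y) ^ p ≤ glp p x * (x - y) := by
  rcases lt_trichotomy x y with h | h | h
  · -- MVT on [x, y]
    obtain ⟨c, hc, hceq⟩ := exists_hasDerivAt_eq_slope (fun z => (log z) ^ p) (glp p) h
      (fun z hz => (hasDerivAt_logpow hp (lt_of_lt_of_le hx hz.1)).continuousAt.continuousWithinAt)
      (fun z hz => hasDerivAt_logpow hp (lt_trans hx hz.1))
    have hcx : x ≤ c := le_of_lt hc.1
    have hmono : glp p x ≤ glp p c := glp_mono hp hx hcx
    have hxy : (0:ℝ) < y - x := by linarith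
    have : (log y) ^ p - (log x) ^ p = glp p c * (y - x) := by
      field_simp at hceq; linarith [hceq]
    nlinarith [this, hmono]
  · simp [h]
  · -- MVT on [y, x]
    obtain ⟨c, hc, hceq⟩ := exists_hasDerivAt_eq_slope (fun z => (log z) ^ p) (glp p) h
      (fun z hz => (hasDerivAt_logpow hp (lt_of_lt_of_le hy hz.1)).continuousAt.continuousWithinAt)
      (fun z hz => hasDerivAt_logpow hp (lt_trans hy hz.1))
    have hmono : glp p c ≤ glp p x := glp_mono hp (lt_trans hy hc.1) (le_of_lt hc.2)
    have hxy : (0:ℝ) < x - y := by linarith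
    have : (log x) ^ p - (log y) ^ p = glp p c * (x - y) := by
      field_simp at hceq; linarith [hceq]
    nlinarith [this, hmono]

/-- Abel-summation type estimate. -/
lemma abel_le (c d : ℕ → ℝ) (hc : Monotone c) (hc0 : ∀ i, c i ≤ 0)
    (hS : ∀ k, 0 ≤ ∑ i ∈ range k, d i) (n : ℕ) :
    ∑ i ∈ range n, c i * d i ≤ 0 := by
  have key : ∀ m, ∑ i ∈ range m, c i * d i ≤ c m * ∑ i ∈ range m, d i := by
    intro m
    induction m with
    | zero => simp
    | succ m ih =>
      rw [Finset.sum_range_succ, Finset.sum_range_succ]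
      have h1 : ∑ i ∈ range m, c i * d i + c m * d m ≤ c m * (∑ i ∈ range m, d i + d m) := by
        rw [mul_add]; linarith [ih]
      refine le_trans h1 ?_
      exact mul_le_mul_of_nonneg_right (hc (Nat.le_succ m))
        (by simpa [Finset.sum_range_succ] using hS (m+1))
  calc ∑ i ∈ range n, c i * d i ≤ c n * ∑ i ∈ range n, d i := key n
    _ ≤ 0 := mul_nonpos_of_nonpos_of_nonneg (hc0 n) (hS n)

/-- sum of first k values of a monotone function is at most the sum over any k-subset. -/
lemma sum_first_le {n k : ℕ} (hk : k ≤ n) (g : Fin n → ℝ) (hg : Monotone g)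
    (C : Finset (Fin n)) (hC : C.card = k) :
    ∑ i : Fin k, g (Fin.castLE hk i) ≤ ∑ j ∈ C, g j := by
  have hemb := C.orderEmbOfFin hC
  have hrange : ∀ j ∈ C, ∃ i : Fin k, C.orderEmbOfFin hC i = j := by
    intro j hj
    have : j ∈ Set.range (C.orderEmbOfFin hC) := by
      rw [Finset.range_orderEmbOfFin]; exact hj
    exact this
  have hsum : ∑ j ∈ C, g j = ∑ i : Fin k, g (C.orderEmbOfFin hC i) := by
    refine (Finset.sum_bij (fun i _ => C.orderEmbOfFin hC i) ?_ ?_ ?_ ?_).symm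
    · intro i _; exact Finset.orderEmbOfFin_mem C hC i
    · intro i _ j _ h; exact (C.orderEmbOfFin hC).injective h
    · intro j hj; obtain ⟨i, hi⟩ := hrange j hj; exact ⟨i, Finset.mem_univ i, hi⟩
    · intro i _; rfl
  rw [hsum]
  apply Finset.sum_le_sum
  intro i _
  apply hg
  have hle : (Fin.castLE hk i : Fin n) ≤ C.orderEmbOfFin hC i := by
    have hsm : StrictMono (C.orderEmbOfFin hC) := (C.orderEmbOfFin hC).strictMono
    have hsm' : StrictMono (fun j : Fin k => ((C.orderEmbOfFin hC j : Fin n) : ℕ)) :=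
      fun x y hxy => by exact_mod_cast hsm hxy
    have key : ∀ m, ∀ (hm : m < k), m ≤ ((C.orderEmbOfFin hC ⟨m, hm⟩ : Fin n) : ℕ) := by
      intro m
      induction m with
      | zero => intro hm; exact Nat.zero_le _
      | succ j ihj =>
        intro hm
        have hj : j < k := Nat.lt_of_succ_lt hm
        have h1 : ((C.orderEmbOfFin hC ⟨j, hj⟩ : Fin n) : ℕ)
            < ((C.orderEmbOfFin hC ⟨j + 1, hm⟩ : Fin n) : ℕ) :=
          hsm' (by simp [Fin.lt_def])
        have h2 := ihj hj
        omega
    have := key i i.isLt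
    rw [Fin.eta] at this
    exact Fin.le_def.mpr (by simpa using this)
  exact hle

end aux

/-- Sum of powered logarithms inequality: if `a` is weakly majorized from above
by `b` (equivalently: for every subset `A` of indices there is a subset `B` of the
same cardinality such that `∑_{B} b ≤ ∑_{A} a`, which amounts to the sums of the
`k` smallest entries of `a` dominating those of `b` for every `k`), and all entries
exceed `1`, then for every negative real power `p` we have
`∑ (log aᵢ)ᵖ ≤ ∑ (log bᵢ)ᵖ`. -/
theorem sum_of_powered_logarithms (n : ℕ) (a b : Fin n → ℝ)
    (ha : ∀ i, 1 < a i) (hb : ∀ i, 1 < b i) (p : ℝ) (hp : p < 0)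
    (hmaj : ∀ A : Finset (Fin n), ∃ B : Finset (Fin n),
      B.card = A.card ∧ ∑ i ∈ B, b i ≤ ∑ i ∈ A, a i) :
    ∑ i, (log (a i)) ^ p ≤ ∑ i, (log (b i)) ^ p := by
  classical
  -- sorted versions
  set σ := Tuple.sort a with hσ
  set τ := Tuple.sort b with hτ
  set a' : Fin n → ℝ := a ∘ σ with ha'
  set b' : Fin n → ℝ := b ∘ τ with hb'
  have ha'mono : Monotone a' := Tuple.monotone_sort a
  have hb'mono : Monotone b' := Tuple.monotone_sort b
  have ha'1 : ∀ i, 1 < a' i := fun i => ha _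
  have hb'1 : ∀ i, 1 < b' i := fun i => hb _
  -- prefix sums domination
  have hprefix : ∀ k, (hk : k ≤ n) →
      ∑ i : Fin k, b' (Fin.castLE hk i) ≤ ∑ i : Fin k, a' (Fin.castLE hk i) := by
    intro k hk
    set A : Finset (Fin n) := Finset.image (fun i : Fin k => σ (Fin.castLE hk i)) Finset.univ with hA
    have hinj : Function.Injective (fun i : Fin k => σ (Fin.castLE hk i)) :=
      fun x y h => by
        have := σ.injective h
        exact Fin.castLE_injective hk this
    have hAcard : A.card = k := by
      rw [hA, Finset.card_image_of_injective _ hinj, Finset.card_univ, Fintype.card_fin]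
    have hAsum : ∑ i ∈ A, a i = ∑ i : Fin k, a' (Fin.castLE hk i) := by
      rw [hA, Finset.sum_image (fun x _ y _ h => hinj h)]
      rfl
    obtain ⟨B, hBcard, hBsum⟩ := hmaj A
    rw [hAcard] at hBcard
    -- B sum dominated below by sum of k smallest b entries
    have hBtob' : ∑ j ∈ B, b j = ∑ j ∈ B.image τ.symm, b' j := by
      rw [Finset.sum_image (fun x _ y _ h => by
        simpa using congrArg τ h)]
      apply Finset.sum_congr rfl
      intro j _
      simp [hb']
    have hBcard' : (B.image τ.symm).card = k := by
      rw [Finset.card_image_of_injective _ τ.symm.injective, hBcard]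
    have := sum_first_le hk b' hb'mono (B.image τ.symm) hBcard'
    rw [hAsum] at hBsum
    rw [hBtob'] at hBsum
    linarith
  -- convert main sums to sorted versions
  have hsa : ∑ i, (log (a i)) ^ p = ∑ i, (log (a' i)) ^ p :=
    (Equiv.sum_comp σ (fun i => (log (a i)) ^ p)).symm
  have hsb : ∑ i, (log (b i)) ^ p = ∑ i, (log (b' i)) ^ p :=
    (Equiv.sum_comp τ (fun i => (log (b i)) ^ p)).symm
  rw [hsa, hsb]
  -- pointwise gradient estimate then Abel
  have hptwise : ∀ i, (log (a' i)) ^ p - (log (b' i)) ^ p ≤ glp p (a' i) * (a' i - b' i) :=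
    fun i => grad_ineq hp (ha'1 i) (hb'1 i)
  -- pad to ℕ
  set c : ℕ → ℝ := fun i => if h : i < n then glp p (a' ⟨i, h⟩) else 0 with hc
  set d : ℕ → ℝ := fun i => if h : i < n then a' ⟨i, h⟩ - b' ⟨i, h⟩ else 0 with hd
  have hcmono : Monotone c := by
    intro i j hij
    by_cases hi : i < n
    · by_cases hj : j < n
      · simp only [hc, dif_pos hi, dif_pos hj]
        exact glp_mono hp (ha'1 _) (ha'mono (by exact_mod_cast hij : (⟨i, hi⟩ : Fin n) ≤ ⟨j, hj⟩))
      · simp only [hc, dif_pos hi, dif_neg hj]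
        exact glp_nonpos hp (ha'1 _)
    · have hj : ¬ j < n := fun h => hi (lt_of_le_of_lt hij h)
      simp [hc, dif_neg hi, dif_neg hj]
  have hc0 : ∀ i, c i ≤ 0 := by
    intro i
    by_cases hi : i < n
    · simp only [hc, dif_pos hi]; exact glp_nonpos hp (ha'1 _)
    · simp [hc, dif_neg hi]
  have hdSn : ∀ k, (hk : k ≤ n) → 0 ≤ ∑ i ∈ range k, d i := by
    intro k hk
    have : ∑ i ∈ range k, d i
        = ∑ i : Fin k, a' (Fin.castLE hk i) - ∑ i : Fin k, b' (Fin.castLE hk i) := by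
      rw [← Finset.sum_sub_distrib, ← Fin.sum_univ_eq_sum_range]
      apply Finset.sum_congr rfl
      intro i _
      have hi : (i : ℕ) < n := lt_of_lt_of_le i.isLt hk
      simp [hd, dif_pos hi, Fin.castLE]
    rw [this]
    linarith [hprefix k hk]
  have hdS : ∀ k, 0 ≤ ∑ i ∈ range k, d i := by
    intro k
    rcases le_or_gt k n with hk | hk
    · exact hdSn k hk
    · have heq : ∑ i ∈ range k, d i = ∑ i ∈ range n, d i := by
        rw [← Finset.sum_range_add_sum_Ico _ (le_of_lt hk)]
        have hz : ∑ i ∈ Finset.Ico n k, d i = 0 :=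
          Finset.sum_eq_zero (fun i hi => by
            simp [hd, dif_neg (not_lt.mpr (Finset.mem_Ico.mp hi).1)])
        rw [hz, add_zero]
      rw [heq]
      exact hdSn n le_rfl
  have habel := abel_le c d hcmono hc0 hdS n
  have hfinal : ∑ i, ((log (a' i)) ^ p - (log (b' i)) ^ p) ≤ ∑ i ∈ range n, c i * d i := by
    rw [← Fin.sum_univ_eq_sum_range]
    apply Finset.sum_le_sum
    intro i _
    have hi : (i : ℕ) < n := i.isLt
    simpa [hc, hd, dif_pos hi] using hptwise i
  rw [Finset.sum_sub_distrib] at hfinal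
  linarith
end

section
/- For positive reals x, y ∈ ℝ₊ⁿ, if log x is weakly majorized from below by log y (i.e. the products of the k largest entries of x are bounded by those of y for all k), then x is weakly majorized from below by y (i.e. the sums of the k largest entries of x are bounded by those of y for all k). -/
open Real

open Finset Function

private lemma abel_le_s7 (d : ℕ → ℝ) : ∀ (k : ℕ) (c : ℕ → ℝ),
    (∀ i j, i ≤ j → j < k → c j ≤ c i) → (∀ i, i < k → 0 ≤ c i) →
    (∀ j, j ≤ k → ∑ i ∈ Finset.range j, d i ≤ 0) →
    ∑ i ∈ Finset.range k, c i * d i ≤ 0 := by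
  intro k
  induction k with
  | zero => simp
  | succ k ih =>
    intro c hmono hpos hD
    have key : ∑ i ∈ Finset.range (k+1), c i * d i
        = ∑ i ∈ Finset.range k, ((c i - c k) * d i)
          + c k * ∑ i ∈ Finset.range (k+1), d i := by
      have e1 : ∑ i ∈ Finset.range (k+1), c i * d i
          = ∑ i ∈ Finset.range (k+1), ((c i - c k) * d i)
            + ∑ i ∈ Finset.range (k+1), (c k * d i) := by
        rw [← Finset.sum_add_distrib]
        exact Finset.sum_congr rfl fun i _ => by ring
      rw [e1, Finset.sum_range_succ (fun i => (c i - c k) * d i) k, ← Finset.mul_sum,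
        sub_self, zero_mul, add_zero]
    rw [key]
    have h1 : ∑ i ∈ Finset.range k, ((c i - c k) * d i) ≤ 0 := by
      apply ih (fun i => c i - c k)
      · intro i j hij hjk
        have := hmono i j hij (hjk.trans (Nat.lt_succ_self k))
        linarith
      · intro i hik
        have := hmono i k hik.le (Nat.lt_succ_self k)
        linarith
      · intro j hj; exact hD j (hj.trans (Nat.le_succ k))
    have h2 : c k * ∑ i ∈ Finset.range (k+1), d i ≤ 0 :=
      mul_nonpos_of_nonneg_of_nonpos (hpos k (Nat.lt_succ_self k)) (hD (k+1) le_rfl)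
    linarith

private lemma core_lem (k : ℕ) (a b : ℕ → ℝ)
    (ha : ∀ i, i < k → 0 < a i) (hb : ∀ i, i < k → 0 < b i)
    (hmono : ∀ i j, i ≤ j → j < k → a j ≤ a i)
    (hprod : ∀ j, j ≤ k → ∏ i ∈ Finset.range j, a i ≤ ∏ i ∈ Finset.range j, b i) :
    ∑ i ∈ Finset.range k, a i ≤ ∑ i ∈ Finset.range k, b i := by
  set d : ℕ → ℝ := fun i => Real.log (a i) - Real.log (b i) with hd
  have hD : ∀ j, j ≤ k → ∑ i ∈ Finset.range j, d i ≤ 0 := by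
    intro j hj
    have hap : 0 < ∏ i ∈ Finset.range j, a i :=
      Finset.prod_pos fun i hi => ha i ((Finset.mem_range.mp hi).trans_le hj)
    have hbp : 0 < ∏ i ∈ Finset.range j, b i :=
      Finset.prod_pos fun i hi => hb i ((Finset.mem_range.mp hi).trans_le hj)
    have h1 : ∑ i ∈ Finset.range j, d i
        = Real.log (∏ i ∈ Finset.range j, a i) - Real.log (∏ i ∈ Finset.range j, b i) := by
      rw [Real.log_prod (fun i hi => (ha i ((Finset.mem_range.mp hi).trans_le hj)).ne'),
        Real.log_prod (fun i hi => (hb i ((Finset.mem_range.mp hi).trans_le hj)).ne'),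
        ← Finset.sum_sub_distrib]
    rw [h1, sub_nonpos]
    exact Real.log_le_log hap (hprod j hj)
  have hpt : ∀ i, i < k → a i - b i ≤ a i * d i := by
    intro i hik
    have hai := ha i hik
    have hbi := hb i hik
    have ht : (0:ℝ) < b i / a i := div_pos hbi hai
    have h2 : Real.log (b i / a i) + 1 ≤ b i / a i := by
      have := Real.add_one_le_exp (Real.log (b i / a i))
      rwa [Real.exp_log ht] at this
    have h3 : Real.log (b i / a i) = - d i := by
      rw [Real.log_div hbi.ne' hai.ne', hd]; ring
    rw [h3] at h2
    have h4 : (-(d i) + 1) * a i ≤ b i := (le_div_iff₀ hai).mp h2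
    nlinarith
  have h5 : ∑ i ∈ Finset.range k, (a i - b i) ≤ ∑ i ∈ Finset.range k, a i * d i :=
    Finset.sum_le_sum fun i hi => hpt i (Finset.mem_range.mp hi)
  have h6 := abel_le_s7 d k a (fun i j hij hjk => hmono i j hij hjk)
    (fun i hik => (ha i hik).le) hD
  rw [Finset.sum_sub_distrib] at h5
  linarith

private lemma prod_le_prod_swap {n : ℕ} (w : Fin n → ℝ) (hw : ∀ i, 0 < w i)
    (S T : Finset (Fin n)) (hcard : S.card = T.card)
    (hle : ∀ i ∈ S, i ∉ T → ∀ j ∈ T, j ∉ S → w i ≤ w j) :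
    ∏ i ∈ S, w i ≤ ∏ i ∈ T, w i := by
  have h1 : (S \ T).card = (T \ S).card := Finset.card_sdiff_comm hcard
  let e : (S \ T : Finset (Fin n)) ≃ (T \ S : Finset (Fin n)) := Finset.equivOfCardEq h1
  have h2 : ∏ i ∈ S \ T, w i ≤ ∏ i ∈ T \ S, w i := by
    rw [← Finset.prod_coe_sort (S \ T) w, ← Finset.prod_coe_sort (T \ S) w]
    rw [← Equiv.prod_comp e (fun j => w j)]
    apply Finset.prod_le_prod
    · intro i _; exact (hw _).le
    · intro i _
      have hi := i.2
      have hei := (e i).2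
      rw [Finset.mem_sdiff] at hi hei
      exact hle i.1 hi.1 hi.2 (e i).1 hei.1 hei.2
  calc ∏ i ∈ S, w i = (∏ i ∈ S ∩ T, w i) * ∏ i ∈ S \ T, w i :=
        (Finset.prod_inter_mul_prod_diff S T w).symm
    _ ≤ (∏ i ∈ T ∩ S, w i) * ∏ i ∈ T \ S, w i := by
        rw [Finset.inter_comm]
        exact mul_le_mul_of_nonneg_left h2
          (Finset.prod_nonneg fun i _ => (hw i).le)
    _ = ∏ i ∈ T, w i := Finset.prod_inter_mul_prod_diff T S w

private lemma prod_range_eq_image {n k : ℕ} (w : Fin n → ℝ) (f : Fin k → Fin n)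
    (hf : Function.Injective f) (j : ℕ) (hj : j ≤ k) :
    ∏ i ∈ Finset.range j, (if hi : i < k then w (f ⟨i, hi⟩) else 1)
      = ∏ i ∈ Finset.image (fun i : Fin j => f (Fin.castLE hj i)) Finset.univ, w i := by
  rw [Finset.prod_image (fun p _ q _ hpq => Fin.castLE_injective hj (hf hpq))]
  rw [← Fin.prod_univ_eq_prod_range]
  apply Finset.prod_congr rfl
  intro i _
  have hik : (i : ℕ) < k := lt_of_lt_of_le i.isLt hj
  simp only [hik, dif_pos]
  rfl

private lemma sum_range_eq_image {n k : ℕ} (w : Fin n → ℝ) (f : Fin k → Fin n)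
    (hf : Function.Injective f) (j : ℕ) (hj : j ≤ k) :
    ∑ i ∈ Finset.range j, (if hi : i < k then w (f ⟨i, hi⟩) else 1)
      = ∑ i ∈ Finset.image (fun i : Fin j => f (Fin.castLE hj i)) Finset.univ, w i := by
  rw [Finset.sum_image (fun p _ q _ hpq => Fin.castLE_injective hj (hf hpq))]
  rw [← Fin.sum_univ_eq_sum_range]
  apply Finset.sum_congr rfl
  intro i _
  have hik : (i : ℕ) < k := lt_of_lt_of_le i.isLt hj
  simp only [hik, dif_pos]
  rfl

/-- Logarithmic weak majorization implies weak majorization: if for every subset `A`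
of indices there is a subset `B` of the same cardinality with `∏_{A} x ≤ ∏_{B} y`
(i.e. the products of the `k` largest entries of `x` are bounded by those of `y`),
then for every subset `A` there is a subset `B` of the same cardinality with
`∑_{A} x ≤ ∑_{B} y` (i.e. the sums of the `k` largest entries of `x` are bounded by
those of `y`). -/
theorem weak_majorization_of_log_weak_majorization (n : ℕ) (x y : Fin n → ℝ)
    (hx : ∀ i, 0 < x i) (hy : ∀ i, 0 < y i)
    (hmaj : ∀ A : Finset (Fin n), ∃ B : Finset (Fin n),
      B.card = A.card ∧ ∏ i ∈ A, x i ≤ ∏ i ∈ B, y i) :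
    ∀ A : Finset (Fin n), ∃ B : Finset (Fin n),
      B.card = A.card ∧ ∑ i ∈ A, x i ≤ ∑ i ∈ B, y i := by
  intro A
  set k := A.card with hkdef
  have hkn : k ≤ n := by
    have := Finset.card_le_univ A
    simpa using this
  let g : Fin k ↪o Fin n := A.orderEmbOfFin rfl
  let τ : Equiv.Perm (Fin k) := Tuple.sort (fun i => -(x (g i)))
  let f : Fin k → Fin n := fun i => g (τ i)
  have hf : Function.Injective f := fun p q hpq => τ.injective (g.injective hpq)
  have hfA : Finset.image f Finset.univ = A := by
    refine Finset.eq_of_subset_of_card_le ?_ ?_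
    · intro i hi
      obtain ⟨p, _, rfl⟩ := Finset.mem_image.mp hi
      exact Finset.orderEmbOfFin_mem A rfl (τ p)
    · rw [Finset.card_image_of_injective _ hf, Finset.card_univ, Fintype.card_fin]
  let σ : Equiv.Perm (Fin n) := Tuple.sort (fun i => -(y i))
  let h : Fin k → Fin n := fun i => σ (Fin.castLE hkn i)
  have hh : Function.Injective h :=
    fun p q hpq => Fin.castLE_injective hkn (σ.injective hpq)
  -- antitone facts
  have hxa : ∀ p q : Fin k, p ≤ q → x (f q) ≤ x (f p) := by
    intro p q hpq
    have := Tuple.monotone_sort (fun i => -(x (g i))) hpq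
    simp only [Function.comp_apply] at this
    have : -(x (g (τ p))) ≤ -(x (g (τ q))) := this
    simpa [f] using neg_le_neg_iff.mp this
  have hya : ∀ p q : Fin n, p ≤ q → y (σ q) ≤ y (σ p) := by
    intro p q hpq
    have := Tuple.monotone_sort (fun i => -(y i)) hpq
    simp only [Function.comp_apply] at this
    have : -(y (σ p)) ≤ -(y (σ q)) := this
    exact neg_le_neg_iff.mp this
  let a : ℕ → ℝ := fun i => if hi : i < k then x (f ⟨i, hi⟩) else 1
  let b : ℕ → ℝ := fun i => if hi : i < k then y (h ⟨i, hi⟩) else 1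
  have hapos : ∀ i, i < k → 0 < a i := by
    intro i hi; simp only [a, dif_pos hi]; exact hx _
  have hbpos : ∀ i, i < k → 0 < b i := by
    intro i hi; simp only [b, dif_pos hi]; exact hy _
  have hamono : ∀ i j, i ≤ j → j < k → a j ≤ a i := by
    intro i j hij hjk
    have hik : i < k := lt_of_le_of_lt hij hjk
    simp only [a, dif_pos hik, dif_pos hjk]
    exact hxa ⟨i, hik⟩ ⟨j, hjk⟩ hij
  have hprod : ∀ j, j ≤ k → ∏ i ∈ Finset.range j, a i ≤ ∏ i ∈ Finset.range j, b i := by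
    intro j hj
    have hA := prod_range_eq_image x f hf j hj
    have hB := prod_range_eq_image y h hh j hj
    show ∏ i ∈ Finset.range j, (if hi : i < k then x (f ⟨i, hi⟩) else 1)
      ≤ ∏ i ∈ Finset.range j, (if hi : i < k then y (h ⟨i, hi⟩) else 1)
    rw [hA, hB]
    set Aj := Finset.image (fun i : Fin j => f (Fin.castLE hj i)) Finset.univ with hAj
    set Tj := Finset.image (fun i : Fin j => h (Fin.castLE hj i)) Finset.univ with hTj
    obtain ⟨B', hB'card, hB'⟩ := hmaj Aj
    refine hB'.trans (prod_le_prod_swap y hy B' Tj ?_ ?_)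
    · rw [hB'card, hAj, hTj]
      rw [Finset.card_image_of_injective Finset.univ
        (show Function.Injective (fun i : Fin j => f (Fin.castLE hj i)) from
          fun p q hpq => Fin.castLE_injective hj (hf hpq))]
      rw [Finset.card_image_of_injective Finset.univ
        (show Function.Injective (fun i : Fin j => h (Fin.castLE hj i)) from
          fun p q hpq => Fin.castLE_injective hj (hh hpq))]
    · intro i _ hiT j' hj'T _
      obtain ⟨m, _, rfl⟩ := Finset.mem_image.mp hj'T
      set q : Fin n := σ.symm i with hq
      have hqj : j ≤ (q : ℕ) := by
        by_contra hcon
        push_neg at hcon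
        apply hiT
        rw [hTj, Finset.mem_image]
        refine ⟨⟨(q : ℕ), hcon⟩, Finset.mem_univ _, ?_⟩
        show σ (Fin.castLE hkn (Fin.castLE hj ⟨(q : ℕ), hcon⟩)) = i
        have : Fin.castLE hkn (Fin.castLE hj ⟨(q : ℕ), hcon⟩) = q := by
          apply Fin.ext; rfl
        rw [this, hq, Equiv.apply_symm_apply]
      have hple : Fin.castLE hkn (Fin.castLE hj m) ≤ q := by
        rw [Fin.le_def]
        exact le_trans (le_of_lt (by exact m.isLt)) hqj
      have := hya _ q hple
      rw [hq, Equiv.apply_symm_apply] at this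
      exact this
  have hsum : ∑ i ∈ A, x i ≤ ∑ i ∈ Finset.image h Finset.univ, y i := by
    have hA := sum_range_eq_image x f hf k le_rfl
    have hB := sum_range_eq_image y h hh k le_rfl
    have e2 : Finset.image (fun i : Fin k => f (Fin.castLE (le_refl k) i)) Finset.univ
        = A := by rw [← hfA]; rfl
    have e3 : Finset.image (fun i : Fin k => h (Fin.castLE (le_refl k) i)) Finset.univ
        = Finset.image h Finset.univ := rfl
    rw [e2] at hA
    rw [e3] at hB
    rw [← hA, ← hB]
    exact core_lem k a b hapos hbpos hamono hprod
  refine ⟨Finset.image h Finset.univ, ?_, hsum⟩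
  rw [Finset.card_image_of_injective _ hh, Finset.card_univ, Fintype.card_fin]
end

section
/- If x, y ∈ ℝ₊ⁿ satisfy x ≺ y (x is majorized by y) and e_k(x) = e_k(y) for some k ∈ {2,…,n}, where e_k is the k-th elementary symmetric polynomial, then the decreasing rearrangements of x and y coincide: x↓ = y↓. -/
open Real

/-- The `k`-th elementary symmetric polynomial of `x : Fin n → ℝ`. -/
def esymm (n k : ℕ) (x : Fin n → ℝ) : ℝ :=
  ∑ A ∈ Finset.powersetCard k (Finset.univ : Finset (Fin n)), ∏ i ∈ A, x i


lemma esymm_eq_ms (n k : ℕ) (x : Fin n → ℝ) :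
    esymm n k x = (Finset.univ.val.map x).esymm k := by
  rw [Finset.esymm_map_val]; rfl

lemma ms_prod_pos (s : Multiset ℝ) (h : ∀ a ∈ s, (0:ℝ) < a) : 0 < s.prod := by
  induction s using Multiset.induction with
  | empty => simp
  | cons a s ih =>
    rw [Multiset.prod_cons]
    exact mul_pos (h a (Multiset.mem_cons_self a s))
      (ih fun b hb => h b (Multiset.mem_cons_of_mem hb))

lemma ms_sum_nonneg (s : Multiset ℝ) (h : ∀ a ∈ s, (0:ℝ) ≤ a) : 0 ≤ s.sum := by
  induction s using Multiset.induction with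
  | empty => simp
  | cons a s ih =>
    rw [Multiset.sum_cons]
    have := h a (Multiset.mem_cons_self a s)
    have := ih fun b hb => h b (Multiset.mem_cons_of_mem hb)
    linarith

lemma ms_sum_pos (s : Multiset ℝ) (h : ∀ a ∈ s, (0:ℝ) < a) (hs : s ≠ 0) : 0 < s.sum := by
  induction s using Multiset.induction with
  | empty => exact absurd rfl hs
  | cons a s ih =>
    rw [Multiset.sum_cons]
    have h1 := h a (Multiset.mem_cons_self a s)
    have h2 : 0 ≤ s.sum := ms_sum_nonneg s fun b hb => (h b (Multiset.mem_cons_of_mem hb)).le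
    linarith

lemma ms_esymm_pos (s : Multiset ℝ) (m : ℕ) (h : ∀ a ∈ s, (0:ℝ) < a)
    (hm : m ≤ Multiset.card s) : 0 < s.esymm m := by
  apply ms_sum_pos
  · intro a ha
    rw [Multiset.mem_map] at ha
    obtain ⟨t, ht, rfl⟩ := ha
    rw [Multiset.mem_powersetCard] at ht
    exact ms_prod_pos t fun b hb => h b (Multiset.mem_of_le ht.1 hb)
  · simp only [Ne, Multiset.map_eq_zero]
    intro h0
    have hc := Multiset.card_powersetCard m s
    rw [h0] at hc
    simp only [Multiset.card_zero] at hc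
    exact absurd hc.symm (Nat.choose_pos hm).ne'

lemma ms_esymm_cons (a : ℝ) (s : Multiset ℝ) (m : ℕ) :
    (a ::ₘ s).esymm (m+1) = s.esymm (m+1) + a * s.esymm m := by
  unfold Multiset.esymm
  rw [Multiset.powersetCard_cons, Multiset.map_add, Multiset.sum_add, Multiset.map_map]
  congr 1
  rw [show (Multiset.prod ∘ Multiset.cons a) = fun t : Multiset ℝ => a * t.prod from
    funext fun t => Multiset.prod_cons a t]
  rw [Multiset.sum_map_mul_left]

lemma ms_esymm_cons2 (a b : ℝ) (s : Multiset ℝ) (m : ℕ) :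
    (a ::ₘ b ::ₘ s).esymm (m+2) =
      s.esymm (m+2) + (a+b) * s.esymm (m+1) + (a*b) * s.esymm m := by
  rw [show m+2 = (m+1)+1 from rfl, ms_esymm_cons, ms_esymm_cons, ms_esymm_cons]
  ring

lemma esymm_comp (n k : ℕ) (f : Fin n → ℝ) (σ : Equiv.Perm (Fin n)) :
    esymm n k (f ∘ σ) = esymm n k f := by
  rw [esymm_eq_ms, esymm_eq_ms]
  congr 1
  rw [show Multiset.map (f ∘ σ) Finset.univ.val
      = Multiset.map f (Multiset.map σ Finset.univ.val) from (Multiset.map_map f σ _).symm]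
  congr 1
  have h1 : (Finset.univ.map σ.toEmbedding) = (Finset.univ : Finset (Fin n)) :=
    Finset.map_univ_equiv σ
  have h2 : Multiset.map (⇑σ) Finset.univ.val = (Finset.univ.map σ.toEmbedding).val := rfl
  rw [h2, h1]

lemma le_val_of_strictMono {m n : ℕ} (f : Fin m → Fin n) (hf : StrictMono f) (r : Fin m) :
    (r : ℕ) ≤ (f r : ℕ) := by
  suffices H : ∀ a : ℕ, ∀ h : a < m, a ≤ (f ⟨a, h⟩ : ℕ) by
    have := H r r.isLt
    simpa using this
  intro a
  induction a with
  | zero => intro h; exact Nat.zero_le _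
  | succ a iha =>
    intro h
    have h' : a < m := Nat.lt_of_succ_lt h
    have hlt : f ⟨a, h'⟩ < f ⟨a+1, h⟩ := hf (by simp [Fin.lt_def])
    have := iha h'
    rw [Fin.lt_def] at hlt
    omega


lemma filter_eq_image {n m : ℕ} (hmn : m ≤ n) :
    Finset.univ.filter (fun i : Fin n => (i:ℕ) < m)
      = Finset.univ.image (Fin.castLE hmn) := by
  ext i
  simp only [Finset.mem_filter, Finset.mem_univ, true_and, Finset.mem_image]
  constructor
  · intro h; exact ⟨⟨(i:ℕ), h⟩, Fin.ext rfl⟩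
  · rintro ⟨r, rfl⟩; exact r.isLt

lemma anti_bound {n : ℕ} (w : Fin n → ℝ) (hw : Antitone w) (B : Finset (Fin n)) :
    ∑ i ∈ B, w i ≤ ∑ i ∈ Finset.univ.filter (fun i : Fin n => (i:ℕ) < B.card), w i := by
  classical
  have hmn : B.card ≤ n := by
    have := Finset.card_le_card (Finset.subset_univ B)
    simpa using this
  set m := B.card with hm
  set f : Fin m ↪o Fin n := B.orderEmbOfFin hm.symm with hf
  have hBim : B = Finset.univ.image f := by
    ext b
    simp only [Finset.mem_image, Finset.mem_univ, true_and]
    constructor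
    · intro hb
      have : b ∈ Set.range f := by
        rw [Finset.range_orderEmbOfFin]; exact hb
      obtain ⟨r, hr⟩ := this
      exact ⟨r, hr⟩
    · rintro ⟨r, rfl⟩
      exact Finset.orderEmbOfFin_mem B hm.symm r
  rw [hBim, Finset.sum_image (fun a _ b _ h => f.injective h),
    filter_eq_image hmn, Finset.sum_image (fun a _ b _ h => Fin.castLE_injective hmn h)]
  apply Finset.sum_le_sum
  intro r _
  apply hw
  have := le_val_of_strictMono f f.strictMono r
  rw [Fin.le_def]
  simpa using this

lemma card_filter_lt {n m : ℕ} : (Finset.univ.filter (fun i : Fin n => (i:ℕ) < m)).card ≤ m := by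
  have := Finset.card_le_card_of_injOn (s := Finset.univ.filter (fun i : Fin n => (i:ℕ) < m)) (t := Finset.range m) (fun i : Fin n => (i:ℕ))
    (fun i hi => Finset.mem_range.mpr (by simpa using (Finset.mem_filter.mp hi).2))
    (fun a _ b _ h => Fin.ext h)
  simpa using this

lemma card_filter_lt_eq {n m : ℕ} (hmn : m ≤ n) :
    (Finset.univ.filter (fun i : Fin n => (i:ℕ) < m)).card = m := by
  rw [filter_eq_image hmn, Finset.card_image_of_injective _ (Fin.castLE_injective hmn)]
  simp

lemma key_s8 (k : ℕ) (hk2 : 2 ≤ k) (n : ℕ) (hkn : k ≤ n) :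
    ∀ d : ℕ, ∀ x z : Fin n → ℝ, Antitone x → (∀ i, 0 < x i) → (∀ i, 0 < z i) →
    (∀ m : ℕ, ∑ i ∈ Finset.univ.filter (fun i : Fin n => (i:ℕ) < m), x i
      ≤ ∑ i ∈ Finset.univ.filter (fun i : Fin n => (i:ℕ) < m), z i) →
    (∑ i, x i = ∑ i, z i) →
    (Finset.univ.filter (fun l => x l ≠ z l)).card ≤ d →
    x ≠ z → esymm n k z < esymm n k x := by
  classical
  intro d
  induction d with
  | zero =>
    intro x z _ _ _ _ _ hcard hne
    exfalso
    apply hne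
    funext l
    by_contra hl
    have : l ∈ Finset.univ.filter (fun l => x l ≠ z l) := by simp [hl]
    have h0 := Finset.card_eq_zero.mp (Nat.le_zero.mp hcard)
    rw [h0] at this
    exact absurd this (Finset.notMem_empty l)
  | succ d ih =>
    intro x z hax hx hz hP hsum hcard hne
    -- there is an index where z < x
    have hex : ∃ l, z l < x l := by
      by_contra h
      push_neg at h
      apply hne
      funext l
      by_contra hl
      have hlt : ∑ i, x i < ∑ i, z i :=
        Finset.sum_lt_sum (fun i _ => h i) ⟨l, Finset.mem_univ l, lt_of_le_of_ne (h l) hl⟩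
      linarith
    set J := Finset.univ.filter (fun l => z l < x l) with hJ
    have hJne : J.Nonempty := ⟨hex.choose, by simp [hJ, hex.choose_spec]⟩
    set j := J.min' hJne with hj
    have hjP : z j < x j := (Finset.mem_filter.mp (J.min'_mem hJne)).2
    have hjmin : ∀ l, l < j → x l ≤ z l := by
      intro l hl
      by_contra h
      push_neg at h
      have : j ≤ l := J.min'_le l (by rw [hJ, Finset.mem_filter]; exact ⟨Finset.mem_univ l, h⟩)
      exact absurd hl (not_lt.mpr this)
    set I := Finset.univ.filter (fun l => l < j ∧ x l < z l) with hI
    have hIne : I.Nonempty := by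
      by_contra h
      rw [Finset.not_nonempty_iff_eq_empty] at h
      have heq : ∀ l, l < j → x l = z l := by
        intro l hl
        rcases lt_or_eq_of_le (hjmin l hl) with h' | h'
        · exfalso
          have : l ∈ I := by rw [hI, Finset.mem_filter]; exact ⟨Finset.mem_univ l, hl, h'⟩
          rw [h] at this
          exact absurd this (Finset.notMem_empty l)
        · exact h'
      have h1 := hP ((j:ℕ)+1)
      set A := Finset.univ.filter (fun i : Fin n => (i:ℕ) < (j:ℕ)+1) with hA
      have hjA : j ∈ A := by rw [hA, Finset.mem_filter]; exact ⟨Finset.mem_univ j, by omega⟩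
      have e1 : x j + ∑ i ∈ A.erase j, x i = ∑ i ∈ A, x i := Finset.add_sum_erase A x hjA
      have e2 : z j + ∑ i ∈ A.erase j, z i = ∑ i ∈ A, z i := Finset.add_sum_erase A z hjA
      have e3 : ∑ i ∈ A.erase j, x i = ∑ i ∈ A.erase j, z i := by
        apply Finset.sum_congr rfl
        intro l hl
        have hlj : l ≠ j := Finset.ne_of_mem_erase hl
        have hlA := Finset.mem_of_mem_erase hl
        rw [hA, Finset.mem_filter] at hlA
        have hv : (l:ℕ) ≠ (j:ℕ) := fun hh => hlj (Fin.ext hh)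
        have hlt : l < j := by rw [Fin.lt_def]; have := hlA.2; omega
        exact heq l hlt
      linarith
    set i := I.max' hIne with hi
    have hiP : i < j ∧ x i < z i := (Finset.mem_filter.mp (I.max'_mem hIne)).2
    obtain ⟨hij, hxz_i⟩ := hiP
    have hmid : ∀ l, i < l → l < j → x l = z l := by
      intro l h1 h2
      rcases lt_or_eq_of_le (hjmin l h2) with h' | h'
      · exfalso
        have : l ≤ i := I.le_max' l (by rw [hI, Finset.mem_filter]; exact ⟨Finset.mem_univ l, h2, h'⟩)
        exact absurd h1 (not_lt.mpr this)
      · exact h'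
    have hne_ij : i ≠ j := ne_of_lt hij
    set δ := min (z i - x i) (x j - z j) with hδ
    have hδpos : 0 < δ := lt_min (by linarith) (by linarith)
    have hδ1 : δ ≤ z i - x i := min_le_left _ _
    have hδ2 : δ ≤ x j - z j := min_le_right _ _
    set y' : Fin n → ℝ := Function.update (Function.update z i (z i - δ)) j (z j + δ) with hy'
    have hyi : y' i = z i - δ := by
      rw [hy', Function.update_of_ne hne_ij, Function.update_self]
    have hyj : y' j = z j + δ := by rw [hy', Function.update_self]
    have hyl : ∀ l, l ≠ i → l ≠ j → y' l = z l := by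
      intro l h1 h2
      rw [hy', Function.update_of_ne h2, Function.update_of_ne h1]
    have hxij : x j ≤ x i := hax (le_of_lt hij)
    have hgap : δ ≤ z i - z j - δ := by
      rcases min_cases (z i - x i) (x j - z j) with ⟨h1, h2⟩ | ⟨h1, h2⟩ <;>
        rw [hδ, h1] <;> linarith
    have hy'pos : ∀ l, 0 < y' l := by
      intro l
      rcases eq_or_ne l i with rfl | h1
      · rw [hyi]; linarith [hx i]
      rcases eq_or_ne l j with rfl | h2
      · rw [hyj]; linarith [hz j]
      · rw [hyl l h1 h2]; exact hz l
    have hval : ∀ l, y' l = z l + ((if l = i then -δ else 0) + (if l = j then δ else 0)) := by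
      intro l
      rcases eq_or_ne l i with rfl | h1
      · rw [hyi, if_pos rfl, if_neg hne_ij]; ring
      rcases eq_or_ne l j with rfl | h2
      · rw [hyj, if_neg h1, if_pos rfl]; ring
      · rw [hyl l h1 h2, if_neg h1, if_neg h2]; ring
    have hsumA : ∀ A : Finset (Fin n), ∑ l ∈ A, y' l
        = ∑ l ∈ A, z l + ((if i ∈ A then -δ else 0) + (if j ∈ A then δ else 0)) := by
      intro A
      rw [Finset.sum_congr rfl (fun l _ => hval l), Finset.sum_add_distrib,
        Finset.sum_add_distrib, Finset.sum_ite_eq' A i (fun _ => -δ),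
        Finset.sum_ite_eq' A j (fun _ => δ)]
    have hsum' : ∑ l, x l = ∑ l, y' l := by
      rw [hsumA Finset.univ, if_pos (Finset.mem_univ i), if_pos (Finset.mem_univ j)]
      linarith
    have hP' : ∀ m : ℕ, ∑ l ∈ Finset.univ.filter (fun i : Fin n => (i:ℕ) < m), x l
        ≤ ∑ l ∈ Finset.univ.filter (fun i : Fin n => (i:ℕ) < m), y' l := by
      intro m
      have hPm := hP m
      set A := Finset.univ.filter (fun i : Fin n => (i:ℕ) < m) with hA
      have hmemA : ∀ l : Fin n, l ∈ A ↔ (l:ℕ) < m := by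
        intro l; rw [hA, Finset.mem_filter]; simp
      rw [hsumA A]
      by_cases hjm : (j:ℕ) < m
      · have hij' : (i:ℕ) < (j:ℕ) := hij
        rw [if_pos ((hmemA i).mpr (by omega)), if_pos ((hmemA j).mpr hjm)]
        linarith
      · rw [if_neg (fun h => hjm ((hmemA j).mp h))]
        by_cases him : (i:ℕ) < m
        · have hiA : i ∈ A := (hmemA i).mpr him
          rw [if_pos hiA]
          have e1 : x i + ∑ l ∈ A.erase i, x l = ∑ l ∈ A, x l := Finset.add_sum_erase A x hiA
          have e2 : z i + ∑ l ∈ A.erase i, z l = ∑ l ∈ A, z l := Finset.add_sum_erase A z hiA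
          have e3 : ∑ l ∈ A.erase i, x l ≤ ∑ l ∈ A.erase i, z l := by
            apply Finset.sum_le_sum
            intro l hl
            have hlm : (l:ℕ) < m := (hmemA l).mp (Finset.mem_of_mem_erase hl)
            have hjm' : (j:ℕ) ≥ m := le_of_not_gt hjm
            have : l < j := by rw [Fin.lt_def]; omega
            exact hjmin l this
          linarith
        · rw [if_neg (fun h => him ((hmemA i).mp h))]
          linarith
    -- cardinality decreases
    set D := Finset.univ.filter (fun l => x l ≠ z l) with hD
    have hiD : i ∈ D := by rw [hD, Finset.mem_filter]; exact ⟨Finset.mem_univ i, ne_of_lt hxz_i⟩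
    have hjD : j ∈ D := by rw [hD, Finset.mem_filter]; exact ⟨Finset.mem_univ j, ne_of_gt hjP⟩
    have hw : ∃ w, w ∈ D ∧ x w = y' w := by
      rcases min_cases (z i - x i) (x j - z j) with ⟨h1, _⟩ | ⟨h1, _⟩
      · exact ⟨i, hiD, by rw [hyi, hδ, h1]; ring⟩
      · exact ⟨j, hjD, by rw [hyj, hδ, h1]; ring⟩
    obtain ⟨w, hwD, hwy⟩ := hw
    have hsub : Finset.univ.filter (fun l => x l ≠ y' l) ⊆ D.erase w := by
      intro l hl
      rw [Finset.mem_filter] at hl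
      have hl := hl.2
      rw [Finset.mem_erase]
      constructor
      · intro h; rw [h] at hl; exact hl hwy
      · rw [hD, Finset.mem_filter]
        refine ⟨Finset.mem_univ l, ?_⟩
        rcases eq_or_ne l i with rfl | h1
        · exact ne_of_lt hxz_i
        rcases eq_or_ne l j with rfl | h2
        · exact ne_of_gt hjP
        · rw [← hyl l h1 h2]; exact hl
    have hcard' : (Finset.univ.filter (fun l => x l ≠ y' l)).card ≤ d := by
      have h1 := Finset.card_le_card hsub
      rw [Finset.card_erase_of_mem hwD] at h1
      omega
    -- esymm strictly increases from z to y'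
    set t : Multiset (Fin n) := ((Finset.univ.erase i).erase j).val with ht
    have hjmem : j ∈ Finset.univ.erase i :=
      Finset.mem_erase.mpr ⟨hne_ij.symm, Finset.mem_univ j⟩
    have hu2 : j ::ₘ t = (Finset.univ.erase i).val := by
      rw [ht, Finset.erase_val]
      exact Multiset.cons_erase (by rwa [Finset.mem_val])
    have hu1 : i ::ₘ (Finset.univ.erase i).val = (Finset.univ : Finset (Fin n)).val := by
      rw [Finset.erase_val]
      exact Multiset.cons_erase (by rw [Finset.mem_val]; exact Finset.mem_univ i)
    have huniv : (Finset.univ : Finset (Fin n)).val = i ::ₘ j ::ₘ t := by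
      rw [← hu1, ← hu2]
    have htmem : ∀ l ∈ t, l ≠ i ∧ l ≠ j := by
      intro l hl
      rw [ht, Finset.mem_val, Finset.mem_erase] at hl
      have := Finset.mem_erase.mp hl.2
      exact ⟨this.1, hl.1⟩
    have hmapz : Multiset.map z Finset.univ.val = z i ::ₘ z j ::ₘ Multiset.map z t := by
      rw [huniv, Multiset.map_cons, Multiset.map_cons]
    have hmapy' : Multiset.map y' Finset.univ.val
        = (z i - δ) ::ₘ (z j + δ) ::ₘ Multiset.map z t := by
      rw [huniv, Multiset.map_cons, Multiset.map_cons, hyi, hyj]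
      congr 1
      congr 1
      apply Multiset.map_congr rfl
      intro l hl
      exact hyl l (htmem l hl).1 (htmem l hl).2
    have hcard_t : Multiset.card t = n - 2 := by
      have h1 : Multiset.card t = ((Finset.univ.erase i).erase j).card := rfl
      rw [h1, Finset.card_erase_of_mem hjmem, Finset.card_erase_of_mem (Finset.mem_univ i)]
      simp only [Finset.card_univ, Fintype.card_fin]
      omega
    obtain ⟨m, hkm⟩ : ∃ m, k = m + 2 := ⟨k - 2, by omega⟩
    have hEpos : 0 < (Multiset.map z t).esymm m := by
      apply ms_esymm_pos
      · intro a ha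
        obtain ⟨l, _, rfl⟩ := Multiset.mem_map.mp ha
        exact hz l
      · rw [Multiset.card_map, hcard_t]; omega
    have hlt : esymm n k z < esymm n k y' := by
      rw [esymm_eq_ms, esymm_eq_ms, hmapz, hmapy', hkm, ms_esymm_cons2, ms_esymm_cons2]
      have h9 : (z i - δ) * (z j + δ) - z i * z j = δ * (z i - z j - δ) := by ring
      have h10 : δ * δ ≤ δ * (z i - z j - δ) := mul_le_mul_of_nonneg_left hgap hδpos.le
      have h11 : 0 < δ * δ := mul_pos hδpos hδpos
      have h12 : 0 < (δ * (z i - z j - δ)) * (Multiset.map z t).esymm m :=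
        mul_pos (by linarith) hEpos
      have h13 : (z i - δ) + (z j + δ) = z i + z j := by ring
      nlinarith [hEpos]
    rcases eq_or_ne x y' with heq | hne'
    · rw [heq]; exact hlt
    · exact lt_trans hlt (ih x y' hax hx hy'pos hP' hsum' hcard' hne')

/-- If `x ≺ y` (majorization, expressed by equality of total sums together with:
for every subset `A` there is a subset `B` of the same cardinality with
`∑_{A} x ≤ ∑_{B} y`) and `e_k(x) = e_k(y)` for some `k ∈ {2,…,n}`, then `x` is a
rearrangement of `y`, i.e. the decreasing rearrangements coincide. -/
theorem majorization_and_esymm_eq_implies_rearrangement (n : ℕ) (x y : Fin n → ℝ)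
    (hx : ∀ i, 0 < x i) (hy : ∀ i, 0 < y i)
    (hsum : ∑ i, x i = ∑ i, y i)
    (hmaj : ∀ A : Finset (Fin n), ∃ B : Finset (Fin n),
      B.card = A.card ∧ ∑ i ∈ A, x i ≤ ∑ i ∈ B, y i)
    (k : ℕ) (hk2 : 2 ≤ k) (hkn : k ≤ n)
    (he : esymm n k x = esymm n k y) :
    ∃ σ : Equiv.Perm (Fin n), x = y ∘ σ := by
  classical
  set τx : Equiv.Perm (Fin n) := Fin.revPerm.trans (Tuple.sort x) with hτx
  set τy : Equiv.Perm (Fin n) := Fin.revPerm.trans (Tuple.sort y) with hτy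
  set X : Fin n → ℝ := x ∘ τx with hX
  set Y : Fin n → ℝ := y ∘ τy with hY
  have hrev : Antitone (Fin.rev : Fin n → Fin n) := fun a b h => Fin.rev_le_rev.mpr h
  have hAX : Antitone X := by
    have : X = (x ∘ Tuple.sort x) ∘ (Fin.rev : Fin n → Fin n) := rfl
    rw [this]
    exact (Tuple.monotone_sort x).comp_antitone hrev
  have hAY : Antitone Y := by
    have : Y = (y ∘ Tuple.sort y) ∘ (Fin.rev : Fin n → Fin n) := rfl
    rw [this]
    exact (Tuple.monotone_sort y).comp_antitone hrev
  have hXpos : ∀ i, 0 < X i := fun i => hx _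
  have hYpos : ∀ i, 0 < Y i := fun i => hy _
  have hsumX : ∑ i, X i = ∑ i, x i := Equiv.sum_comp τx x
  have hsumY : ∑ i, Y i = ∑ i, y i := Equiv.sum_comp τy y
  have hsumXY : ∑ i, X i = ∑ i, Y i := by rw [hsumX, hsumY, hsum]
  have heXY : esymm n k X = esymm n k Y := by
    rw [hX, hY, esymm_comp, esymm_comp, he]
  have hPXY : ∀ m : ℕ, ∑ i ∈ Finset.univ.filter (fun i : Fin n => (i:ℕ) < m), X i
      ≤ ∑ i ∈ Finset.univ.filter (fun i : Fin n => (i:ℕ) < m), Y i := by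
    intro m
    set A := Finset.univ.filter (fun i : Fin n => (i:ℕ) < m) with hA
    obtain ⟨B, hBc, hB⟩ := hmaj (A.image τx)
    have e1 : ∑ i ∈ A.image τx, x i = ∑ i ∈ A, X i :=
      Finset.sum_image (fun a _ b _ h => τx.injective h)
    have e2 : ∑ i ∈ B, y i = ∑ i ∈ B.image τy.symm, Y i := by
      rw [Finset.sum_image (fun a _ b _ h => τy.symm.injective h)]
      apply Finset.sum_congr rfl
      intro b _
      show y b = Y (τy.symm b)
      rw [hY]
      show y b = y (τy (τy.symm b))
      rw [Equiv.apply_symm_apply]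
    have e3 : ∑ i ∈ B.image τy.symm, Y i
        ≤ ∑ i ∈ Finset.univ.filter (fun i : Fin n => (i:ℕ) < (B.image τy.symm).card), Y i :=
      anti_bound Y hAY _
    have e4 : (B.image τy.symm).card = A.card := by
      rw [Finset.card_image_of_injective _ τy.symm.injective, hBc,
        Finset.card_image_of_injective _ τx.injective]
    have e5 : Finset.univ.filter (fun i : Fin n => (i:ℕ) < (B.image τy.symm).card) ⊆ A := by
      intro l hl
      rw [Finset.mem_filter] at hl
      rw [hA, Finset.mem_filter]
      refine ⟨Finset.mem_univ l, ?_⟩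
      have h6 : A.card ≤ m := by rw [hA]; exact card_filter_lt
      have := hl.2
      rw [e4] at this
      omega
    have e6 : ∑ i ∈ Finset.univ.filter (fun i : Fin n => (i:ℕ) < (B.image τy.symm).card), Y i
        ≤ ∑ i ∈ A, Y i :=
      Finset.sum_le_sum_of_subset_of_nonneg e5 (fun l _ _ => (hYpos l).le)
    calc ∑ i ∈ A, X i = ∑ i ∈ A.image τx, x i := e1.symm
      _ ≤ ∑ i ∈ B, y i := hB
      _ = ∑ i ∈ B.image τy.symm, Y i := e2
      _ ≤ _ := e3
      _ ≤ ∑ i ∈ A, Y i := e6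
  have hXY : X = Y := by
    by_contra hne
    have := key_s8 k hk2 n hkn (Finset.univ.filter (fun l => X l ≠ Y l)).card X Y hAX hXpos hYpos
      hPXY hsumXY le_rfl hne
    linarith [heXY, this]
  refine ⟨τx.symm.trans τy, ?_⟩
  funext l
  show x l = y (τy (τx.symm l))
  have h1 : x l = X (τx.symm l) := by
    rw [hX]
    show x l = x (τx (τx.symm l))
    rw [Equiv.apply_symm_apply]
  rw [h1, hXY]
  rfl
end

section
/- For x, y ∈ ℝ₊ⁿ with x majorized by y (x ≺ y), one has e_k(x) ≥ e_k(y) for every k ∈ {1,…,n}, where e_k denotes the k-th elementary symmetric polynomial. -/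
open Real

namespace EsymmMajAux
open Finset

/-! ### Partial sums of the first `m` coordinates -/

def S (n m : ℕ) (u : Fin n → ℝ) : ℝ :=
  ∑ i ∈ Finset.univ.filter (fun i : Fin n => (i : ℕ) < m), u i

lemma S_zero (n : ℕ) (u : Fin n → ℝ) : S n 0 u = 0 := by simp [S]

lemma S_succ (n m : ℕ) (u : Fin n → ℝ) :
    S n (m + 1) u = S n m u + (if h : m < n then u ⟨m, h⟩ else 0) := by
  by_cases h : m < n
  · rw [dif_pos h]
    have hins : Finset.univ.filter (fun i : Fin n => (i : ℕ) < m + 1)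
        = insert ⟨m, h⟩ (Finset.univ.filter (fun i : Fin n => (i : ℕ) < m)) := by
      ext i
      simp only [mem_filter, mem_univ, true_and, mem_insert]
      constructor
      · intro hi
        rcases Nat.lt_succ_iff_lt_or_eq.1 hi with h' | h'
        · exact Or.inr h'
        · exact Or.inl (Fin.ext h')
      · rintro (rfl | h')
        · exact Nat.lt_succ_self m
        · exact Nat.lt_succ_of_lt h'
    rw [S, hins, Finset.sum_insert (by simp), S]; ring
  · rw [dif_neg h]
    have : ∀ i : Fin n, ((i : ℕ) < m + 1) = ((i : ℕ) < m) := by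
      intro i
      have : (i : ℕ) < m := lt_of_lt_of_le i.isLt (Nat.le_of_not_lt h)
      simp [this, Nat.lt_succ_of_lt this]
    simp only [S, this, add_zero]

lemma S_univ (n : ℕ) (u : Fin n → ℝ) : S n n u = ∑ i, u i := by
  rw [S]
  congr 1
  ext i; simp [i.isLt]

lemma S_stable (n m : ℕ) (h : n ≤ m) (u : Fin n → ℝ) : S n m u = S n n u := by
  induction m with
  | zero =>
    have : n = 0 := Nat.le_zero.1 h
    subst this; rfl
  | succ m ih =>
    rcases Nat.lt_or_ge n (m+1) with h' | h'
    · have hn : n ≤ m := by omega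
      rw [S_succ, dif_neg (by omega), add_zero, ih hn]
    · have : n = m + 1 := le_antisymm h h'
      subst this; rfl

lemma S_update (n m : ℕ) (u : Fin n → ℝ) (a : Fin n) (c : ℝ) :
    S n m (Function.update u a c) = S n m u + (if (a : ℕ) < m then c - u a else 0) := by
  induction m with
  | zero => simp [S_zero]
  | succ m ih =>
    rw [S_succ, S_succ, ih]
    by_cases h : m < n
    · rw [dif_pos h, dif_pos h]
      by_cases ha : (a : ℕ) = m
      · have : a = ⟨m, h⟩ := Fin.ext ha
        subst this
        rw [if_neg (by omega), if_pos (by omega), Function.update_self]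
        ring
      · rw [Function.update_of_ne (fun hc => ha (by rw [← hc]))]
        by_cases h2 : (a : ℕ) < m
        · rw [if_pos h2, if_pos (by omega)]; ring
        · rw [if_neg h2, if_neg (by omega)]; ring
    · rw [dif_neg h, dif_neg h]
      have : (a : ℕ) < m := lt_of_lt_of_le a.isLt (Nat.le_of_not_lt h)
      rw [if_pos this, if_pos (by omega)]; ring

lemma Stail {n : ℕ} (x y : Fin n → ℝ) (m0 : ℕ)
    (heq : ∀ i : Fin n, m0 ≤ (i : ℕ) → x i = y i) :
    ∀ m, m0 ≤ m → S n m y - S n m0 y = S n m x - S n m0 x := by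
  intro m
  induction m with
  | zero =>
    intro h
    have : m0 = 0 := Nat.le_zero.1 h
    subst this; ring
  | succ m ihm =>
    intro h
    rcases Nat.eq_or_lt_of_le h with heq' | hlt
    · rw [← heq']; ring
    · have hm : m0 ≤ m := by omega
      rw [S_succ, S_succ]
      by_cases hn : m < n
      · rw [dif_pos hn, dif_pos hn, heq ⟨m, hn⟩ (by simpa using hm)]
        have := ihm hm; linarith
      · rw [dif_neg hn, dif_neg hn]
        have := ihm hm; linarith

/-! ### Sums over sets are at most the top partial sums, for antitone tuples -/

lemma filter_lt_eq_map (n m : ℕ) (h : m ≤ n) :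
    Finset.univ.filter (fun i : Fin n => (i : ℕ) < m)
      = Finset.univ.map (Fin.castLEEmb h) := by
  ext i
  simp only [mem_filter, mem_univ, true_and, mem_map]
  constructor
  · intro hi
    exact ⟨⟨(i : ℕ), hi⟩, by ext; simp⟩
  · rintro ⟨j, rfl⟩
    simpa using j.isLt

lemma card_filter_lt (n m : ℕ) (h : m ≤ n) :
    (Finset.univ.filter (fun i : Fin n => (i : ℕ) < m)).card = m := by
  rw [filter_lt_eq_map n m h, Finset.card_map, Finset.card_univ, Fintype.card_fin]

lemma le_orderEmbOfFin {n k : ℕ} (B : Finset (Fin n)) (h : B.card = k) (m : Fin k) :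
    (m : ℕ) ≤ (B.orderEmbOfFin h m : ℕ) := by
  obtain ⟨v, hv⟩ := m
  induction v with
  | zero => exact Nat.zero_le _
  | succ v ih =>
    have hv' : v < k := Nat.lt_of_succ_lt hv
    have h1 : B.orderEmbOfFin h ⟨v, hv'⟩ < B.orderEmbOfFin h ⟨v+1, hv⟩ :=
      (B.orderEmbOfFin h).strictMono (by simp [Fin.lt_def])
    have h3 := ih hv'
    have e1 : ((⟨v, hv'⟩ : Fin k) : ℕ) = v := rfl
    have e2 : ((⟨v+1, hv⟩ : Fin k) : ℕ) = v+1 := rfl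
    have h2 : ((B.orderEmbOfFin h ⟨v, hv'⟩ : Fin n) : ℕ)
        < ((B.orderEmbOfFin h ⟨v+1, hv⟩ : Fin n) : ℕ) := h1
    omega

lemma topsum {n : ℕ} {u : Fin n → ℝ} (hu : Antitone u) (B : Finset (Fin n))
    (k : ℕ) (hk : B.card = k) : ∑ i ∈ B, u i ≤ S n k u := by
  have hkn : k ≤ n := by rw [← hk]; simpa using B.card_le_univ
  have hmap : Finset.univ.map (B.orderEmbOfFin hk).toEmbedding = B := by
    ext i
    simp only [mem_map]
    constructor
    · rintro ⟨m, -, rfl⟩; exact B.orderEmbOfFin_mem hk m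
    · intro hi
      have : i ∈ Set.range (B.orderEmbOfFin hk) := by
        rw [Finset.range_orderEmbOfFin]; exact hi
      obtain ⟨m, hm⟩ := this
      exact ⟨m, mem_univ _, hm⟩
  rw [S, filter_lt_eq_map n k hkn, Finset.sum_map]
  conv_lhs => rw [← hmap, Finset.sum_map]
  apply Finset.sum_le_sum
  intro m _
  apply hu
  rw [Fin.le_def]
  simpa using le_orderEmbOfFin B hk m

/-! ### Elementary symmetric functions over subsets -/

def E {n : ℕ} (s : Finset (Fin n)) (m : ℕ) (u : Fin n → ℝ) : ℝ :=
  ∑ A ∈ s.powersetCard m, ∏ i ∈ A, u i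

lemma esymm_eq_E {n : ℕ} (m : ℕ) (u : Fin n → ℝ) : esymm n m u = E Finset.univ m u := rfl

lemma E_zero {n : ℕ} (s : Finset (Fin n)) (u : Fin n → ℝ) : E s 0 u = 1 := by simp [E]

lemma E_nonneg {n : ℕ} (s : Finset (Fin n)) (m : ℕ) {u : Fin n → ℝ}
    (hu : ∀ i, 0 ≤ u i) : 0 ≤ E s m u :=
  Finset.sum_nonneg fun _ _ => Finset.prod_nonneg fun i _ => hu i

lemma E_congr {n : ℕ} (s : Finset (Fin n)) (m : ℕ) {u v : Fin n → ℝ}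
    (h : ∀ i ∈ s, u i = v i) : E s m u = E s m v := by
  apply Finset.sum_congr rfl
  intro A hA
  exact Finset.prod_congr rfl fun i hi => h i ((Finset.mem_powersetCard.1 hA).1 hi)

lemma E_insert {n : ℕ} {s : Finset (Fin n)} {a : Fin n} (ha : a ∉ s) (m : ℕ)
    (u : Fin n → ℝ) :
    E (insert a s) (m + 1) u = E s (m + 1) u + u a * E s m u := by
  rw [E, Finset.powersetCard_succ_insert ha, Finset.sum_union]
  · congr 1
    rw [Finset.sum_image]
    · rw [E, Finset.mul_sum]
      apply Finset.sum_congr rfl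
      intro A hA
      have haA : a ∉ A := fun h => ha ((Finset.mem_powersetCard.1 hA).1 h)
      rw [Finset.prod_insert haA]
    · intro A hA B hB hAB
      have haA : a ∉ A := fun h => ha ((Finset.mem_powersetCard.1 hA).1 h)
      have haB : a ∉ B := fun h => ha ((Finset.mem_powersetCard.1 hB).1 h)
      rw [← Finset.erase_insert haA, ← Finset.erase_insert haB, hAB]
  · rw [Finset.disjoint_right]
    intro A hA hA'
    obtain ⟨B, hB, rfl⟩ := Finset.mem_image.1 hA
    have : a ∉ insert a B := fun h =>
      (Finset.mem_powersetCard.1 hA').1 h |> ha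
    exact this (Finset.mem_insert_self a B)

lemma esymm_comp_perm {n : ℕ} (m : ℕ) (u : Fin n → ℝ) (e : Equiv.Perm (Fin n)) :
    esymm n m (fun i => u (e i)) = esymm n m u := by
  unfold esymm
  apply Finset.sum_nbij' (i := fun A => A.image e) (j := fun A => A.image e.symm)
  · intro A hA
    rw [Finset.mem_powersetCard] at hA ⊢
    exact ⟨Finset.subset_univ _, by rw [Finset.card_image_of_injective _ e.injective, hA.2]⟩
  · intro A hA
    rw [Finset.mem_powersetCard] at hA ⊢
    exact ⟨Finset.subset_univ _, by rw [Finset.card_image_of_injective _ e.symm.injective, hA.2]⟩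
  · intro A _
    rw [Finset.image_image]
    simp
  · intro A _
    rw [Finset.image_image]
    simp
  · intro A _
    rw [Finset.prod_image (fun a _ b _ h => e.injective h)]

section split
variable {n : ℕ} {j k : Fin n}

lemma notMem_s : k ∉ (Finset.univ.erase j).erase k := Finset.notMem_erase _ _

lemma j_notMem (hjk : j ≠ k) : j ∉ insert k ((Finset.univ.erase j).erase k) := by
  simp [hjk, Finset.mem_erase]

lemma univ_eq (hjk : j ≠ k) :
    insert j (insert k ((Finset.univ.erase j).erase k)) = Finset.univ := by
  rw [Finset.insert_erase (by simp [Ne.symm hjk]), Finset.insert_erase (by simp)]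

lemma esymm_one (hjk : j ≠ k) (u : Fin n → ℝ) :
    esymm n 1 u = u j + u k + E ((Finset.univ.erase j).erase k) 1 u := by
  conv_lhs => rw [esymm_eq_E, ← univ_eq hjk]
  rw [show (1 : ℕ) = 0 + 1 from rfl]
  rw [E_insert (j_notMem hjk), E_insert (notMem_s), E_zero, E_zero]
  ring

lemma esymm_split (hjk : j ≠ k) (m : ℕ) (u : Fin n → ℝ) :
    esymm n (m + 2) u = E ((Finset.univ.erase j).erase k) (m + 2) u
      + (u j + u k) * E ((Finset.univ.erase j).erase k) (m + 1) u
      + (u j * u k) * E ((Finset.univ.erase j).erase k) m u := by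
  conv_lhs => rw [esymm_eq_E, ← univ_eq hjk]
  rw [show m + 2 = (m + 1) + 1 from rfl]
  rw [E_insert (j_notMem hjk), E_insert (notMem_s), E_insert (notMem_s)]
  ring

lemma esymm_step (hjk : j ≠ k) (y : Fin n → ℝ) (hy : ∀ i, 0 ≤ y i)
    (c d : ℝ) (hsum : c + d = y j + y k) (hprod : y j * y k ≤ c * d) (m : ℕ) :
    esymm n m y ≤ esymm n m (Function.update (Function.update y j c) k d) := by
  set y' := Function.update (Function.update y j c) k d with hy'
  have hy'j : y' j = c := by
    rw [hy', Function.update_of_ne hjk, Function.update_self]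
  have hy'k : y' k = d := by rw [hy', Function.update_self]
  have hoff : ∀ i ∈ (Finset.univ.erase j).erase k, y' i = y i := by
    intro i hi
    rw [Finset.mem_erase, Finset.mem_erase] at hi
    rw [hy', Function.update_of_ne hi.1, Function.update_of_ne hi.2.1]
  have hEs : ∀ m', E ((Finset.univ.erase j).erase k) m' y'
      = E ((Finset.univ.erase j).erase k) m' y :=
    fun m' => E_congr _ _ hoff
  match m with
  | 0 => rw [esymm_eq_E, esymm_eq_E, E_zero, E_zero]
  | 1 =>
    rw [esymm_one hjk, esymm_one hjk, hEs, hy'j, hy'k]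
    linarith
  | (m + 2) =>
    rw [esymm_split hjk, esymm_split hjk, hEs, hEs, hEs, hy'j, hy'k]
    have hE0 : 0 ≤ E ((Finset.univ.erase j).erase k) m y := E_nonneg _ _ hy
    have := mul_le_mul_of_nonneg_right hprod hE0
    rw [hsum]
    linarith

end split

/-! ### The key induction -/

lemma key {n : ℕ} (x : Fin n → ℝ) (hx : ∀ i, 0 < x i) (hxa : Antitone x) :
    ∀ N : ℕ, ∀ y : Fin n → ℝ,
      (Finset.univ.filter (fun i => x i ≠ y i)).card ≤ N →
      (∀ i, 0 < y i) → Antitone y →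
      (∀ m, S n m x ≤ S n m y) → S n n x = S n n y →
      ∀ m, esymm n m y ≤ esymm n m x := by
  intro N
  induction N with
  | zero =>
    intro y hcard _ _ _ _ m
    have hempty : (Finset.univ.filter (fun i => x i ≠ y i)) = ∅ :=
      Finset.card_eq_zero.1 (Nat.le_zero.1 hcard)
    have hall : ∀ i, x i = y i := by
      intro i
      by_contra h
      have : i ∈ Finset.univ.filter (fun i => x i ≠ y i) :=
        Finset.mem_filter.2 ⟨Finset.mem_univ _, h⟩
      rw [hempty] at this
      exact absurd this (Finset.notMem_empty i)
    rw [show y = x from funext fun i => (hall i).symm]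
  | succ N ih =>
    intro y hcard hy hya hle htot m
    by_cases hxy : ∀ i, x i = y i
    · rw [show y = x from funext fun i => (hxy i).symm]
    obtain ⟨i0, hi0⟩ := not_forall.1 hxy
    -- the largest index where x < y
    have hne1 : (Finset.univ.filter fun i => x i < y i).Nonempty := by
      by_contra h
      rw [Finset.not_nonempty_iff_eq_empty, Finset.filter_eq_empty_iff] at h
      have hyx : ∀ i, y i ≤ x i := fun i => le_of_not_gt (h (Finset.mem_univ i))
      have hlt : ∑ i, y i < ∑ i, x i :=
        Finset.sum_lt_sum (fun i _ => hyx i)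
          ⟨i0, Finset.mem_univ _, lt_of_le_of_ne (hyx i0) fun h' => hi0 h'.symm⟩
      rw [S_univ, S_univ] at htot
      linarith
    set j := (Finset.univ.filter fun i => x i < y i).max' hne1 with hjdef
    have hjmem := (Finset.univ.filter fun i => x i < y i).max'_mem hne1
    rw [Finset.mem_filter] at hjmem
    have hj1 : x j < y j := hjmem.2
    have hj2 : ∀ i, j < i → y i ≤ x i := by
      intro i hi
      by_contra h
      have hmem : i ∈ Finset.univ.filter fun i => x i < y i :=
        Finset.mem_filter.2 ⟨Finset.mem_univ _, lt_of_not_ge h⟩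
      exact absurd (Finset.le_max' _ i hmem) (not_le.2 hi)
    -- the smallest index above j where y < x
    have hne2 : (Finset.univ.filter fun i => j < i ∧ y i < x i).Nonempty := by
      by_contra h
      rw [Finset.not_nonempty_iff_eq_empty, Finset.filter_eq_empty_iff] at h
      have heq : ∀ i : Fin n, (j : ℕ) + 1 ≤ (i : ℕ) → x i = y i := by
        intro i hi
        have hji : j < i := by rw [Fin.lt_def]; omega
        have h1 := hj2 i hji
        have h2 : ¬ (j < i ∧ y i < x i) := h (Finset.mem_univ i)
        have h3 : ¬ y i < x i := fun hc => h2 ⟨hji, hc⟩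
        linarith [le_of_not_gt h3]
      have htail := Stail x y ((j : ℕ) + 1) heq n (Nat.succ_le_of_lt j.isLt)
      have hsx : S n ((j : ℕ) + 1) x = S n (j : ℕ) x + x j := by
        rw [S_succ, dif_pos j.isLt]
      have hsy : S n ((j : ℕ) + 1) y = S n (j : ℕ) y + y j := by
        rw [S_succ, dif_pos j.isLt]
      have := hle (j : ℕ)
      linarith
    set k := (Finset.univ.filter fun i => j < i ∧ y i < x i).min' hne2 with hkdef
    have hkmem := (Finset.univ.filter fun i => j < i ∧ y i < x i).min'_mem hne2
    rw [Finset.mem_filter] at hkmem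
    have hjk1 : j < k := hkmem.2.1
    have hk2 : y k < x k := hkmem.2.2
    have hk3 : ∀ i, j < i → i < k → x i = y i := by
      intro i h1 h2
      have h4 := hj2 i h1
      have hnot : ¬ y i < x i := fun hc =>
        absurd (Finset.min'_le _ i (Finset.mem_filter.2 ⟨Finset.mem_univ _, h1, hc⟩))
          (not_le.2 h2)
      linarith [le_of_not_gt hnot]
    set δ := min (y j - x j) (x k - y k) with hδdef
    have hδ : 0 < δ := lt_min (by linarith) (by linarith)
    have hδ1 : δ ≤ y j - x j := min_le_left _ _
    have hδ2 : δ ≤ x k - y k := min_le_right _ _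
    set c := y j - δ with hc
    set d := y k + δ with hd
    have hjk : j ≠ k := ne_of_lt hjk1
    set y2 := Function.update (Function.update y j c) k d with hy2
    have hy2j : y2 j = c := by
      rw [hy2, Function.update_of_ne hjk, Function.update_self]
    have hy2k : y2 k = d := by rw [hy2, Function.update_self]
    have hy2off : ∀ i, i ≠ j → i ≠ k → y2 i = y i := fun i h1 h2 => by
      rw [hy2, Function.update_of_ne h2, Function.update_of_ne h1]
    have hxjc : x j ≤ c := by linarith
    have hcyj : c ≤ y j := by linarith
    have hykd : y k ≤ d := by linarith
    have hdxk : d ≤ x k := by linarith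
    have hxkj : x k ≤ x j := hxa (le_of_lt hjk1)
    have hdc : d ≤ c := by linarith
    have hy2pos : ∀ i, 0 < y2 i := by
      intro i
      by_cases h1 : i = j
      · rw [h1, hy2j]; linarith [hx j]
      by_cases h2 : i = k
      · rw [h2, hy2k]; linarith [hy k]
      rw [hy2off i h1 h2]; exact hy i
    have hy2a : Antitone y2 := by
      intro a b hab
      rcases eq_or_lt_of_le hab with rfl | hab'
      · exact le_refl _
      by_cases hbj : b = j
      · subst hbj
        have haj : a ≠ j := ne_of_lt hab'
        have hak : a ≠ k := ne_of_lt (lt_trans hab' hjk1)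
        rw [hy2off a haj hak, hy2j]
        exact le_trans hcyj (hya hab'.le)
      by_cases hbk : b = k
      · subst hbk
        rw [hy2k]
        by_cases haj : a = j
        · subst haj; rw [hy2j]; exact hdc
        have hak : a ≠ k := ne_of_lt hab'
        rw [hy2off a haj hak]
        rcases lt_trichotomy a j with h | h | h
        · exact le_trans hdc (le_trans hcyj (hya h.le))
        · exact absurd h haj
        · rw [← hk3 a h hab']
          exact le_trans hdxk (hxa hab'.le)
      rw [hy2off b hbj hbk]
      by_cases haj : a = j
      · subst haj
        rw [hy2j]
        rcases lt_trichotomy b k with h | h | h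
        · rw [← hk3 b hab' h]
          exact le_trans (hxa hab'.le) hxjc
        · exact absurd h hbk
        · exact le_trans (hya h.le) (le_trans hykd hdc)
      by_cases hak : a = k
      · subst hak
        rw [hy2k]
        exact le_trans (hya hab'.le) hykd
      · rw [hy2off a haj hak]
        exact hya hab
    have hupd : ∀ m', S n m' y2 = S n m' y + (if (k : ℕ) < m' then d - y k else 0)
        + (if (j : ℕ) < m' then c - y j else 0) := by
      intro m'
      rw [hy2, S_update, Function.update_of_ne (Ne.symm hjk), S_update]
      ring
    have hcl : ∀ m', (j : ℕ) < m' → m' ≤ (k : ℕ) → S n m' x + δ ≤ S n m' y := by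
      intro m'
      induction m' with
      | zero => omega
      | succ m' ihm =>
        intro h1 h2
        rcases Nat.lt_or_ge (j : ℕ) m' with hjm | hjm
        · have hm'n : m' < n := lt_of_lt_of_le (by omega) (le_of_lt k.isLt)
          have heqm : x ⟨m', hm'n⟩ = y ⟨m', hm'n⟩ := by
            apply hk3
            · rw [Fin.lt_def]; exact hjm
            · rw [Fin.lt_def]; simpa using (by omega : m' < (k : ℕ))
          rw [S_succ, S_succ, dif_pos hm'n, dif_pos hm'n, heqm]
          have := ihm hjm (by omega)
          linarith
        · have hjm' : (j : ℕ) = m' := by omega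
          have hm'n : m' < n := hjm' ▸ j.isLt
          have hfin : (⟨m', hm'n⟩ : Fin n) = j := Fin.ext hjm'.symm
          rw [S_succ, S_succ, dif_pos hm'n, dif_pos hm'n, hfin]
          have h5 := hle m'
          linarith
    have hle2 : ∀ m', S n m' x ≤ S n m' y2 := by
      intro m'
      by_cases h1 : (j : ℕ) < m'
      · by_cases h2 : (k : ℕ) < m'
        · rw [hupd m', if_pos h2, if_pos h1]
          have := hle m'
          linarith
        · rw [hupd m', if_neg h2, if_pos h1]
          have := hcl m' h1 (by omega)
          linarith
      · have h2 : ¬ (k : ℕ) < m' := by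
          have := hjk1
          rw [Fin.lt_def] at this
          omega
        rw [hupd m', if_neg h2, if_neg h1]
        simpa using hle m'
    have htot2 : S n n x = S n n y2 := by
      rw [hupd n, if_pos k.isLt, if_pos j.isLt]
      linarith
    have hsub : (Finset.univ.filter (fun i => x i ≠ y2 i))
        ⊆ (Finset.univ.filter (fun i => x i ≠ y i)) := by
      intro i hi
      rw [Finset.mem_filter] at hi ⊢
      refine ⟨Finset.mem_univ _, ?_⟩
      by_cases h1 : i = j
      · subst h1; exact ne_of_lt hj1
      by_cases h2 : i = k
      · subst h2; exact ne_of_gt hk2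
      · rw [← hy2off i h1 h2]; exact hi.2
    have hltcard : (Finset.univ.filter (fun i => x i ≠ y2 i)).card
        < (Finset.univ.filter (fun i => x i ≠ y i)).card := by
      apply Finset.card_lt_card
      rw [Finset.ssubset_iff_of_subset hsub]
      rcases le_total (y j - x j) (x k - y k) with hmin | hmin
      · refine ⟨j, Finset.mem_filter.2 ⟨Finset.mem_univ _, ne_of_lt hj1⟩, ?_⟩
        have hval : y2 j = x j := by
          rw [hy2j, hc, hδdef, min_eq_left hmin]; ring
        simp [Finset.mem_filter, hval]
      · refine ⟨k, Finset.mem_filter.2 ⟨Finset.mem_univ _, ne_of_gt hk2⟩, ?_⟩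
        have hval : y2 k = x k := by
          rw [hy2k, hd, hδdef, min_eq_right hmin]; ring
        simp [Finset.mem_filter, hval]
    have hstep : esymm n m y ≤ esymm n m y2 := by
      apply esymm_step hjk y (fun i => (hy i).le) c d
      · rw [hc, hd]; ring
      · have hkey : c * d - y j * y k = δ * ((y j - y k) - δ) := by
          rw [hc, hd]; ring
        have hpos : 0 ≤ δ * ((y j - y k) - δ) :=
          mul_nonneg hδ.le (by linarith)
        linarith
    exact le_trans hstep (ih y2 (by omega) hy2pos hy2a hle2 htot2 m)

end EsymmMajAux

/-- If `x ≺ y` (majorization: equal total sums, and for every subset `A` there is a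
subset `B` of the same cardinality with `∑_{A} x ≤ ∑_{B} y`), then
`e_k(x) ≥ e_k(y)` for every `k ∈ {1,…,n}`. -/
theorem esymm_ge_of_majorization (n : ℕ) (x y : Fin n → ℝ)
    (hx : ∀ i, 0 < x i) (hy : ∀ i, 0 < y i)
    (hsum : ∑ i, x i = ∑ i, y i)
    (hmaj : ∀ A : Finset (Fin n), ∃ B : Finset (Fin n),
      B.card = A.card ∧ ∑ i ∈ A, x i ≤ ∑ i ∈ B, y i) :
    ∀ k : ℕ, 1 ≤ k → k ≤ n → esymm n k y ≤ esymm n k x := by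
  intro k hk1 hkn
  classical
  set πx : Equiv.Perm (Fin n) := Fin.revPerm.trans (Tuple.sort x) with hπx
  set πy : Equiv.Perm (Fin n) := Fin.revPerm.trans (Tuple.sort y) with hπy
  set x' : Fin n → ℝ := fun i => x (πx i) with hx'
  set y' : Fin n → ℝ := fun i => y (πy i) with hy'
  have hsortx := Tuple.monotone_sort x
  have hsorty := Tuple.monotone_sort y
  have hxa : Antitone x' := by
    intro a b hab
    exact hsortx (by simpa using Fin.rev_le_rev.2 hab)
  have hya : Antitone y' := by
    intro a b hab
    exact hsorty (by simpa using Fin.rev_le_rev.2 hab)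
  have hx'pos : ∀ i, 0 < x' i := fun i => hx _
  have hy'pos : ∀ i, 0 < y' i := fun i => hy _
  have hsum' : ∑ i, x' i = ∑ i, y' i := by
    rw [hx', hy', Equiv.sum_comp πx x, Equiv.sum_comp πy y]
    exact hsum
  have htot : EsymmMajAux.S n n x' = EsymmMajAux.S n n y' := by
    rw [EsymmMajAux.S_univ, EsymmMajAux.S_univ]; exact hsum'
  have hle : ∀ m, EsymmMajAux.S n m x' ≤ EsymmMajAux.S n m y' := by
    intro m
    rcases le_or_gt m n with hmn | hmn
    swap
    · rw [EsymmMajAux.S_stable n m hmn.le x', EsymmMajAux.S_stable n m hmn.le y']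
      exact le_of_eq htot
    -- m ≤ n
    set F := Finset.univ.filter (fun i : Fin n => (i : ℕ) < m) with hF
    have hcardF : F.card = m := EsymmMajAux.card_filter_lt n m hmn
    set A := F.image πx with hA
    have hcardA : A.card = m := by
      rw [hA, Finset.card_image_of_injective _ πx.injective, hcardF]
    have hSx : EsymmMajAux.S n m x' = ∑ i ∈ A, x i := by
      rw [EsymmMajAux.S, hA, Finset.sum_image (fun a _ b _ h => πx.injective h)]
    obtain ⟨B, hBcard, hBle⟩ := hmaj A
    set B' := B.image πy.symm with hB'
    have hcardB' : B'.card = m := by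
      rw [hB', Finset.card_image_of_injective _ πy.symm.injective, hBcard, hcardA]
    have hSB : ∑ i ∈ B', y' i = ∑ i ∈ B, y i := by
      rw [hB', Finset.sum_image (fun a _ b _ h => πy.symm.injective h)]
      apply Finset.sum_congr rfl
      intro i _
      simp [hy']
    have htop : ∑ i ∈ B', y' i ≤ EsymmMajAux.S n m y' :=
      EsymmMajAux.topsum hya B' m hcardB'
    rw [hSx]
    rw [hSB] at htop
    exact le_trans hBle htop
  have hmismatch : (Finset.univ.filter (fun i => x' i ≠ y' i)).card
      ≤ (Finset.univ.filter (fun i => x' i ≠ y' i)).card := le_refl _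
  have hkey := EsymmMajAux.key x' hx'pos hxa
    ((Finset.univ.filter (fun i => x' i ≠ y' i)).card) y' (le_refl _)
    hy'pos hya hle htot k
  calc esymm n k y = esymm n k y' := (EsymmMajAux.esymm_comp_perm k y πy).symm
    _ ≤ esymm n k x' := hkey
    _ = esymm n k x := EsymmMajAux.esymm_comp_perm k x πx
end

section
/- Let I ⊆ ℝ and f₁,…,fₙ : I → ℝ differentiable with Σᵢ fᵢ(t) = 0, f₁(t) ≤ … ≤ fₙ(t), and f₁'(t) ≤ … ≤ fₙ'(t) for all t ∈ I. Let h : I → ℝ be positive, differentiable and monotone increasing. Then g_h(t) = Σᵢ exp(h(t)·fᵢ(t)) is monotone increasing on I. -/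
open Real

theorem sum_exp_mul_monotone_of_ordered (I : Set ℝ) (hI : Convex ℝ I) (n : ℕ)
    (f f' : Fin n → ℝ → ℝ) (h h' : ℝ → ℝ)
    (hderiv : ∀ i, ∀ t ∈ I, HasDerivAt (f i) (f' i t) t)
    (hsum : ∀ t ∈ I, ∑ i, f i t = 0)
    (hord : ∀ t ∈ I, ∀ i j : Fin n, i ≤ j → f i t ≤ f j t)
    (hord' : ∀ t ∈ I, ∀ i j : Fin n, i ≤ j → f' i t ≤ f' j t)
    (hhpos : ∀ t ∈ I, 0 < h t)
    (hhderiv : ∀ t ∈ I, HasDerivAt h (h' t) t)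
    (hhmono : MonotoneOn h I) :
    MonotoneOn (fun t => ∑ i, exp (h t * f i t)) I := by
  -- derivative of g at points of I
  have hg : ∀ t ∈ I, HasDerivAt (fun t => ∑ i, exp (h t * f i t))
      (∑ i, exp (h t * f i t) * (h' t * f i t + h t * f' i t)) t := by
    intro t ht
    exact HasDerivAt.fun_sum fun i _ => ((hhderiv t ht).mul (hderiv i t ht)).exp
  apply monotoneOn_of_hasDerivWithinAt_nonneg hI
      (f' := fun t => ∑ i, exp (h t * f i t) * (h' t * f i t + h t * f' i t))
  · intro t ht
    exact (hg t ht).continuousAt.continuousWithinAt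
  · intro t ht
    exact (hg t (interior_subset ht)).hasDerivWithinAt
  · intro t htI
    have ht : t ∈ I := interior_subset htI
    have hnbhd : I ∈ nhds t := mem_interior_iff_mem_nhds.mp htI
    -- h' t ≥ 0
    have hh'0 : 0 ≤ h' t := by
      have hslope := hasDerivWithinAt_iff_tendsto_slope.mp
        ((hhderiv t ht).hasDerivWithinAt (s := Set.Ioi t))
      rw [Set.diff_singleton_eq_self (by simp)] at hslope
      refine ge_of_tendsto hslope ?_
      have h1 : ∀ᶠ u in nhdsWithin t (Set.Ioi t), u ∈ I :=
        eventually_nhdsWithin_of_eventually_nhds (Filter.eventually_of_mem hnbhd fun u hu => hu)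
      filter_upwards [h1, self_mem_nhdsWithin] with u huI hu
      have htu : t < u := hu
      have h2 : h t ≤ h u := hhmono ht huI htu.le
      have h3 : 0 ≤ h u - h t := by linarith
      rw [slope_def_field]
      exact div_nonneg h3 (by linarith)
    -- sum of f' is 0
    have hsum' : ∑ i, f' i t = 0 := by
      have h1 : HasDerivAt (fun u => ∑ i, f i u) (∑ i, f' i t) t :=
        HasDerivAt.fun_sum fun i _ => hderiv i t ht
      have h2 : HasDerivAt (fun u => ∑ i, f i u) 0 t := by
        refine (hasDerivAt_const t (0 : ℝ)).congr_of_eventuallyEq ?_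
        filter_upwards [hnbhd] with u hu
        exact hsum u hu
      exact h1.unique h2
    have hsumt : ∑ i, f i t = 0 := hsum t ht
    have hht : 0 < h t := hhpos t ht
    have mono1 : Monovary (fun i => f i t) (fun i => exp (h t * f i t)) := by
      intro i j hij
      simp only [exp_lt_exp] at hij
      exact (lt_of_mul_lt_mul_left hij hht.le).le
    have mono2 : Monovary (fun i => f' i t) (fun i => exp (h t * f i t)) := by
      intro i j hij
      simp only [exp_lt_exp] at hij
      have hfij : f i t < f j t := lt_of_mul_lt_mul_left hij hht.le
      have hij' : ¬ j < i := fun hlt => absurd (hord t ht j i hlt.le) (not_le.mpr hfij)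
      exact hord' t ht i j (not_lt.mp hij')
    have cheb1 := mono1.sum_mul_sum_le_card_mul_sum
    have cheb2 := mono2.sum_mul_sum_le_card_mul_sum
    rw [hsumt, zero_mul] at cheb1
    rw [hsum', zero_mul] at cheb2
    have A : 0 ≤ ∑ i, f i t * exp (h t * f i t) := by
      rcases Nat.eq_zero_or_pos n with h0 | h0
      · subst h0; simp
      · have cpos : (0:ℝ) < Fintype.card (Fin n) := by simp [h0]
        nlinarith [cheb1]
    have B : 0 ≤ ∑ i, f' i t * exp (h t * f i t) := by
      rcases Nat.eq_zero_or_pos n with h0 | h0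
      · subst h0; simp
      · have cpos : (0:ℝ) < Fintype.card (Fin n) := by simp [h0]
        nlinarith [cheb2]
    have key : ∑ i, exp (h t * f i t) * (h' t * f i t + h t * f' i t)
        = h' t * (∑ i, f i t * exp (h t * f i t)) + h t * (∑ i, f' i t * exp (h t * f i t)) := by
      rw [Finset.mul_sum, Finset.mul_sum, ← Finset.sum_add_distrib]
      congr 1
      ext i
      ring
    rw [key]
    have := mul_nonneg hh'0 A
    have := mul_nonneg hht.le B
    linarith
end

section
/- Let I ⊆ ℝ and f₁,…,fₙ : I → ℝ differentiable with Σᵢ fᵢ(t) = 0, f₁(t) ≤ … ≤ fₙ(t), and f₁'(t) ≤ … ≤ fₙ'(t) for all t ∈ I. Let h : D → ℝ be differentiable, monotone increasing, and convex, with all fᵢ(t) in D. Then H(t) = Σᵢ exp(h(fᵢ(t))) is monotone increasing on I. -/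
open Real Filter Set Topology

-- approach lemmas: if g has nonzero derivative at t ∈ interior I and maps I into D,
-- then g t is a limit point of D from both sides.
lemma nhds_neBot_Ioi_aux {I D : Set ℝ} {g : ℝ → ℝ} {b t : ℝ}
    (htI : t ∈ interior I) (hd : HasDerivAt g b t) (hb : b ≠ 0)
    (hmem : ∀ s ∈ I, g s ∈ D) :
    (𝓝[D ∩ Set.Ioi (g t)] (g t)).NeBot := by
  have hslope := hasDerivAt_iff_tendsto_slope.1 hd
  have hIev : ∀ᶠ s in 𝓝 t, s ∈ I := by
    filter_upwards [isOpen_interior.mem_nhds htI] with s hs using interior_subset hs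
  rcases hb.lt_or_gt with hbneg | hbpos
  · have hslope' : Tendsto (slope g t) (𝓝[<] t) (𝓝 b) :=
      hslope.mono_left (nhdsWithin_mono t fun s hs => ne_of_lt hs)
    have hmap : Tendsto g (𝓝[<] t) (𝓝[D ∩ Set.Ioi (g t)] (g t)) := by
      rw [tendsto_nhdsWithin_iff]
      refine ⟨hd.continuousAt.tendsto.mono_left nhdsWithin_le_nhds, ?_⟩
      have h2 : ∀ᶠ s in 𝓝[<] t, slope g t s < 0 := hslope'.eventually_lt_const hbneg
      have h3 : ∀ᶠ s in 𝓝[<] t, s < t := eventually_mem_nhdsWithin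
      filter_upwards [hIev.filter_mono nhdsWithin_le_nhds, h2, h3] with s hsI hss hst
      refine ⟨hmem s hsI, ?_⟩
      rw [slope_def_field] at hss
      rcases div_neg_iff.1 hss with ⟨h1, _⟩ | ⟨_, h2'⟩
      · simpa using h1
      · linarith
    exact hmap.neBot
  · have hslope' : Tendsto (slope g t) (𝓝[>] t) (𝓝 b) :=
      hslope.mono_left (nhdsWithin_mono t fun s hs => ne_of_gt hs)
    have hmap : Tendsto g (𝓝[>] t) (𝓝[D ∩ Set.Ioi (g t)] (g t)) := by
      rw [tendsto_nhdsWithin_iff]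
      refine ⟨hd.continuousAt.tendsto.mono_left nhdsWithin_le_nhds, ?_⟩
      have h2 : ∀ᶠ s in 𝓝[>] t, 0 < slope g t s := hslope'.eventually_const_lt hbpos
      have h3 : ∀ᶠ s in 𝓝[>] t, t < s := eventually_mem_nhdsWithin
      filter_upwards [hIev.filter_mono nhdsWithin_le_nhds, h2, h3] with s hsI hss hst
      refine ⟨hmem s hsI, ?_⟩
      rw [slope_def_field] at hss
      rcases div_pos_iff.1 hss with ⟨h1, _⟩ | ⟨_, h2'⟩
      · simpa using h1
      · linarith
    exact hmap.neBot

lemma nhds_neBot_Iio_aux {I D : Set ℝ} {g : ℝ → ℝ} {b t : ℝ}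
    (htI : t ∈ interior I) (hd : HasDerivAt g b t) (hb : b ≠ 0)
    (hmem : ∀ s ∈ I, g s ∈ D) :
    (𝓝[D ∩ Set.Iio (g t)] (g t)).NeBot := by
  have hslope := hasDerivAt_iff_tendsto_slope.1 hd
  have hIev : ∀ᶠ s in 𝓝 t, s ∈ I := by
    filter_upwards [isOpen_interior.mem_nhds htI] with s hs using interior_subset hs
  rcases hb.lt_or_gt with hbneg | hbpos
  · have hslope' : Tendsto (slope g t) (𝓝[>] t) (𝓝 b) :=
      hslope.mono_left (nhdsWithin_mono t fun s hs => ne_of_gt hs)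
    have hmap : Tendsto g (𝓝[>] t) (𝓝[D ∩ Set.Iio (g t)] (g t)) := by
      rw [tendsto_nhdsWithin_iff]
      refine ⟨hd.continuousAt.tendsto.mono_left nhdsWithin_le_nhds, ?_⟩
      have h2 : ∀ᶠ s in 𝓝[>] t, slope g t s < 0 := hslope'.eventually_lt_const hbneg
      have h3 : ∀ᶠ s in 𝓝[>] t, t < s := eventually_mem_nhdsWithin
      filter_upwards [hIev.filter_mono nhdsWithin_le_nhds, h2, h3] with s hsI hss hst
      refine ⟨hmem s hsI, ?_⟩
      rw [slope_def_field] at hss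
      rcases div_neg_iff.1 hss with ⟨_, h2'⟩ | ⟨h1, _⟩
      · linarith
      · simpa using h1
    exact hmap.neBot
  · have hslope' : Tendsto (slope g t) (𝓝[<] t) (𝓝 b) :=
      hslope.mono_left (nhdsWithin_mono t fun s hs => ne_of_lt hs)
    have hmap : Tendsto g (𝓝[<] t) (𝓝[D ∩ Set.Iio (g t)] (g t)) := by
      rw [tendsto_nhdsWithin_iff]
      refine ⟨hd.continuousAt.tendsto.mono_left nhdsWithin_le_nhds, ?_⟩
      have h2 : ∀ᶠ s in 𝓝[<] t, 0 < slope g t s := hslope'.eventually_const_lt hbpos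
      have h3 : ∀ᶠ s in 𝓝[<] t, s < t := eventually_mem_nhdsWithin
      filter_upwards [hIev.filter_mono nhdsWithin_le_nhds, h2, h3] with s hsI hss hst
      refine ⟨hmem s hsI, ?_⟩
      rw [slope_def_field] at hss
      rcases div_pos_iff.1 hss with ⟨_, h2'⟩ | ⟨h1, _⟩
      · linarith
      · simpa using h1
    exact hmap.neBot

-- derivative of a monotone function at a point approached from the right within D is nonneg
lemma deriv_nonneg_aux {D : Set ℝ} {h : ℝ → ℝ} {d x : ℝ}
    (hx : x ∈ D) (hd : HasDerivAt h d x) (hmono : MonotoneOn h D)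
    (hne : (𝓝[D ∩ Set.Ioi x] x).NeBot) : 0 ≤ d := by
  have ht : Tendsto (slope h x) (𝓝[D ∩ Set.Ioi x] x) (𝓝 d) :=
    (hasDerivAt_iff_tendsto_slope.1 hd).mono_left
      (nhdsWithin_mono x fun y hy => ne_of_gt hy.2)
  refine ge_of_tendsto ht ?_
  filter_upwards [eventually_mem_nhdsWithin] with y hy
  rw [slope_def_field]
  exact div_nonneg (sub_nonneg.2 (hmono hx hy.1 (le_of_lt hy.2))) (sub_nonneg.2 (le_of_lt hy.2))

lemma deriv_le_slope_aux {D : Set ℝ} {h : ℝ → ℝ} {d x z : ℝ}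
    (hx : x ∈ D) (hz : z ∈ D) (hxz : x < z) (hconv : ConvexOn ℝ D h)
    (hd : HasDerivAt h d x) (hne : (𝓝[D ∩ Set.Ioi x] x).NeBot) :
    d ≤ (h z - h x) / (z - x) := by
  have ht : Tendsto (slope h x) (𝓝[D ∩ Set.Ioi x] x) (𝓝 d) :=
    (hasDerivAt_iff_tendsto_slope.1 hd).mono_left
      (nhdsWithin_mono x fun y hy => ne_of_gt hy.2)
  refine le_of_tendsto ht ?_
  have hlt : ∀ᶠ y in 𝓝[D ∩ Set.Ioi x] x, y < z :=
    eventually_nhdsWithin_of_eventually_nhds ((tendsto_id.eventually_lt_const hxz))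
  filter_upwards [eventually_mem_nhdsWithin, hlt] with y hy hyz
  rw [slope_def_field]
  exact hconv.secant_mono hx hy.1 hz (ne_of_gt hy.2) (ne_of_gt hxz) (le_of_lt hyz)

lemma slope_le_deriv_aux {D : Set ℝ} {h : ℝ → ℝ} {d x z : ℝ}
    (hx : x ∈ D) (hz : z ∈ D) (hxz : x < z) (hconv : ConvexOn ℝ D h)
    (hd : HasDerivAt h d z) (hne : (𝓝[D ∩ Set.Iio z] z).NeBot) :
    (h z - h x) / (z - x) ≤ d := by
  have ht : Tendsto (slope h z) (𝓝[D ∩ Set.Iio z] z) (𝓝 d) :=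
    (hasDerivAt_iff_tendsto_slope.1 hd).mono_left
      (nhdsWithin_mono z fun y hy => ne_of_lt hy.2)
  refine ge_of_tendsto ht ?_
  have hgt : ∀ᶠ y in 𝓝[D ∩ Set.Iio z] z, x < y :=
    eventually_nhdsWithin_of_eventually_nhds ((tendsto_id.eventually_const_lt hxz))
  filter_upwards [eventually_mem_nhdsWithin, hgt] with y hy hxy
  rw [slope_def_field]
  have := hconv.secant_mono hz hx hy.1 (ne_of_lt hxz) (ne_of_lt hy.2) (le_of_lt hxy)
  calc (h z - h x) / (z - x) = (h x - h z) / (x - z) := by rw [← neg_div_neg_eq]; ring_nf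
    _ ≤ (h y - h z) / (y - z) := this

theorem sum_exp_comp_monotone_of_ordered (I : Set ℝ) (hI : Convex ℝ I) (n : ℕ)
    (f f' : Fin n → ℝ → ℝ) (D : Set ℝ) (h h' : ℝ → ℝ)
    (hderiv : ∀ i, ∀ t ∈ I, HasDerivAt (f i) (f' i t) t)
    (hsum : ∀ t ∈ I, ∑ i, f i t = 0)
    (hord : ∀ t ∈ I, ∀ i j : Fin n, i ≤ j → f i t ≤ f j t)
    (hord' : ∀ t ∈ I, ∀ i j : Fin n, i ≤ j → f' i t ≤ f' j t)
    (hmem : ∀ i, ∀ t ∈ I, f i t ∈ D)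
    (hhderiv : ∀ x ∈ D, HasDerivAt h (h' x) x)
    (hhmono : MonotoneOn h D)
    (hhconv : ConvexOn ℝ D h) :
    MonotoneOn (fun t => ∑ i, exp (h (f i t))) I := by
  classical
  have key : ∀ t ∈ I, HasDerivAt (fun s => ∑ i, exp (h (f i s)))
      (∑ i, exp (h (f i t)) * (h' (f i t) * f' i t)) t := by
    intro t ht
    exact HasDerivAt.fun_sum fun i _ =>
      (Real.hasDerivAt_exp _).comp t ((hhderiv _ (hmem i t ht)).comp t (hderiv i t ht))
  apply monotoneOn_of_deriv_nonneg hI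
  · intro t ht; exact (key t ht).continuousAt.continuousWithinAt
  · intro t ht
    exact (key t (interior_subset ht)).differentiableAt.differentiableWithinAt
  · intro t ht
    have htI : t ∈ I := interior_subset ht
    rw [(key t htI).deriv]
    -- sum of derivatives is zero
    have hsum' : ∑ i, f' i t = 0 := by
      have h1 : HasDerivAt (fun s => ∑ i, f i s) (∑ i, f' i t) t :=
        HasDerivAt.fun_sum fun i _ => hderiv i t htI
      have h2 : HasDerivAt (fun s => ∑ i, f i s) 0 t := by
        refine (hasDerivAt_const t (0 : ℝ)).congr_of_eventuallyEq ?_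
        filter_upwards [isOpen_interior.mem_nhds ht] with s hs
        exact hsum s (interior_subset hs)
      exact h1.unique h2
    set T : Finset (Fin n) := Finset.univ.filter fun i => f' i t ≠ 0 with hT
    have hTmem : ∀ i, i ∈ T ↔ f' i t ≠ 0 := by
      intro i; simp [hT]
    -- rewrite sum over T
    have hrw : ∑ i, exp (h (f i t)) * (h' (f i t) * f' i t)
        = ∑ i ∈ T, (exp (h (f i t)) * h' (f i t)) * f' i t := by
      rw [Finset.sum_subset (Finset.subset_univ T)]
      · exact Finset.sum_congr rfl fun i _ => by ring
      · intro i _ hiT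
        have : f' i t = 0 := by
          by_contra hne; exact hiT ((hTmem i).2 hne)
        simp [this]
    rw [hrw]
    have hsumT : ∑ i ∈ T, f' i t = 0 := by
      rw [← hsum']
      refine Finset.sum_subset (Finset.subset_univ T) ?_
      intro i _ hiT
      by_contra hne; exact hiT ((hTmem i).2 hne)
    -- facts for indices in T
    have hIoi : ∀ i, f' i t ≠ 0 → (𝓝[D ∩ Set.Ioi (f i t)] (f i t)).NeBot := fun i hi =>
      nhds_neBot_Ioi_aux ht (hderiv i t htI) hi (hmem i)
    have hIio : ∀ i, f' i t ≠ 0 → (𝓝[D ∩ Set.Iio (f i t)] (f i t)).NeBot := fun i hi =>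
      nhds_neBot_Iio_aux ht (hderiv i t htI) hi (hmem i)
    have hd0 : ∀ i, f' i t ≠ 0 → 0 ≤ h' (f i t) := fun i hi =>
      deriv_nonneg_aux (hmem i t htI) (hhderiv _ (hmem i t htI)) hhmono (hIoi i hi)
    -- Monovary
    have hmono : MonovaryOn (fun i => exp (h (f i t)) * h' (f i t)) (fun i => f' i t) ↑T := by
      intro i hi j hj hlt
      simp only [Finset.coe_filter, Set.mem_setOf_eq, Finset.mem_univ, true_and, hT] at hi hj
      have hij : i ≤ j := by
        by_contra hji
        exact absurd (hord' t htI j i (le_of_not_ge hji)) (not_le.2 hlt)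
      have hxij : f i t ≤ f j t := hord t htI i j hij
      have hdij : h' (f i t) ≤ h' (f j t) := by
        rcases eq_or_lt_of_le hxij with heq | hlt'
        · rw [heq]
        · have hB := deriv_le_slope_aux (hmem i t htI) (hmem j t htI) hlt' hhconv
            (hhderiv _ (hmem i t htI)) (hIoi i hi)
          have hC := slope_le_deriv_aux (hmem i t htI) (hmem j t htI) hlt' hhconv
            (hhderiv _ (hmem j t htI)) (hIio j hj)
          linarith
      exact mul_le_mul (exp_le_exp.2 (hhmono (hmem i t htI) (hmem j t htI) hxij))
        hdij (hd0 i hi) (exp_pos _).le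
    have cheb := hmono.sum_mul_sum_le_card_mul_sum
    rw [hsumT, mul_zero] at cheb
    rcases T.eq_empty_or_nonempty with hTe | hTne
    · simp [hTe]
    · have hcard : (0 : ℝ) < (T.card : ℝ) := by
        exact_mod_cast Finset.card_pos.2 hTne
      nlinarith [cheb]
end

section
/- Let a,b,c,x,y,z ∈ ℝ satisfy a ≥ b ≥ c, x ≥ y ≥ z, a+b+c = x+y+z = 0, and a²+b²+c² = x²+y²+z². Then exp(a)+exp(b)+exp(c) ≤ exp(x)+exp(y)+exp(z) if and only if a ≤ x. -/
open Real

lemma key_ineq (u v : ℝ) (hv : 0 < v) (huv : v < u) :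
    v * (exp v + exp (-v)) + u * (exp v - exp (-v)) < 2 * v * exp u := by
  have hAB : exp v * exp (-v) = 1 := by rw [← Real.exp_add]; simp
  have h1 : exp v * (1 + (u - v)) < exp u := by
    have h := Real.add_one_lt_exp (show u - v ≠ 0 by linarith)
    calc exp v * (1 + (u - v)) < exp v * exp (u - v) := by
          apply mul_lt_mul_of_pos_left _ (Real.exp_pos v); linarith
      _ = exp u := by rw [← Real.exp_add]; ring_nf
  have h2 : exp v - exp (-v) ≤ 2 * v * exp v := by
    have h := Real.add_one_le_exp (-(2*v))
    have he : exp (-(2*v)) = exp (-v) * exp (-v) := by rw [← Real.exp_add]; ring_nf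
    nlinarith [Real.exp_pos v, Real.exp_pos (-v)]
  nlinarith [mul_le_mul_of_nonneg_left h2 (le_of_lt (sub_pos.2 huv)), Real.exp_pos v, hv]

lemma mono_aux (r2 : ℝ) (hr2 : 0 ≤ r2) :
    StrictMonoOn (fun t : ℝ => exp t + exp ((-t + Real.sqrt (2*r2 - 3*t^2))/2)
      + exp ((-t - Real.sqrt (2*r2 - 3*t^2))/2))
      (Set.Icc (Real.sqrt (r2/6)) (Real.sqrt (2*r2/3))) := by
  have hcont : Continuous (fun t : ℝ => exp t + exp ((-t + Real.sqrt (2*r2 - 3*t^2))/2)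
      + exp ((-t - Real.sqrt (2*r2 - 3*t^2))/2)) := by fun_prop
  apply strictMonoOn_of_deriv_pos (convex_Icc _ _) hcont.continuousOn
  intro t ht
  rw [interior_Icc] at ht
  obtain ⟨ht1, ht2⟩ := ht
  have ht0 : 0 < t := lt_of_le_of_lt (Real.sqrt_nonneg _) ht1
  have hl : r2/6 < t^2 := (Real.sqrt_lt' ht0).mp ht1
  have hu : t^2 < 2*r2/3 := (Real.lt_sqrt ht0.le).mp ht2
  set W := Real.sqrt (2*r2 - 3*t^2) with hWdef
  have hWpos : 0 < W := Real.sqrt_pos.mpr (by linarith)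
  have hW2 : W^2 = 2*r2 - 3*t^2 := Real.sq_sqrt (by linarith)
  have hW3 : W < 3*t := by nlinarith [hWpos]
  -- derivative
  have hq : HasDerivAt (fun s : ℝ => 2*r2 - 3*s^2) (-(6*t)) t := by
    have h := ((hasDerivAt_pow 2 t).const_mul (3:ℝ)).const_sub (2*r2)
    exact h.congr_deriv (by norm_num; ring)
  have hsq' : HasDerivAt (fun s : ℝ => Real.sqrt (2*r2 - 3*s^2))
      (1/(2*W) * (-(6*t))) t := by
    have := (Real.hasDerivAt_sqrt (show 2*r2 - 3*t^2 ≠ 0 by nlinarith)).comp t hq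
    exact this
  set W' := 1/(2*W) * (-(6*t)) with hW'def
  have hb : HasDerivAt (fun s : ℝ => (-s + Real.sqrt (2*r2 - 3*s^2))/2)
      ((-1 + W')/2) t := (((hasDerivAt_id t).neg).add hsq').div_const 2
  have hc : HasDerivAt (fun s : ℝ => (-s - Real.sqrt (2*r2 - 3*s^2))/2)
      ((-1 - W')/2) t := (((hasDerivAt_id t).neg).sub hsq').div_const 2
  have hf : HasDerivAt (fun t : ℝ => exp t + exp ((-t + Real.sqrt (2*r2 - 3*t^2))/2)
      + exp ((-t - Real.sqrt (2*r2 - 3*t^2))/2))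
      (exp t + exp ((-t + W)/2) * ((-1 + W')/2) + exp ((-t - W)/2) * ((-1 - W')/2)) t := by
    have := ((Real.hasDerivAt_exp t).add hb.exp).add hc.exp
    exact this
  rw [hf.deriv]
  -- positivity of the derivative
  have e1 : exp ((-t + W)/2) = exp (-t/2) * exp (W/2) := by rw [← Real.exp_add]; ring_nf
  have e2 : exp ((-t - W)/2) = exp (-t/2) * exp (-(W/2)) := by rw [← Real.exp_add]; ring_nf
  have e3 : exp t = exp (-t/2) * exp (3*t/2) := by rw [← Real.exp_add]; ring_nf
  have hk := key_ineq (3*t/2) (W/2) (by linarith) (by linarith)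
  set E := exp (-t/2)
  set A := exp (W/2)
  set B := exp (-(W/2))
  set U := exp (3*t/2)
  have hEpos : 0 < E := Real.exp_pos _
  have hgoal : (exp t + exp ((-t + W)/2) * ((-1 + W')/2) + exp ((-t - W)/2) * ((-1 - W')/2))
      * (2*W) = E * 2 * (2*(W/2)*U - ((W/2)*(A+B) + (3*t/2)*(A-B))) := by
    rw [e1, e2, e3, hW'def]
    field_simp
    ring
  have h1 : 0 < (exp t + exp ((-t + W)/2) * ((-1 + W')/2) + exp ((-t - W)/2) * ((-1 - W')/2))
      * (2*W) := by
    rw [hgoal]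
    have : 0 < 2*(W/2)*U - ((W/2)*(A+B) + (3*t/2)*(A-B)) := by linarith
    positivity
  nlinarith [h1, hWpos]

theorem sum_exp_le_iff (a b c x y z : ℝ)
    (hab : b ≤ a) (hbc : c ≤ b) (hxy : y ≤ x) (hyz : z ≤ y)
    (habc : a + b + c = 0) (hxyz : x + y + z = 0)
    (hsq : a ^ 2 + b ^ 2 + c ^ 2 = x ^ 2 + y ^ 2 + z ^ 2) :
    exp a + exp b + exp c ≤ exp x + exp y + exp z ↔ a ≤ x := by
  set r2 := a^2 + b^2 + c^2 with hr2def
  have hr2 : 0 ≤ r2 := by positivity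
  have hmono := mono_aux r2 hr2
  have ha0 : 0 ≤ a := by linarith
  have hx0 : 0 ≤ x := by linarith
  -- a side
  have hwa : Real.sqrt (2*r2 - 3*a^2) = a + 2*b := by
    rw [show 2*r2 - 3*a^2 = (a + 2*b)^2 by
      rw [hr2def]; linear_combination (-2*(a+b-c))*habc]
    exact Real.sqrt_sq (by linarith)
  have hamem : a ∈ Set.Icc (Real.sqrt (r2/6)) (Real.sqrt (2*r2/3)) := by
    constructor
    · rw [show a = Real.sqrt (a^2) from (Real.sqrt_sq ha0).symm]
      apply Real.sqrt_le_sqrt; nlinarith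
    · calc a = Real.sqrt (a^2) := (Real.sqrt_sq ha0).symm
        _ ≤ _ := Real.sqrt_le_sqrt (by nlinarith)
  have hfa : exp a + exp ((-a + Real.sqrt (2*r2 - 3*a^2))/2)
      + exp ((-a - Real.sqrt (2*r2 - 3*a^2))/2) = exp a + exp b + exp c := by
    rw [hwa, show (-a + (a + 2*b))/2 = b by ring, show (-a - (a + 2*b))/2 = c by linarith]
  -- x side
  have hwx : Real.sqrt (2*r2 - 3*x^2) = x + 2*y := by
    rw [show 2*r2 - 3*x^2 = (x + 2*y)^2 by
      rw [hsq]; linear_combination (-2*(x+y-z))*hxyz]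
    exact Real.sqrt_sq (by linarith)
  have hxmem : x ∈ Set.Icc (Real.sqrt (r2/6)) (Real.sqrt (2*r2/3)) := by
    constructor
    · rw [show x = Real.sqrt (x^2) from (Real.sqrt_sq hx0).symm]
      apply Real.sqrt_le_sqrt; nlinarith [hsq]
    · calc x = Real.sqrt (x^2) := (Real.sqrt_sq hx0).symm
        _ ≤ _ := Real.sqrt_le_sqrt (by nlinarith [hsq])
  have hfx : exp x + exp ((-x + Real.sqrt (2*r2 - 3*x^2))/2)
      + exp ((-x - Real.sqrt (2*r2 - 3*x^2))/2) = exp x + exp y + exp z := by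
    rw [hwx, show (-x + (x + 2*y))/2 = y by ring, show (-x - (x + 2*y))/2 = z by linarith]
  have := hmono.le_iff_le hamem hxmem
  simp only [hfa, hfx] at this
  exact this
end

section
/- Let a₁,…,aₙ, b₁,…,bₙ be positive reals and k ≥ 0. Then Σᵢ aᵢ·log(aᵢ/bᵢ + k) ≥ (Σᵢ aᵢ)·log((Σᵢ aᵢ)/(Σᵢ bᵢ) + k), with equality if and only if all ratios aᵢ/bᵢ are equal. -/
open Real Set

lemma strictConvexOn_mul_log_add (k : ℝ) (hk : 0 ≤ k) :
    StrictConvexOn ℝ (Ioi (0:ℝ)) (fun x => x * log (x + k)) := by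
  have hpos : ∀ x ∈ Ioi (0:ℝ), 0 < x + k := fun x hx => by have h := mem_Ioi.mp hx; positivity
  apply strictConvexOn_of_deriv2_pos (convex_Ioi 0)
  · exact continuousOn_id.mul (ContinuousOn.log
      (continuousOn_id.add continuousOn_const) (fun x hx => (hpos x hx).ne'))
  · intro x hx
    rw [interior_Ioi] at hx
    have hx' : (0:ℝ) < x + k := hpos x hx
    -- first derivative
    have hd1 : ∀ y ∈ Ioi (0:ℝ), HasDerivAt (fun x => x * log (x + k))
        (log (y + k) + y / (y + k)) y := by
      intro y hy
      have h1 : HasDerivAt (fun z : ℝ => z + k) 1 y := (hasDerivAt_id y).add_const k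
      have h2 : HasDerivAt (fun z : ℝ => log (z + k)) (1 / (y + k)) y :=
        h1.log (hpos y hy).ne'
      have := (hasDerivAt_id y).mul h2
      exact this.congr_deriv (by rw [id_eq, one_mul, mul_one_div])
    have hd2 : HasDerivAt (fun y => log (y + k) + y / (y + k))
        (1 / (x + k) + k / (x + k) ^ 2) x := by
      have h1 : HasDerivAt (fun z : ℝ => z + k) 1 x := (hasDerivAt_id x).add_const k
      have h2 : HasDerivAt (fun z : ℝ => log (z + k)) (1 / (x + k)) x := h1.log hx'.ne'
      have h3 : HasDerivAt (fun z : ℝ => z / (z + k))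
          ((1 * (x + k) - x * 1) / (x + k) ^ 2) x := (hasDerivAt_id x).div h1 hx'.ne'
      have := h2.add h3
      exact this.congr_deriv (by ring)
    have hEq : deriv (fun x => x * log (x + k)) =ᶠ[nhds x]
        (fun y => log (y + k) + y / (y + k)) := by
      filter_upwards [Ioi_mem_nhds hx] with y hy
      exact (hd1 y hy).deriv
    show 0 < deriv^[2] (fun x => x * log (x + k)) x
    rw [Function.iterate_succ, Function.iterate_one, Function.comp_apply,
      Filter.EventuallyEq.deriv_eq hEq, hd2.deriv]
    positivity

theorem stronger_log_sum_inequality (n : ℕ) (a b : Fin n → ℝ)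
    (ha : ∀ i, 0 < a i) (hb : ∀ i, 0 < b i) (k : ℝ) (hk : 0 ≤ k) :
    (∑ i, a i) * log ((∑ i, a i) / (∑ i, b i) + k) ≤
        ∑ i, a i * log (a i / b i + k) ∧
      ((∑ i, a i * log (a i / b i + k) =
          (∑ i, a i) * log ((∑ i, a i) / (∑ i, b i) + k)) ↔
        ∀ i j : Fin n, a i / b i = a j / b j) := by
  rcases Nat.eq_zero_or_pos n with hn | hn
  · subst hn; simp
  have hne : Nonempty (Fin n) := Fin.pos_iff_nonempty.mp hn
  set A := ∑ i, a i with hA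
  set B := ∑ i, b i with hB
  have hApos : 0 < A := Finset.sum_pos (fun i _ => ha i) Finset.univ_nonempty
  have hBpos : 0 < B := Finset.sum_pos (fun i _ => hb i) Finset.univ_nonempty
  set f : ℝ → ℝ := fun x => x * log (x + k) with hf
  have hconv := strictConvexOn_mul_log_add k hk
  set w : Fin n → ℝ := fun i => b i / B with hw
  set p : Fin n → ℝ := fun i => a i / b i with hp
  have hw0 : ∀ i ∈ Finset.univ, (0:ℝ) < w i := fun i _ => div_pos (hb i) hBpos
  have hw1 : ∑ i, w i = 1 := by
    rw [hw]; rw [← Finset.sum_div]; field_simp; exact hB.symm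
  have hmem : ∀ i ∈ Finset.univ, p i ∈ Ioi (0:ℝ) := fun i _ =>
    mem_Ioi.mpr (div_pos (ha i) (hb i))
  have hwp : ∑ i, w i • p i = A / B := by
    rw [hA, Finset.sum_div]
    refine Finset.sum_congr rfl fun i _ => ?_
    have h1 := (hb i).ne'
    have h2 := hBpos.ne'
    simp only [hw, hp, smul_eq_mul]
    field_simp
  have hwf : ∑ i, w i • f (p i) = (∑ i, a i * log (a i / b i + k)) / B := by
    rw [Finset.sum_div]
    refine Finset.sum_congr rfl fun i _ => ?_
    have h1 := (hb i).ne'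
    have h2 := hBpos.ne'
    simp only [hw, hp, hf, smul_eq_mul]
    field_simp
  have hfAB : f (A / B) = (A * log (A / B + k)) / B := by
    rw [hf]; field_simp
  have hle : A * log (A / B + k) ≤ ∑ i, a i * log (a i / b i + k) := by
    have h := hconv.convexOn.map_sum_le (fun i _ => (hw0 i (Finset.mem_univ i)).le) hw1 hmem
    rw [hwp, hwf] at h
    rw [div_mul_eq_mul_div] at h
    exact (div_le_div_iff_of_pos_right hBpos).mp h
  refine ⟨hle, ?_, ?_⟩
  · intro heq
    have h_eq : ∑ i, w i • f (p i) ≤ f (∑ i, w i • p i) := by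
      rw [hwp, hwf, hfAB, heq]
    have := hconv.eq_of_le_map_sum hw0 hw1 hmem h_eq
    intro i j
    exact this (Finset.mem_univ i) (Finset.mem_univ j)
  · intro hc
    obtain ⟨i0⟩ := hne
    set c := a i0 / b i0 with hcdef
    have hai : ∀ i, a i = c * b i := fun i => by
      have h := hc i i0
      rw [div_eq_div_iff (hb i).ne' (hb i0).ne'] at h
      rw [hcdef]
      have h3 := (hb i0).ne'
      field_simp
      linarith
    have hAcB : A = c * B := by
      rw [hA, hB, Finset.mul_sum]
      exact Finset.sum_congr rfl fun i _ => hai i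
    have hABc : A / B = c := by rw [hAcB]; field_simp
    calc ∑ i, a i * log (a i / b i + k) = ∑ i, a i * log (c + k) := by
          refine Finset.sum_congr rfl fun i _ => ?_
          rw [hc i i0, ← hcdef]
      _ = A * log (A / B + k) := by rw [hABc, hA, Finset.sum_mul]
end

section
/- Let a, b ∈ ℝ₊ⁿ and k₁,…,k_m ∈ [0,∞). Then Σᵢ aᵢ·log(∏_{s=1}^m (aᵢ/bᵢ + k_s)) ≥ (Σᵢ aᵢ)·log(∏_{s=1}^m ((Σᵢ aᵢ)/(Σᵢ bᵢ) + k_s)). -/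
open Real

lemma milne_aux (k x y Sa Sb : ℝ) (hk : 0 ≤ k) (hx : 0 < x) (hy : 0 < y)
    (hSa : 0 ≤ Sa) (hSb : 0 ≤ Sb) :
    x*y/(x+k*y) + Sa*Sb/(Sa+k*Sb) ≤ (x+Sa)*(y+Sb)/((x+Sa)+k*(y+Sb)) := by
  have hd1 : 0 < x + k*y := by positivity
  have hd3 : 0 < (x+Sa)+k*(y+Sb) := by positivity
  rcases eq_or_lt_of_le (by positivity : (0:ℝ) ≤ Sa + k*Sb) with h | h
  · have hSa0 : Sa = 0 := by nlinarith [mul_nonneg hk hSb]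
    have hkSb : k*Sb = 0 := by nlinarith [mul_nonneg hk hSb]
    have h2 : Sa*Sb/(Sa+k*Sb) = 0 := by rw [hSa0]; simp
    rw [h2, add_zero, div_le_div_iff₀ hd1 hd3]
    have e1 : x*y*(k*Sb) = 0 := by rw [hkSb]; ring
    subst hSa0
    nlinarith [e1, mul_nonneg (mul_nonneg hx.le hSb) hx.le,
      mul_nonneg (mul_nonneg hx.le hSb) (mul_nonneg hk hy.le)]
  · rw [div_add_div _ _ (ne_of_gt hd1) (ne_of_gt h), div_le_div_iff₀ (by positivity) hd3]
    nlinarith [mul_nonneg hk (sq_nonneg (x*Sb - Sa*y)), mul_pos hd1 h,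
      mul_pos (mul_pos hx hy) h, mul_pos hx hy]

lemma milne {ι : Type*} (s : Finset ι) (k : ℝ) (hk : 0 ≤ k) (a b : ι → ℝ)
    (ha : ∀ i ∈ s, 0 < a i) (hb : ∀ i ∈ s, 0 < b i) :
    ∑ i ∈ s, a i * b i / (a i + k * b i) ≤
      (∑ i ∈ s, a i) * (∑ i ∈ s, b i) / ((∑ i ∈ s, a i) + k * (∑ i ∈ s, b i)) := by
  induction s using Finset.cons_induction with
  | empty => simp
  | cons i s his ih =>
    have hai := ha i (Finset.mem_cons_self i s)
    have hbi := hb i (Finset.mem_cons_self i s)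
    have hSa : 0 ≤ ∑ j ∈ s, a j :=
      Finset.sum_nonneg fun j hj => (ha j (Finset.mem_cons_of_mem hj)).le
    have hSb : 0 ≤ ∑ j ∈ s, b j :=
      Finset.sum_nonneg fun j hj => (hb j (Finset.mem_cons_of_mem hj)).le
    rw [Finset.sum_cons, Finset.sum_cons, Finset.sum_cons]
    calc a i * b i / (a i + k * b i) + ∑ j ∈ s, a j * b j / (a j + k * b j)
        ≤ a i * b i / (a i + k * b i) +
            (∑ j ∈ s, a j) * (∑ j ∈ s, b j) / ((∑ j ∈ s, a j) + k * (∑ j ∈ s, b j)) := by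
          gcongr
          exact ih (fun j hj => ha j (Finset.mem_cons_of_mem hj))
            (fun j hj => hb j (Finset.mem_cons_of_mem hj))
      _ ≤ _ := milne_aux k (a i) (b i) _ _ hk hai hbi hSa hSb

lemma log_sum_ineq (n : ℕ) (hn : 0 < n) (a b : Fin n → ℝ)
    (ha : ∀ i, 0 < a i) (hb : ∀ i, 0 < b i) (k : ℝ) (hk : 0 ≤ k) :
    (∑ i, a i) * log ((∑ i, a i) / (∑ i, b i) + k) ≤ ∑ i, a i * log (a i / b i + k) := by
  have hne : Nonempty (Fin n) := Fin.pos_iff_nonempty.mp hn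
  have hA : 0 < ∑ i, a i := Finset.sum_pos (fun i _ => ha i) Finset.univ_nonempty
  have hB : 0 < ∑ i, b i := Finset.sum_pos (fun i _ => hb i) Finset.univ_nonempty
  set A := ∑ i, a i with hAdef
  set B := ∑ i, b i with hBdef
  have hc : 0 < A / B + k := add_pos_of_pos_of_nonneg (div_pos hA hB) hk
  have key : ∀ i, a i * log (A / B + k) - a i * log (a i / b i + k) ≤
      (A / B + k) * (a i * b i / (a i + k * b i)) - a i := by
    intro i
    have hd : 0 < a i / b i + k := add_pos_of_pos_of_nonneg (div_pos (ha i) (hb i)) hk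
    have hden : 0 < a i + k * b i := add_pos_of_pos_of_nonneg (ha i) (mul_nonneg hk (hb i).le)
    have hlog : log ((A / B + k) / (a i / b i + k)) ≤ (A / B + k) / (a i / b i + k) - 1 :=
      Real.log_le_sub_one_of_pos (by positivity)
    rw [Real.log_div hc.ne' hd.ne'] at hlog
    have h2 : a i * (log (A / B + k) - log (a i / b i + k)) ≤
        a i * ((A / B + k) / (a i / b i + k) - 1) :=
      mul_le_mul_of_nonneg_left hlog (ha i).le
    have h3 : a i * ((A / B + k) / (a i / b i + k)) =
        (A / B + k) * (a i * b i / (a i + k * b i)) := by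
      have hbne := (hb i).ne'
      have hdne := hd.ne'
      have hdenne := hden.ne'
      field_simp
    nlinarith [h2, h3]
  have hsum : ∑ i, (a i * log (A / B + k) - a i * log (a i / b i + k)) ≤
      ∑ i, ((A / B + k) * (a i * b i / (a i + k * b i)) - a i) :=
    Finset.sum_le_sum fun i _ => key i
  have hmilne : ∑ i, a i * b i / (a i + k * b i) ≤ A * B / (A + k * B) :=
    milne Finset.univ k hk a b (fun i _ => ha i) (fun i _ => hb i)
  have heq : (A / B + k) * (A * B / (A + k * B)) = A := by
    have : A + k * B > 0 := add_pos_of_pos_of_nonneg hA (mul_nonneg hk hB.le)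
    have := this.ne'
    field_simp
  have h4 : ∑ i, ((A / B + k) * (a i * b i / (a i + k * b i)) - a i) =
      (A / B + k) * (∑ i, a i * b i / (a i + k * b i)) - A := by
    rw [Finset.sum_sub_distrib, ← Finset.mul_sum]
  have h5 : (A / B + k) * (∑ i, a i * b i / (a i + k * b i)) ≤ A := by
    calc (A / B + k) * (∑ i, a i * b i / (a i + k * b i))
        ≤ (A / B + k) * (A * B / (A + k * B)) := by gcongr
      _ = A := heq
  have h6 : ∑ i, (a i * log (A / B + k) - a i * log (a i / b i + k)) =
      A * log (A / B + k) - ∑ i, a i * log (a i / b i + k) := by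
    rw [Finset.sum_sub_distrib, ← Finset.sum_mul]
  linarith [hsum, h4 ▸ hsum, h6]

theorem generalized_log_sum_inequality (n m : ℕ) (a b : Fin n → ℝ)
    (ha : ∀ i, 0 < a i) (hb : ∀ i, 0 < b i)
    (k : Fin m → ℝ) (hk : ∀ s, 0 ≤ k s) :
    (∑ i, a i) * log (∏ s, ((∑ i, a i) / (∑ i, b i) + k s)) ≤
      ∑ i, a i * log (∏ s, (a i / b i + k s)) := by
  rcases Nat.eq_zero_or_pos n with hn | hn
  · subst hn; simp
  have hne : Nonempty (Fin n) := Fin.pos_iff_nonempty.mp hn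
  have hA : 0 < ∑ i, a i := Finset.sum_pos (fun i _ => ha i) Finset.univ_nonempty
  have hB : 0 < ∑ i, b i := Finset.sum_pos (fun i _ => hb i) Finset.univ_nonempty
  have h1 : ∀ i : Fin n, log (∏ s, (a i / b i + k s)) = ∑ s, log (a i / b i + k s) := by
    intro i
    exact Real.log_prod fun s _ => (add_pos_of_pos_of_nonneg (div_pos (ha i) (hb i)) (hk s)).ne'
  have h2 : log (∏ s, ((∑ i, a i) / (∑ i, b i) + k s)) =
      ∑ s, log ((∑ i, a i) / (∑ i, b i) + k s) :=
    Real.log_prod fun s _ => (add_pos_of_pos_of_nonneg (div_pos hA hB) (hk s)).ne'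
  rw [h2, Finset.mul_sum]
  calc ∑ s, (∑ i, a i) * log ((∑ i, a i) / (∑ i, b i) + k s)
      ≤ ∑ s, ∑ i, a i * log (a i / b i + k s) :=
        Finset.sum_le_sum fun s _ => log_sum_ineq n hn a b ha hb (k s) (hk s)
    _ = ∑ i, ∑ s, a i * log (a i / b i + k s) := Finset.sum_comm
    _ = ∑ i, a i * log (∏ s, (a i / b i + k s)) := by
        refine Finset.sum_congr rfl fun i _ => ?_
        rw [h1, Finset.mul_sum]
end

section
/- Let a, b be probability vectors in ℝ₊ⁿ (all entries positive, Σᵢ aᵢ = Σᵢ bᵢ = 1) and let k₁,…,k_m ∈ [0,∞). Then Σᵢ aᵢ·log(∏_{s=1}^m (aᵢ/bᵢ + k_s)) ≥ log(∏_{s=1}^m (1 + k_s)). -/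
open Real

lemma convexOn_mul_log_shift (k : ℝ) (hk : 0 ≤ k) :
    ConvexOn ℝ (Set.Ioi (0 : ℝ)) (fun x => x * log (x + k)) := by
  have h1 : ConvexOn ℝ (Set.Ioi (0 : ℝ)) (fun x => (x + k) * log (x + k)) := by
    have := (Real.convexOn_mul_log.translate_right k).subset
      (s := Set.Ioi (0 : ℝ)) ?_ (convex_Ioi 0)
    · simpa [add_comm, Function.comp_def] using this
    · intro x hx
      simp only [Set.mem_preimage, Set.mem_Ici]
      have : (0:ℝ) < x := hx
      linarith
  have h2 : ConvexOn ℝ (Set.Ioi (0 : ℝ)) (fun x => -(k * log (x + k))) := by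
    have hlog : ConcaveOn ℝ (Set.Ioi (0 : ℝ)) (fun x : ℝ => log (x + k)) := by
      have := (strictConcaveOn_log_Ioi.concaveOn.translate_right k).subset
        (s := Set.Ioi (0 : ℝ)) ?_ (convex_Ioi 0)
      · simpa [add_comm, Function.comp_def] using this
      · intro x hx
        simp only [Set.mem_preimage, Set.mem_Ioi]
        have : (0:ℝ) < x := hx
        linarith
    have h := (hlog.smul hk).neg
    convert h using 2 with x
    rotate_left 3
    try simp [smul_eq_mul]
    all_goals rfl
  have := h1.add h2
  convert this using 2 with x
  rotate_left 3
  simp only [Pi.add_apply]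
  ring
  all_goals rfl

theorem generalized_information_inequality (n m : ℕ) (a b : Fin n → ℝ)
    (ha : ∀ i, 0 < a i) (hb : ∀ i, 0 < b i)
    (hsa : ∑ i, a i = 1) (hsb : ∑ i, b i = 1)
    (k : Fin m → ℝ) (hk : ∀ s, 0 ≤ k s) :
    log (∏ s, (1 + k s)) ≤ ∑ i, a i * log (∏ s, (a i / b i + k s)) := by
  have hpos : ∀ i s, (0:ℝ) < a i / b i + k s := fun i s =>
    add_pos_of_pos_of_nonneg (div_pos (ha i) (hb i)) (hk s)
  have hrhs : ∑ i, a i * log (∏ s, (a i / b i + k s))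
      = ∑ s, ∑ i, a i * log (a i / b i + k s) := by
    rw [Finset.sum_comm]
    refine Finset.sum_congr rfl fun i _ => ?_
    rw [Real.log_prod (fun s _ => (hpos i s).ne'), Finset.mul_sum]
  rw [hrhs, Real.log_prod (fun s _ => by have := hk s; intro h; linarith)]
  refine Finset.sum_le_sum fun s _ => ?_
  -- Jensen for g(x) = x * log (x + k s) with weights b
  have hg := (convexOn_mul_log_shift (k s) (hk s)).map_sum_le
    (t := Finset.univ) (w := b) (p := fun i => a i / b i)
    (fun i _ => (hb i).le) hsb
    (fun i _ => Set.mem_Ioi.2 (div_pos (ha i) (hb i)))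
  have hsum : ∑ i, b i • (a i / b i) = 1 := by
    rw [← hsa]
    exact Finset.sum_congr rfl fun i _ => by
      rw [smul_eq_mul, mul_comm, div_mul_cancel₀ _ (hb i).ne']
  rw [hsum] at hg
  simp only [smul_eq_mul, one_mul] at hg
  calc log (1 + k s) ≤ ∑ i, b i * (a i / b i * log (a i / b i + k s)) := hg
    _ = ∑ i, a i * log (a i / b i + k s) := by
        refine Finset.sum_congr rfl fun i _ => ?_
        rw [← mul_assoc, mul_comm (b i) (a i / b i), div_mul_cancel₀ _ (hb i).ne']
end
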